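/- arXiv:1305.6061 — 13 statements merged into one kernel-verified Lean document; each statement's English description precedes it below -/
import Mathlib

section
/- Let w : ℝ → ℝ² be a normalized-curvature trajectory (i.e., twice continuously differentiable with w''(s) = β² w(s) for all s). Then at every s ∈ ℝ with w(s) ≠ 0, the function σ ↦ ‖w(σ)‖ is twice differentiable at s and its second derivative there equals ( ‖w'(s)‖² ‖w(s)‖² − (w(s)·w'(s))² + β² ‖w(s)‖⁴ ) / ‖w(s)‖³, which is ≥ β² ‖w(s)‖ > 0. In particular, ‖w‖ is strictly convex on any interval where w does not vanish. -/
open Real Filter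

/-- Along a normalized-curvature trajectory `w` (a C² curve in ℝ² with
`w'' = β² w`), at every point where `w(s) ≠ 0` the function `σ ↦ ‖w(σ)‖` is twice
differentiable with second derivative
`(‖w'‖²‖w‖² − (w·w')² + β²‖w‖⁴)/‖w‖³ ≥ β²‖w‖ > 0`; in particular `‖w‖` is strictly
convex on any interval where `w` does not vanish. -/
theorem stmt_6 (β : ℝ) (hβ : 0 < β)
    (w : ℝ → EuclideanSpace ℝ (Fin 2)) (hw : ContDiff ℝ 2 w)
    (hODE : ∀ s : ℝ, deriv (deriv w) s = β ^ 2 • w s) :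
    (∀ s : ℝ, w s ≠ 0 →
      DifferentiableAt ℝ (fun σ => ‖w σ‖) s ∧
      HasDerivAt (deriv fun σ => ‖w σ‖)
        ((‖deriv w s‖ ^ 2 * ‖w s‖ ^ 2 - (inner ℝ (w s) (deriv w s) : ℝ) ^ 2
            + β ^ 2 * ‖w s‖ ^ 4) / ‖w s‖ ^ 3) s ∧
      β ^ 2 * ‖w s‖ ≤ (‖deriv w s‖ ^ 2 * ‖w s‖ ^ 2 - (inner ℝ (w s) (deriv w s) : ℝ) ^ 2
            + β ^ 2 * ‖w s‖ ^ 4) / ‖w s‖ ^ 3 ∧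
      0 < β ^ 2 * ‖w s‖) ∧
    ∀ a b : ℝ, a < b → (∀ σ ∈ Set.Icc a b, w σ ≠ 0) →
      StrictConvexOn ℝ (Set.Icc a b) (fun σ => ‖w σ‖) := by
  have hwd : Differentiable ℝ w := hw.differentiable (by norm_num)
  have hwd' : Differentiable ℝ (deriv w) := by
    have h2 : ContDiff ℝ (1 + 1) w := by
      rw [(by norm_num : (1 + 1 : WithTop ℕ∞) = 2)]; exact hw
    exact ((contDiff_succ_iff_deriv.mp h2).2.2).differentiable one_ne_zero
  -- first derivative of the norm at points where w ≠ 0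
  have key : ∀ s : ℝ, w s ≠ 0 →
      HasDerivAt (fun σ => ‖w σ‖) ((inner ℝ (w s) (deriv w s) : ℝ) / ‖w s‖) s := by
    intro s hs
    have hq : HasDerivAt (fun σ => (inner ℝ (w σ) (w σ) : ℝ))
        (2 * (inner ℝ (w s) (deriv w s) : ℝ)) s := by
      have := HasDerivAt.inner ℝ (hwd s).hasDerivAt (hwd s).hasDerivAt
      refine this.congr_deriv ?_
      rw [real_inner_comm (deriv w s) (w s)]; ring
    have hne : (inner ℝ (w s) (w s) : ℝ) ≠ 0 := by
      rw [real_inner_self_eq_norm_sq]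
      exact pow_ne_zero 2 (norm_ne_zero_iff.mpr hs)
    have := hq.sqrt hne
    have heq : (fun σ => Real.sqrt (inner ℝ (w σ) (w σ) : ℝ)) = fun σ => ‖w σ‖ := by
      funext σ
      rw [real_inner_self_eq_norm_sq, Real.sqrt_sq (norm_nonneg _)]
    rw [heq] at this
    have hval : 2 * (inner ℝ (w s) (deriv w s) : ℝ) / (2 * Real.sqrt (inner ℝ (w s) (w s) : ℝ))
        = (inner ℝ (w s) (deriv w s) : ℝ) / ‖w s‖ := by
      rw [real_inner_self_eq_norm_sq, Real.sqrt_sq (norm_nonneg _)]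
      ring
    rwa [hval] at this
  have main : ∀ s : ℝ, w s ≠ 0 →
      DifferentiableAt ℝ (fun σ => ‖w σ‖) s ∧
      HasDerivAt (deriv fun σ => ‖w σ‖)
        ((‖deriv w s‖ ^ 2 * ‖w s‖ ^ 2 - (inner ℝ (w s) (deriv w s) : ℝ) ^ 2
            + β ^ 2 * ‖w s‖ ^ 4) / ‖w s‖ ^ 3) s ∧
      β ^ 2 * ‖w s‖ ≤ (‖deriv w s‖ ^ 2 * ‖w s‖ ^ 2 - (inner ℝ (w s) (deriv w s) : ℝ) ^ 2
            + β ^ 2 * ‖w s‖ ^ 4) / ‖w s‖ ^ 3 ∧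
      0 < β ^ 2 * ‖w s‖ := by
    intro s hs
    have hns : (0:ℝ) < ‖w s‖ := norm_pos_iff.mpr hs
    refine ⟨(key s hs).differentiableAt, ?_, ?_, by positivity⟩
    · -- second derivative
      -- g is the first-derivative function
      set g : ℝ → ℝ := fun σ => (inner ℝ (w σ) (deriv w σ) : ℝ) / ‖w σ‖ with hg
      have hopen : IsOpen {σ : ℝ | w σ ≠ 0} :=
        isOpen_compl_iff.mpr (isClosed_singleton.preimage hw.continuous) |>.mono le_rfl
      have hmem : {σ : ℝ | w σ ≠ 0} ∈ nhds s := hopen.mem_nhds hs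
      have hEq : (deriv fun σ => ‖w σ‖) =ᶠ[nhds s] g := by
        filter_upwards [hmem] with σ hσ
        exact (key σ hσ).deriv
      -- compute derivative of g at s
      have hu : HasDerivAt (fun σ => (inner ℝ (w σ) (deriv w σ) : ℝ))
          (‖deriv w s‖ ^ 2 + β ^ 2 * ‖w s‖ ^ 2) s := by
        have h2 : HasDerivAt (deriv w) (β ^ 2 • w s) s := by
          rw [← hODE s]; exact (hwd' s).hasDerivAt
        have := HasDerivAt.inner ℝ (hwd s).hasDerivAt h2
        have e1 : (inner ℝ (w s) (β ^ 2 • w s) : ℝ) = β ^ 2 * ‖w s‖ ^ 2 := by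
          rw [real_inner_smul_right, real_inner_self_eq_norm_sq]
        have e2 : (inner ℝ (deriv w s) (deriv w s) : ℝ) = ‖deriv w s‖ ^ 2 :=
          real_inner_self_eq_norm_sq _
        rw [e1, e2] at this
        refine this.congr_deriv ?_
        ring
      have hn : HasDerivAt (fun σ => ‖w σ‖) ((inner ℝ (w s) (deriv w s) : ℝ) / ‖w s‖) s :=
        key s hs
      have hgd : HasDerivAt g
          (((‖deriv w s‖ ^ 2 + β ^ 2 * ‖w s‖ ^ 2) * ‖w s‖ -
            (inner ℝ (w s) (deriv w s) : ℝ) * ((inner ℝ (w s) (deriv w s) : ℝ) / ‖w s‖)) / ‖w s‖ ^ 2)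
          s := hu.div hn (ne_of_gt hns)
      have hval : ((‖deriv w s‖ ^ 2 + β ^ 2 * ‖w s‖ ^ 2) * ‖w s‖ -
            (inner ℝ (w s) (deriv w s) : ℝ) * ((inner ℝ (w s) (deriv w s) : ℝ) / ‖w s‖)) / ‖w s‖ ^ 2
          = (‖deriv w s‖ ^ 2 * ‖w s‖ ^ 2 - (inner ℝ (w s) (deriv w s) : ℝ) ^ 2
            + β ^ 2 * ‖w s‖ ^ 4) / ‖w s‖ ^ 3 := by
        field_simp
        ring
      rw [hval] at hgd
      exact hgd.congr_of_eventuallyEq hEq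
    · -- inequality
      have hCS : (inner ℝ (w s) (deriv w s) : ℝ) ^ 2 ≤ ‖w s‖ ^ 2 * ‖deriv w s‖ ^ 2 := by
        have := abs_real_inner_le_norm (w s) (deriv w s)
        nlinarith [abs_nonneg (inner ℝ (w s) (deriv w s) : ℝ),
          sq_abs (inner ℝ (w s) (deriv w s) : ℝ)]
      rw [le_div_iff₀ (by positivity)]
      nlinarith [pow_pos hns 3, pow_pos hns 4]
  refine ⟨main, ?_⟩
  intro a b hab hnz
  apply strictConvexOn_of_deriv2_pos (convex_Icc a b)
    (hw.continuous.norm.continuousOn)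
  intro x hx
  rw [interior_Icc] at hx
  have hx' : w x ≠ 0 := hnz x ⟨le_of_lt hx.1, le_of_lt hx.2⟩
  obtain ⟨_, h2, h3, h4⟩ := main x hx'
  have : deriv (deriv fun σ => ‖w σ‖) x
      = (‖deriv w x‖ ^ 2 * ‖w x‖ ^ 2 - (inner ℝ (w x) (deriv w x) : ℝ) ^ 2
            + β ^ 2 * ‖w x‖ ^ 4) / ‖w x‖ ^ 3 := h2.deriv
  have : (0:ℝ) < deriv (deriv fun σ => ‖w σ‖) x := by
    rw [this]; linarith
  simpa [Function.iterate_succ, Function.comp] using this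
end

section
/- Let w : ℝ → ℝ² be a normalized-curvature trajectory (i.e., twice continuously differentiable with w''(s) = β² w(s) for all s). Assume w(0)·w'(0) ≤ 0, β w(0) + w'(0) ≠ 0, and (w(0), w'(0)) ≠ (0,0). Set s_min := (1/(2β)) ln( ‖β w(0) − w'(0)‖ / ‖β w(0) + w'(0)‖ ). Then s_min ≥ 0, ‖w(s_min)‖² = (1/2)( √((1−𝔠²)² + 4β⁻²W²) + 1 − 𝔠² ), ‖w'(s_min)‖² = (β²/2)( √((1−𝔠²)² + 4β⁻²W²) − (1 − 𝔠²) ), and ‖w(s)‖ ≥ ‖w(s_min)‖ and ‖w'(s)‖ ≥ ‖w'(s_min)‖ for all s ∈ ℝ. -/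
set_option maxHeartbeats 1000000

lemma euc_norm_sq (x : EuclideanSpace ℝ (Fin 2)) : ‖x‖^2 = x 0^2 + x 1^2 := by
  rw [EuclideanSpace.norm_eq, Real.sq_sqrt (by positivity), Fin.sum_univ_two]
  simp [sq_abs]

lemma euc_inner (x y : EuclideanSpace ℝ (Fin 2)) :
    (inner ℝ x y : ℝ) = x 0 * y 0 + x 1 * y 1 := by
  simp [PiLp.inner_apply, Fin.sum_univ_two, RCLike.inner_apply]
  ring

lemma norm_comb {E : Type*} [NormedAddCommGroup E] [InnerProductSpace ℝ E] (p q : ℝ) (x y : E) :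
    ‖p • x + q • y‖^2 = p^2 * ‖x‖^2 + 2*(p*q)*(inner ℝ x y : ℝ) + q^2 * ‖y‖^2 := by
  rw [norm_add_sq_real, norm_smul, norm_smul, real_inner_smul_left, real_inner_smul_right,
    mul_pow, mul_pow, Real.norm_eq_abs, Real.norm_eq_abs, sq_abs, sq_abs]
  ring

lemma sol_formula {E : Type*} [NormedAddCommGroup E] [NormedSpace ℝ E]
    (β ε : ℝ) (hε : ε = 1 ∨ ε = -1)
    (w : ℝ → E) (hw1 : Differentiable ℝ w) (hw2 : Differentiable ℝ (deriv w))
    (hODE : ∀ s : ℝ, deriv (deriv w) s = β^2 • w s) :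
    ∀ s : ℝ, β • w s + ε • deriv w s = Real.exp (ε * β * s) • (β • w 0 + ε • deriv w 0) := by
  set g : ℝ → E := fun s => Real.exp (-(ε * β) * s) • (β • w s + ε • deriv w s) with hg
  have hgd : ∀ s : ℝ, HasDerivAt g 0 s := by
    intro s
    have h1 : HasDerivAt (fun s : ℝ => Real.exp (-(ε * β) * s))
        (-(ε * β) * Real.exp (-(ε * β) * s)) s := by
      have := ((hasDerivAt_id s).const_mul (-(ε * β))).exp
      simpa [mul_comm] using this
    have h2 : HasDerivAt (fun s : ℝ => β • w s + ε • deriv w s)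
        (β • deriv w s + ε • (β^2 • w s)) s := by
      have hw' : HasDerivAt w (deriv w s) s := (hw1 s).hasDerivAt
      have hv' : HasDerivAt (deriv w) (β^2 • w s) s := by
        have := (hw2 s).hasDerivAt
        rwa [hODE s] at this
      exact (hw'.const_smul β).add (hv'.const_smul ε)
    have := h1.smul h2
    convert this using 1
    · rfl
    rcases hε with h | h <;> subst h <;> match_scalars <;> ring
  have hconst : ∀ s : ℝ, g s = g 0 :=
    fun s => is_const_of_deriv_eq_zero (fun x => (hgd x).differentiableAt)
      (fun x => (hgd x).deriv) s 0
  intro s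
  have := hconst s
  simp only [hg, mul_zero, Real.exp_zero, one_smul, neg_mul, neg_zero] at this
  have h2 : Real.exp (ε * β * s) • Real.exp (-(ε * β * s)) • (β • w s + ε • deriv w s)
      = Real.exp (ε * β * s) • (β • w 0 + ε • deriv w 0) := by rw [this]
  rwa [smul_smul, ← Real.exp_add, add_neg_cancel, Real.exp_zero, one_smul] at h2

/-- Along a normalized-curvature trajectory `w` (a C² curve in ℝ² with
`w'' = β² w`) with `w(0)·w'(0) ≤ 0`, `βw(0) + w'(0) ≠ 0` and `(w(0),w'(0)) ≠ (0,0)`,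
the point `s_min = (1/(2β)) ln(‖βw(0) − w'(0)‖/‖βw(0) + w'(0)‖)` is nonnegative,
the values of `‖w‖²` and `‖w'‖²` there are given by explicit formulas in `𝔠` and the
Wronskian `W`, and `‖w‖`, `‖w'‖` attain their global minima at `s_min`. -/
theorem stmt_7 (β : ℝ) (hβ : 0 < β)
    (w : ℝ → EuclideanSpace ℝ (Fin 2)) (hw : ContDiff ℝ 2 w)
    (hODE : ∀ s : ℝ, deriv (deriv w) s = β ^ 2 • w s)
    (W : ℝ) (hW : W = (w 0) 0 * (deriv w 0) 1 - (w 0) 1 * (deriv w 0) 0)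
    (c : ℝ) (hc0 : 0 ≤ c)
    (hc : c ^ 2 = 1 - ‖w 0‖ ^ 2 + β⁻¹ ^ 2 * ‖deriv w 0‖ ^ 2)
    (hperp : (inner ℝ (w 0) (deriv w 0) : ℝ) ≤ 0)
    (hne : β • w 0 + deriv w 0 ≠ 0)
    (hne0 : ¬(w 0 = 0 ∧ deriv w 0 = 0))
    (smin : ℝ)
    (hsmin : smin = (1 / (2 * β)) * Real.log (‖β • w 0 - deriv w 0‖ / ‖β • w 0 + deriv w 0‖)) :
    0 ≤ smin ∧
    ‖w smin‖ ^ 2 = (1 / 2) * (Real.sqrt ((1 - c ^ 2) ^ 2 + 4 * β⁻¹ ^ 2 * W ^ 2) + 1 - c ^ 2) ∧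
    ‖deriv w smin‖ ^ 2 =
      (β ^ 2 / 2) * (Real.sqrt ((1 - c ^ 2) ^ 2 + 4 * β⁻¹ ^ 2 * W ^ 2) - (1 - c ^ 2)) ∧
    ∀ s : ℝ, ‖w smin‖ ≤ ‖w s‖ ∧ ‖deriv w smin‖ ≤ ‖deriv w s‖ := by
  have hβne : β ≠ 0 := ne_of_gt hβ
  have hw1 : Differentiable ℝ w := hw.differentiable (by norm_num)
  have hw2 : Differentiable ℝ (deriv w) := by
    have hw' : ContDiff ℝ ((1 : WithTop ℕ∞) + 1) w := by norm_num; exact hw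
    exact ((contDiff_succ_iff_deriv.mp hw').2.2).differentiable (by norm_num)
  set a : EuclideanSpace ℝ (Fin 2) := β • w 0 + deriv w 0 with ha
  set b : EuclideanSpace ℝ (Fin 2) := β • w 0 - deriv w 0 with hb
  set A := ‖a‖ with hAdef
  set B := ‖b‖ with hBdef
  set D : ℝ := inner ℝ a b with hDdef
  have hprod : ∀ s : ℝ, Real.exp (β*s) * Real.exp (-(β*s)) = 1 := by
    intro s; rw [← Real.exp_add]; simp
  have hplus : ∀ s : ℝ, β • w s + deriv w s = Real.exp (β * s) • a := by
    intro s
    have := sol_formula β 1 (Or.inl rfl) w hw1 hw2 hODE s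
    simp only [one_smul, one_mul] at this
    rw [ha]; exact this
  have hminus : ∀ s : ℝ, β • w s - deriv w s = Real.exp (-(β * s)) • b := by
    intro s
    have := sol_formula β (-1) (Or.inr rfl) w hw1 hw2 hODE s
    simp only [neg_smul, one_smul, neg_one_mul, one_mul, neg_mul] at this
    rw [hb, sub_eq_add_neg, sub_eq_add_neg]
    exact this
  have hβ2 : (2 * β) ≠ 0 := mul_ne_zero two_ne_zero hβne
  have hws : ∀ s : ℝ, w s = (2*β)⁻¹ • (Real.exp (β*s) • a + Real.exp (-(β*s)) • b) := by
    intro s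
    have h : (2*β) • w s = Real.exp (β*s) • a + Real.exp (-(β*s)) • b := by
      rw [← hplus s, ← hminus s]; module
    rw [← h, smul_smul, inv_mul_cancel₀ hβ2, one_smul]
  have hvs : ∀ s : ℝ, deriv w s
      = (2:ℝ)⁻¹ • (Real.exp (β*s) • a + (-Real.exp (-(β*s))) • b) := by
    intro s
    have h : (2:ℝ) • deriv w s = Real.exp (β*s) • a + (-Real.exp (-(β*s))) • b := by
      rw [neg_smul, ← sub_eq_add_neg, ← hplus s, ← hminus s]; module
    rw [← h, smul_smul]; norm_num
  -- norms squared as functions of t = exp(β s)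
  have hnw : ∀ s : ℝ, ‖w s‖^2 = (2*β)⁻¹^2 *
      (Real.exp (β*s)^2 * A^2 + 2 * D + Real.exp (-(β*s))^2 * B^2) := by
    intro s
    rw [hws s, norm_smul, mul_pow, Real.norm_eq_abs, sq_abs, norm_comb, hAdef, hBdef, hDdef]
    linear_combination ((2*β)⁻¹^2 * 2 * (inner ℝ a b : ℝ)) * hprod s
  have hnv : ∀ s : ℝ, ‖deriv w s‖^2 = (2:ℝ)⁻¹^2 *
      (Real.exp (β*s)^2 * A^2 - 2 * D + Real.exp (-(β*s))^2 * B^2) := by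
    intro s
    rw [hvs s, norm_smul, mul_pow, Real.norm_eq_abs, sq_abs, norm_comb, hAdef, hBdef, hDdef]
    linear_combination (-((2:ℝ)⁻¹^2 * 2 * (inner ℝ a b : ℝ))) * hprod s
  -- positivity of A and B
  have hA : 0 < A := norm_pos_iff.mpr hne
  have hBne : b ≠ 0 := by
    intro h0
    have hv : deriv w 0 = β • w 0 := by
      have := sub_eq_zero.mp (hb ▸ h0 : β • w 0 - deriv w 0 = 0)
      exact this.symm
    have hip : (inner ℝ (w 0) (deriv w 0) : ℝ) = β * ‖w 0‖^2 := by
      rw [hv, real_inner_smul_right, real_inner_self_eq_norm_sq]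
    have hw00 : ‖w 0‖^2 ≤ 0 := by
      rw [hip] at hperp
      have h2 : ‖w 0‖^2 = β⁻¹ * (β * ‖w 0‖^2) := by field_simp
      rw [h2]
      exact mul_nonpos_iff.mpr (Or.inl ⟨inv_nonneg.mpr hβ.le, hperp⟩)
    have hw0zero : w 0 = 0 := by
      have h3 : ‖w 0‖^2 = 0 := le_antisymm hw00 (sq_nonneg _)
      exact norm_eq_zero.mp (pow_eq_zero_iff two_ne_zero |>.mp h3)
    apply hne
    rw [ha, hv, hw0zero]; simp
  have hB : 0 < B := norm_pos_iff.mpr hBne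
  have hinv2 : β^2 * β⁻¹^2 = 1 := by field_simp
  -- key algebraic identities
  have hD2 : D = β^2 * ‖w 0‖^2 - ‖deriv w 0‖^2 := by
    rw [hDdef, ha, hb]
    simp only [inner_sub_right, inner_add_left, real_inner_smul_left, real_inner_smul_right,
      real_inner_self_eq_norm_sq]
    rw [real_inner_comm (deriv w 0) (w 0), norm_smul, Real.norm_eq_abs, mul_pow, sq_abs]
    ring
  have hDval : D = β^2 * (1 - c^2) := by
    rw [hD2]
    linear_combination β^2 * hc + ‖deriv w 0‖^2 * hinv2
  have hABsq : (A*B)^2 = (β^2)^2 * ((1 - c^2)^2 + 4 * β⁻¹^2 * W^2) := by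
    have h1 : A^2 = a 0^2 + a 1^2 := euc_norm_sq a
    have h2 : B^2 = b 0^2 + b 1^2 := euc_norm_sq b
    have h3 : D = a 0 * b 0 + a 1 * b 1 := euc_inner a b
    have hcross : a 0 * b 1 - a 1 * b 0 = -(2*β) * W := by
      rw [ha, hb, hW]
      simp only [PiLp.add_apply, PiLp.sub_apply, PiLp.smul_apply, smul_eq_mul]
      ring
    have key : (A*B)^2 = D^2 + (a 0 * b 1 - a 1 * b 0)^2 := by
      rw [h3, mul_pow, h1, h2]; ring
    rw [key, hcross, hDval]
    have expand : (-(2*β)*W)^2 = (β^2)^2 * (4 * β⁻¹^2 * W^2) := by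
      have : (β^2)^2 * (4 * β⁻¹^2 * W^2) = (β^2*β⁻¹^2) * (β^2 * 4 * W^2) := by ring
      rw [this, hinv2]; ring
    rw [expand]; ring
  have hsqrt : Real.sqrt ((1 - c^2)^2 + 4 * β⁻¹^2 * W^2) = A*B/β^2 := by
    have h : (A*B/β^2)^2 = (1 - c^2)^2 + 4 * β⁻¹^2 * W^2 := by
      rw [div_pow, hABsq]
      field_simp
    rw [← h, Real.sqrt_sq (div_nonneg (mul_nonneg hA.le hB.le) (sq_nonneg β))]
  -- value of t at smin
  set t := Real.exp (β * smin) with htdef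
  have ht : 0 < t := Real.exp_pos _
  have hlog : β * smin = Real.log (B/A) / 2 := by
    rw [hsmin]; field_simp
  have ht2 : t^2 = B/A := by
    rw [htdef, sq, ← Real.exp_add, hlog, add_halves]
    exact Real.exp_log (div_pos hB hA)
  have htinv2 : Real.exp (-(β*smin))^2 = A/B := by
    rw [Real.exp_neg, ← htdef, inv_pow, ht2, inv_div]
  -- smin ≥ 0
  have hsmin0 : 0 ≤ smin := by
    have hBA : A ≤ B := by
      have h1 : B^2 - A^2 = -(4*β) * (inner ℝ (w 0) (deriv w 0) : ℝ) := by
        rw [hAdef, hBdef, ha, hb, norm_add_sq_real, norm_sub_sq_real, real_inner_smul_left]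
        ring
      have hnn : 0 ≤ (4*β) * (-(inner ℝ (w 0) (deriv w 0) : ℝ)) :=
        mul_nonneg (by linarith) (by linarith)
      have h2 : A^2 ≤ B^2 := by linarith [h1, hnn]
      calc A = Real.sqrt (A^2) := (Real.sqrt_sq hA.le).symm
        _ ≤ Real.sqrt (B^2) := Real.sqrt_le_sqrt h2
        _ = B := Real.sqrt_sq hB.le
    rw [hsmin]
    apply mul_nonneg (by rw [one_div]; exact inv_nonneg.mpr (by linarith))
    apply Real.log_nonneg
    rw [le_div_iff₀ hA]
    simpa using hBA
  -- norms at smin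
  have hwsmin : ‖w smin‖^2 = (1/2) * (Real.sqrt ((1 - c^2)^2 + 4 * β⁻¹^2 * W^2) + 1 - c^2) := by
    rw [hnw smin, ← htdef, ht2, htinv2, hsqrt, hDval]
    field_simp
    ring
  have hvsmin : ‖deriv w smin‖^2
      = (β^2/2) * (Real.sqrt ((1 - c^2)^2 + 4 * β⁻¹^2 * W^2) - (1 - c^2)) := by
    rw [hnv smin, ← htdef, ht2, htinv2, hsqrt, hDval]
    field_simp
    ring
  refine ⟨hsmin0, hwsmin, hvsmin, ?_⟩
  intro s
  set u := Real.exp (β * s) with hudef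
  have hu : 0 < u := Real.exp_pos _
  have huinv : Real.exp (-(β*s)) = u⁻¹ := by rw [Real.exp_neg, ← hudef]
  have hu1 : u * u⁻¹ = 1 := mul_inv_cancel₀ (ne_of_gt hu)
  have hmain : 2*(A*B) ≤ u^2*A^2 + u⁻¹^2*B^2 := by
    have hkey : u^2*A^2 + u⁻¹^2*B^2 - 2*(A*B)
        = (u*A - u⁻¹*B)^2 + 2*A*B*(u*u⁻¹ - 1) := by ring
    rw [hu1] at hkey
    linarith [sq_nonneg (u*A - u⁻¹*B), hkey]

  have e1 : B/A*A^2 = A*B := by field_simp [hA.ne']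
  have e2 : A/B*B^2 = A*B := by field_simp [hB.ne']
  constructor
  · have goal2 : B/A*A^2 + 2*D + A/B*B^2 ≤ u^2*A^2 + 2*D + u⁻¹^2*B^2 := by
      rw [e1, e2]; linarith [hmain]
    have hsq : ‖w smin‖^2 ≤ ‖w s‖^2 := by
      rw [hnw s, hnw smin, ← htdef, ht2, htinv2, ← hudef, huinv]
      exact mul_le_mul_of_nonneg_left goal2 (by positivity)
    calc ‖w smin‖ = Real.sqrt (‖w smin‖^2) := by rw [Real.sqrt_sq (norm_nonneg _)]
      _ ≤ Real.sqrt (‖w s‖^2) := Real.sqrt_le_sqrt hsq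
      _ = ‖w s‖ := Real.sqrt_sq (norm_nonneg _)
  · have goal2 : B/A*A^2 - 2*D + A/B*B^2 ≤ u^2*A^2 - 2*D + u⁻¹^2*B^2 := by
      rw [e1, e2]; linarith [hmain]
    have hsq : ‖deriv w smin‖^2 ≤ ‖deriv w s‖^2 := by
      rw [hnv s, hnv smin, ← htdef, ht2, htinv2, ← hudef, huinv]
      exact mul_le_mul_of_nonneg_left goal2 (by positivity)
    calc ‖deriv w smin‖ = Real.sqrt (‖deriv w smin‖^2) := by rw [Real.sqrt_sq (norm_nonneg _)]
      _ ≤ Real.sqrt (‖deriv w s‖^2) := Real.sqrt_le_sqrt hsq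
      _ = ‖deriv w s‖ := Real.sqrt_sq (norm_nonneg _)
end

section
/- Let w : ℝ → ℝ² be a normalized-curvature trajectory (i.e., twice continuously differentiable with w''(s) = β² w(s) for all s) with Wronskian W ≠ 0, and let L > 0 be such that ‖w(s)‖ ≤ 1 for all s ∈ [0,L]. Then w(s) ≠ 0 on [0,L], and the torsion τ(s) := W / ‖w(s)‖² satisfies, for all s ∈ [0,L]: |W| ≤ |τ(s)| ≤ 2|W| / ( √((1−𝔠²)² + 4β⁻²W²) + 1 − 𝔠² ). -/
set_option maxHeartbeats 1000000


/-- Along a normalized-curvature trajectory `w` (a C² curve in ℝ² with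
`w'' = β² w`) with nonzero Wronskian `W` and with `‖w(s)‖ ≤ 1` on `[0,L]`, one has
`w(s) ≠ 0` on `[0,L]` and the torsion `τ(s) = W/‖w(s)‖²` satisfies
`|W| ≤ |τ(s)| ≤ 2|W|/(√((1−𝔠²)² + 4β⁻²W²) + 1 − 𝔠²)`. -/
theorem stmt_8 (β : ℝ) (hβ : 0 < β)
    (w : ℝ → EuclideanSpace ℝ (Fin 2)) (hw : ContDiff ℝ 2 w)
    (hODE : ∀ s : ℝ, deriv (deriv w) s = β ^ 2 • w s)
    (W : ℝ) (hWdef : W = (w 0) 0 * (deriv w 0) 1 - (w 0) 1 * (deriv w 0) 0)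
    (hW : W ≠ 0)
    (c : ℝ) (hc0 : 0 ≤ c)
    (hc : c ^ 2 = 1 - ‖w 0‖ ^ 2 + β⁻¹ ^ 2 * ‖deriv w 0‖ ^ 2)
    (L : ℝ) (hL : 0 < L)
    (hw1 : ∀ s ∈ Set.Icc (0 : ℝ) L, ‖w s‖ ≤ 1)
    (τ : ℝ → ℝ) (hτ : ∀ s, τ s = W / ‖w s‖ ^ 2) :
    ∀ s ∈ Set.Icc (0 : ℝ) L,
      w s ≠ 0 ∧
      |W| ≤ |τ s| ∧
      |τ s| ≤ 2 * |W| / (Real.sqrt ((1 - c ^ 2) ^ 2 + 4 * β⁻¹ ^ 2 * W ^ 2) + 1 - c ^ 2) := by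
  have hβ' : β ≠ 0 := ne_of_gt hβ
  have hβ2 : β⁻¹ ^ 2 * β ^ 2 = 1 := by field_simp
  -- norm squared componentwise
  have hnsq : ∀ x : EuclideanSpace ℝ (Fin 2), ‖x‖ ^ 2 = x 0 ^ 2 + x 1 ^ 2 := by
    intro x
    rw [EuclideanSpace.norm_eq, Real.sq_sqrt (by positivity)]
    simp [Fin.sum_univ_two, sq_abs]
  -- differentiability
  have hwd : Differentiable ℝ w := hw.differentiable two_ne_zero
  have hdwC : ContDiff ℝ 1 (deriv w) :=
    (contDiff_succ_iff_deriv.mp (show ContDiff ℝ ((1:ℕ)+1) w by exact_mod_cast hw)).2.2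
  have hdwd : Differentiable ℝ (deriv w) := hdwC.differentiable one_ne_zero
  -- componentwise derivatives
  have hD1 : ∀ (s : ℝ) (i : Fin 2), HasDerivAt (fun t => w t i) (deriv w s i) s := by
    intro s i
    exact (EuclideanSpace.proj i).hasFDerivAt.comp_hasDerivAt s (hwd s).hasDerivAt
  have hD2 : ∀ (s : ℝ) (i : Fin 2),
      HasDerivAt (fun t => deriv w t i) (β ^ 2 * w s i) s := by
    intro s i
    have h := (EuclideanSpace.proj i).hasFDerivAt.comp_hasDerivAt s (hdwd s).hasDerivAt
    have : (EuclideanSpace.proj i) (deriv (deriv w) s) = β ^ 2 * w s i := by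
      rw [hODE s]; simp
    rwa [this] at h
  -- the Wronskian is constant
  have hWr : ∀ s : ℝ, w s 0 * deriv w s 1 - w s 1 * deriv w s 0 = W := by
    have hder : ∀ s : ℝ,
        HasDerivAt (fun t => w t 0 * deriv w t 1 - w t 1 * deriv w t 0) 0 s := by
      intro s
      have h := ((hD1 s 0).mul (hD2 s 1)).sub ((hD1 s 1).mul (hD2 s 0))
      refine h.congr_deriv ?_; symm
      ring
    intro s
    have hconst := is_const_of_deriv_eq_zero (f := fun t => w t 0 * deriv w t 1 - w t 1 * deriv w t 0)
      (fun t => (hder t).differentiableAt) (fun t => (hder t).deriv) s 0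
    rw [hconst, ← hWdef]
  -- the "energy" is constant
  have hE : ∀ s : ℝ, ‖w s‖ ^ 2 - β⁻¹ ^ 2 * ‖deriv w s‖ ^ 2
      = ‖w 0‖ ^ 2 - β⁻¹ ^ 2 * ‖deriv w 0‖ ^ 2 := by
    have hder : ∀ s : ℝ,
        HasDerivAt (fun t => (w t 0 ^ 2 + w t 1 ^ 2)
          - β⁻¹ ^ 2 * (deriv w t 0 ^ 2 + deriv w t 1 ^ 2)) 0 s := by
      intro s
      have h := (((hD1 s 0).pow 2).add ((hD1 s 1).pow 2)).sub
        ((((hD2 s 0).pow 2).add ((hD2 s 1).pow 2)).const_mul (β⁻¹ ^ 2))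
      refine h.congr_deriv ?_; symm
      norm_num
      linear_combination (2 * (w s 0 * deriv w s 0 + w s 1 * deriv w s 1)) * hβ2
    intro s
    have hconst := is_const_of_deriv_eq_zero (f := fun t => (w t 0 ^ 2 + w t 1 ^ 2)
          - β⁻¹ ^ 2 * (deriv w t 0 ^ 2 + deriv w t 1 ^ 2))
      (fun t => (hder t).differentiableAt) (fun t => (hder t).deriv) s 0
    rw [hnsq (w s), hnsq (deriv w s), hnsq (w 0), hnsq (deriv w 0)]
    exact hconst
  intro s hs
  set x : ℝ := ‖w s‖ ^ 2 with hxdef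
  set k : ℝ := 1 - c ^ 2 with hkdef
  clear_value x k
  have hx0 : 0 ≤ x := by rw [hxdef]; positivity
  have hx1 : x ≤ 1 := by
    have := hw1 s hs
    nlinarith [norm_nonneg (w s)]
  have hk : β⁻¹ ^ 2 * ‖deriv w s‖ ^ 2 = x - k := by
    have h := hE s
    rw [hkdef, hc]
    linarith
  have hm : ‖deriv w s‖ ^ 2 = β ^ 2 * (x - k) := by
    calc ‖deriv w s‖ ^ 2 = (β⁻¹ ^ 2 * β ^ 2) * ‖deriv w s‖ ^ 2 := by rw [hβ2, one_mul]
      _ = β ^ 2 * (β⁻¹ ^ 2 * ‖deriv w s‖ ^ 2) := by ring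
      _ = β ^ 2 * (x - k) := by rw [hk]
  -- Lagrange identity
  have hL2 : W ^ 2 ≤ x * ‖deriv w s‖ ^ 2 := by
    rw [hxdef, hnsq (w s), hnsq (deriv w s), ← hWr s]
    nlinarith [sq_nonneg (w s 0 * deriv w s 0 + w s 1 * deriv w s 1)]
  have hW2 : 0 < W ^ 2 := by positivity
  have hxpos : 0 < x := by
    rcases lt_or_eq_of_le hx0 with h | h
    · exact h
    · exfalso; rw [← h] at hL2; nlinarith
  have hβsq : 0 < β ^ 2 := by positivity
  have hLm : W ^ 2 ≤ x * (β ^ 2 * (x - k)) := hm ▸ hL2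
  have hxk : 0 < x - k := by
    by_contra hcon
    push_neg at hcon
    have h2 : β ^ 2 * (x - k) ≤ 0 := mul_nonpos_iff.mpr (Or.inl ⟨hβsq.le, hcon⟩)
    nlinarith [hLm, hW2, hx0, h2]
  -- key quadratic inequality
  have h1 : β⁻¹ ^ 2 * W ^ 2 ≤ x ^ 2 - k * x := by
    have h := mul_le_mul_of_nonneg_left hL2 (by positivity : (0:ℝ) ≤ β⁻¹ ^ 2)
    rw [hm] at h
    calc β⁻¹ ^ 2 * W ^ 2 ≤ β⁻¹ ^ 2 * (x * (β ^ 2 * (x - k))) := h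
      _ = (β⁻¹ ^ 2 * β ^ 2) * (x * (x - k)) := by ring
      _ = x ^ 2 - k * x := by rw [hβ2]; ring
  have hD : k ^ 2 + 4 * β⁻¹ ^ 2 * W ^ 2 ≤ (2 * x - k) ^ 2 := by
    have hexp : (2 * x - k) ^ 2 = k ^ 2 + 4 * (x ^ 2 - k * x) := by ring
    linarith [h1]
  have h2xk : 0 ≤ 2 * x - k := by linarith
  have hsqrt : Real.sqrt (k ^ 2 + 4 * β⁻¹ ^ 2 * W ^ 2) ≤ 2 * x - k := by
    calc Real.sqrt (k ^ 2 + 4 * β⁻¹ ^ 2 * W ^ 2) ≤ Real.sqrt ((2 * x - k) ^ 2) :=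
          Real.sqrt_le_sqrt hD
      _ = 2 * x - k := Real.sqrt_sq h2xk
  have hden : 0 < Real.sqrt (k ^ 2 + 4 * β⁻¹ ^ 2 * W ^ 2) + k := by
    have hlt : |k| < Real.sqrt (k ^ 2 + 4 * β⁻¹ ^ 2 * W ^ 2) := by
      rw [← Real.sqrt_sq_eq_abs]
      apply Real.sqrt_lt_sqrt (sq_nonneg k)
      have hpos : 0 < 4 * β⁻¹ ^ 2 * W ^ 2 := by positivity
      linarith
    have := neg_abs_le k
    linarith
  have hτabs : |τ s| = |W| / x := by
    rw [hτ s, abs_div, ← hxdef, abs_of_pos hxpos]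
  have hWabs : 0 < |W| := abs_pos.mpr hW
  refine ⟨?_, ?_, ?_⟩
  · intro h0
    rw [hxdef, h0] at hxpos
    simp at hxpos
  · rw [hτabs, le_div_iff₀ hxpos]
    nlinarith [hWabs, hx1, hxpos]
  · have hgoal : Real.sqrt (k ^ 2 + 4 * β⁻¹ ^ 2 * W ^ 2) + 1 - c ^ 2
        = Real.sqrt (k ^ 2 + 4 * β⁻¹ ^ 2 * W ^ 2) + k := by rw [hkdef]; ring
    rw [hτabs, hgoal, div_le_div_iff₀ hxpos hden]
    nlinarith [hWabs, hsqrt, hxpos]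
end

section
/- Let w : ℝ → ℝ² be a normalized-curvature trajectory (i.e., twice continuously differentiable with w''(s) = β² w(s) for all s) with Wronskian W. Then at every s ∈ ℝ with w(s) ≠ 0, the function σ ↦ ‖w(σ)‖ is twice differentiable at s and (d²/ds²)‖w(s)‖ = W² / ‖w(s)‖³ + β² ‖w(s)‖. -/
/-- Along a normalized-curvature trajectory `w` (a C² curve in ℝ² with
`w'' = β² w`) with Wronskian `W`, at every point where `w(s) ≠ 0` the function
`σ ↦ ‖w(σ)‖` is twice differentiable at `s` with second derivative
`W²/‖w(s)‖³ + β²‖w(s)‖`. -/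
theorem stmt_9 (β : ℝ) (hβ : 0 < β)
    (w : ℝ → EuclideanSpace ℝ (Fin 2)) (hw : ContDiff ℝ 2 w)
    (hODE : ∀ s : ℝ, deriv (deriv w) s = β ^ 2 • w s)
    (W : ℝ) (hW : W = (w 0) 0 * (deriv w 0) 1 - (w 0) 1 * (deriv w 0) 0) :
    ∀ s : ℝ, w s ≠ 0 →
      DifferentiableAt ℝ (fun σ => ‖w σ‖) s ∧
      HasDerivAt (deriv fun σ => ‖w σ‖) (W ^ 2 / ‖w s‖ ^ 3 + β ^ 2 * ‖w s‖) s := by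
  have hd1 : Differentiable ℝ w := hw.differentiable (by norm_num)
  have h2 : ContDiff ℝ ((1 : WithTop ℕ∞) + 1) w := by
    have : ((1 : WithTop ℕ∞) + 1) = 2 := by norm_num
    rw [this]; exact hw
  have hc1 : ContDiff ℝ 1 (deriv w) := (contDiff_succ_iff_deriv.mp h2).2.2
  have hd2 : Differentiable ℝ (deriv w) := hc1.differentiable one_ne_zero
  have hwd : ∀ σ, HasDerivAt w (deriv w σ) σ := fun σ => (hd1 σ).hasDerivAt
  have hwd2 : ∀ σ, HasDerivAt (deriv w) (β ^ 2 • w σ) σ := fun σ => hODE σ ▸ (hd2 σ).hasDerivAt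
  -- component derivatives
  have hcomp : ∀ (i : Fin 2) σ, HasDerivAt (fun t => w t i) (deriv w σ i) σ := by
    intro i σ
    exact ((EuclideanSpace.proj (𝕜 := ℝ) i).hasFDerivAt.comp_hasDerivAt σ (hwd σ))
  have hcomp2 : ∀ (i : Fin 2) σ, HasDerivAt (fun t => deriv w t i) (β ^ 2 * w σ i) σ := by
    intro i σ
    have := ((EuclideanSpace.proj (𝕜 := ℝ) i).hasFDerivAt.comp_hasDerivAt σ (hwd2 σ))
    simpa [Function.comp_def] using this
  -- Wronskian is constant
  have hWd : ∀ σ, HasDerivAt (fun t => w t 0 * deriv w t 1 - w t 1 * deriv w t 0) 0 σ := by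
    intro σ
    have h := ((hcomp 0 σ).mul (hcomp2 1 σ)).sub ((hcomp 1 σ).mul (hcomp2 0 σ))
    refine h.congr_deriv (Eq.symm ?_)
    ring
  have hWconst : ∀ σ, w σ 0 * deriv w σ 1 - w σ 1 * deriv w σ 0 = W := by
    intro σ
    rw [hW]
    exact is_const_of_deriv_eq_zero (fun x => (hWd x).differentiableAt)
      (fun x => (hWd x).deriv) σ 0
  -- inner product in coordinates
  have hip : ∀ x y : EuclideanSpace ℝ (Fin 2),
      (inner ℝ x y : ℝ) = x 0 * y 0 + x 1 * y 1 := by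
    intro x y
    simp [PiLp.inner_apply, Fin.sum_univ_two, RCLike.inner_apply, mul_comm]
  -- norm derivative formula
  have hnorm : ∀ σ, w σ ≠ 0 →
      HasDerivAt (fun t => ‖w t‖) ((inner ℝ (w σ) (deriv w σ) : ℝ) / ‖w σ‖) σ := by
    intro σ hσ
    have hpos : (0:ℝ) < ‖w σ‖ := norm_pos_iff.mpr hσ
    have hinner : HasDerivAt (fun t => (inner ℝ (w t) (w t) : ℝ))
        (2 * (inner ℝ (w σ) (deriv w σ) : ℝ)) σ := by
      have h := (hwd σ).inner ℝ (hwd σ)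
      refine h.congr_deriv (Eq.symm ?_)
      rw [real_inner_comm (deriv w σ) (w σ)]
      ring
    have hne : (inner ℝ (w σ) (w σ) : ℝ) ≠ 0 := by
      rw [real_inner_self_eq_norm_sq]; positivity
    have hsqrt := (Real.hasDerivAt_sqrt hne).comp σ hinner
    have heq : (fun t => Real.sqrt ((inner ℝ (w t) (w t) : ℝ))) = fun t => ‖w t‖ := by
      funext t
      rw [real_inner_self_eq_norm_sq, Real.sqrt_sq (norm_nonneg _)]
    rw [Function.comp_def, heq] at hsqrt
    refine hsqrt.congr_deriv (Eq.symm ?_)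
    rw [real_inner_self_eq_norm_sq, Real.sqrt_sq (norm_nonneg _)]
    field_simp
  intro s hs
  have hpos : (0:ℝ) < ‖w s‖ := norm_pos_iff.mpr hs
  refine ⟨(hnorm s hs).differentiableAt, ?_⟩
  -- eventually nonzero
  have hev : ∀ᶠ σ in nhds s, w σ ≠ 0 :=
    (hd1.continuous.continuousAt (x := s)).eventually_ne hs
  have hderiv_eq : (deriv fun σ => ‖w σ‖) =ᶠ[nhds s]
      fun σ => (inner ℝ (w σ) (deriv w σ) : ℝ) / ‖w σ‖ :=
    hev.mono fun σ hσ => (hnorm σ hσ).deriv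
  have hN : HasDerivAt (fun σ => (inner ℝ (w σ) (deriv w σ) : ℝ))
      ((inner ℝ (w s) ((β ^ 2 : ℝ) • w s) : ℝ) + (inner ℝ (deriv w s) (deriv w s) : ℝ)) s :=
    (hwd s).inner ℝ (hwd2 s)
  have hquot := hN.div (hnorm s hs) (ne_of_gt hpos)
  have hc : (inner ℝ (w s) (deriv w s) : ℝ) ^ 2 = ‖w s‖ ^ 2 * ‖deriv w s‖ ^ 2 - W ^ 2 := by
    have hl := hWconst s
    have e1 := hip (w s) (w s)
    have e2 := hip (deriv w s) (deriv w s)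
    have e3 := hip (w s) (deriv w s)
    rw [real_inner_self_eq_norm_sq] at e1 e2
    rw [e3, e1, e2, ← hl]
    ring
  have hmain : HasDerivAt (fun σ => (inner ℝ (w σ) (deriv w σ) : ℝ) / ‖w σ‖)
      (W ^ 2 / ‖w s‖ ^ 3 + β ^ 2 * ‖w s‖) s := by
    refine hquot.congr_deriv (Eq.symm ?_)
    rw [real_inner_smul_right, real_inner_self_eq_norm_sq, real_inner_self_eq_norm_sq]
    rw [hip (w s) (deriv w s)] at hc
    field_simp
    rw [hip (w s) (deriv w s)]
    linear_combination hc
  exact (Filter.EventuallyEq.hasDerivAt_iff hderiv_eq).mpr hmain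
end

section
/- Let w : ℝ → ℝ² be a normalized-curvature trajectory (i.e., twice continuously differentiable with w''(s) = β² w(s) for all s) with ‖w(0)‖ ≤ 1 and β w(0) + w'(0) ≠ 0. Then 𝔠² ≥ β⁻² W², the number s_max := (1/(2β)) ln( (1 + 𝔠² + 2√(𝔠² − β⁻²W²)) / ‖w(0) + β⁻¹ w'(0)‖² ) satisfies s_max ≥ 0, ‖w(s_max)‖ = 1, ‖w(s)‖ ≤ 1 for all s ∈ [0, s_max], and ‖w(s)‖ > 1 for all s > s_max. -/


private lemma aux01 (x : ℝ) (h0 : 0 ≤ x) (h1 : x ≤ 1) : x^2 ≤ 1 := by nlinarith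
private lemma aux02 (x : ℝ) (h0 : 0 ≤ x) (h1 : x^2 ≤ 1) : x ≤ 1 := by nlinarith
private lemma aux03 (x : ℝ) (h0 : 0 ≤ x) (h1 : 1 < x^2) : 1 < x := by nlinarith
private lemma aux04 (a b : ℝ) (h0 : 0 ≤ a) (h : a ≤ b) : a^2 ≤ b^2 := by nlinarith
private lemma aux05 (a b : ℝ) (h0 : 0 ≤ a) (h : a < b) : a^2 < b^2 := by nlinarith
private lemma aux06 (a : ℝ) (h : 1 ≤ a) : 1 ≤ a^2 := by nlinarith

private lemma auxDnn (p q r : ℝ) (hp : 0 < p) (hq : 0 ≤ q) (hg1 : p + 2*r + q ≤ 1) :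
    0 ≤ (1-2*r)^2 - 4*p*q := by
  nlinarith [sq_nonneg (p-q), mul_nonneg (by linarith : (0:ℝ) ≤ 1-2*r-(p+q))
    (by linarith : (0:ℝ) ≤ 1-2*r+(p+q))]

private lemma auxKey (p q r S : ℝ) (hp : 0 < p) (hq : 0 ≤ q) (hS0 : 0 ≤ S)
    (hS2 : S^2 = (1-2*r)^2 - 4*p*q) (hg1 : p + 2*r + q ≤ 1) :
    2*p - (1-2*r) ≤ S ∧ (1-2*r) - 2*p ≤ S := by
  have hkey : (2*p - (1-2*r))^2 ≤ S^2 := by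
    nlinarith [mul_nonneg hp.le (by linarith : (0:ℝ) ≤ 1-2*r-p-q)]
  constructor <;> nlinarith [hS0, hkey]

private lemma auxLe (p q r S t : ℝ) (hp : 0 < p) (hq : 0 ≤ q) (hS0 : 0 ≤ S)
    (hS2 : S^2 = (1-2*r)^2 - 4*p*q) (hg1 : p + 2*r + q ≤ 1)
    (ht1 : 1 ≤ t) (ht2 : 2*p*t ≤ (1-2*r) + S) : p*t^2 - (1-2*r)*t + q ≤ 0 := by
  obtain ⟨h1, h2⟩ := auxKey p q r S hp hq hS0 hS2 hg1
  have hB : (1-2*r) - 2*p*t ≤ S := by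
    nlinarith [mul_nonneg hp.le (by linarith : (0:ℝ) ≤ t - 1)]
  have hsq : (2*p*t - (1-2*r))^2 ≤ S^2 := by nlinarith [ht2, hB, hS0]
  nlinarith [hsq, hp]

private lemma auxEq (p q r S t : ℝ) (hp : 0 < p)
    (hS2 : S^2 = (1-2*r)^2 - 4*p*q)
    (ht2 : 2*p*t = (1-2*r) + S) : p*t^2 - (1-2*r)*t + q = 0 := by
  have h4 : (4*p) * (p*t^2 - (1-2*r)*t + q) = 0 := by
    linear_combination (2*p*t - (1 - 2*r) + S) * ht2 + hS2
  rcases mul_eq_zero.mp h4 with h | h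
  · linarith
  · exact h

private lemma auxGt (p q r S t : ℝ) (hp : 0 < p) (hS0 : 0 ≤ S)
    (hS2 : S^2 = (1-2*r)^2 - 4*p*q)
    (ht2 : (1-2*r) + S < 2*p*t) : 0 < p*t^2 - (1-2*r)*t + q := by
  have hx : S < 2*p*t - (1-2*r) := by linarith
  have hsq : S^2 < (2*p*t - (1-2*r))^2 := by nlinarith [hS0, hx]
  nlinarith [hsq, hp]

private lemma auxDiv (x e N : ℝ) (he : 0 < e) (hEq : (x - 1)*e = N) :
    (N ≤ 0 → x ≤ 1) ∧ (0 < N → 1 < x) := by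
  constructor <;> intro h <;> nlinarith

set_option maxHeartbeats 1000000 in
/-- Along a normalized-curvature trajectory `w` (a C² curve in ℝ² with
`w'' = β² w`) with `‖w(0)‖ ≤ 1` and `βw(0) + w'(0) ≠ 0`, one has `𝔠² ≥ β⁻²W²`, the
number `s_max = (1/(2β)) ln((1 + 𝔠² + 2√(𝔠² − β⁻²W²))/‖w(0) + β⁻¹w'(0)‖²)` is
nonnegative, `‖w(s_max)‖ = 1`, `‖w(s)‖ ≤ 1` on `[0, s_max]`, and `‖w(s)‖ > 1` for
`s > s_max`. -/
theorem stmt_10 (β : ℝ) (hβ : 0 < β)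
    (w : ℝ → EuclideanSpace ℝ (Fin 2)) (hw : ContDiff ℝ 2 w)
    (hODE : ∀ s : ℝ, deriv (deriv w) s = β ^ 2 • w s)
    (W : ℝ) (hW : W = (w 0) 0 * (deriv w 0) 1 - (w 0) 1 * (deriv w 0) 0)
    (c : ℝ) (hc0 : 0 ≤ c)
    (hc : c ^ 2 = 1 - ‖w 0‖ ^ 2 + β⁻¹ ^ 2 * ‖deriv w 0‖ ^ 2)
    (hw0 : ‖w 0‖ ≤ 1)
    (hne : β • w 0 + deriv w 0 ≠ 0)
    (smax : ℝ)
    (hsmax : smax = (1 / (2 * β)) *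
      Real.log ((1 + c ^ 2 + 2 * Real.sqrt (c ^ 2 - β⁻¹ ^ 2 * W ^ 2)) /
        ‖w 0 + β⁻¹ • deriv w 0‖ ^ 2)) :
    β⁻¹ ^ 2 * W ^ 2 ≤ c ^ 2 ∧
    0 ≤ smax ∧
    ‖w smax‖ = 1 ∧
    (∀ s ∈ Set.Icc 0 smax, ‖w s‖ ≤ 1) ∧
    ∀ s : ℝ, smax < s → 1 < ‖w s‖ := by
  have hβ0 : β ≠ 0 := ne_of_gt hβ
  have hdw : Differentiable ℝ w := hw.differentiable (by norm_num)
  have hdw2 : Differentiable ℝ (deriv w) := by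
    have hw2 : ContDiff ℝ ((1:ℕ∞)+1) w := hw.of_le (by norm_num)
    have h := (contDiff_succ_iff_deriv.mp hw2).2.2
    exact h.differentiable (by norm_num)
  -- step 1: first-order invariants
  have key : ∀ s, deriv w s + β • w s = Real.exp (β*s) • (deriv w 0 + β • w 0) := by
    have hu : ∀ s, HasDerivAt (fun s => Real.exp (-(β*s)) • (deriv w s + β • w s)) 0 s := by
      intro s
      have h0 : HasDerivAt (fun s : ℝ => -(β*s)) (-β) s := by
        exact (((hasDerivAt_id s).const_mul β).neg).congr_deriv (by ring)
      have h1 : HasDerivAt (fun s : ℝ => Real.exp (-(β*s))) (-β * Real.exp (-(β*s))) s := by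
        refine ((Real.hasDerivAt_exp (-(β*s))).comp s h0).congr_deriv ?_; ring
      have h2 : HasDerivAt (fun s => deriv w s + β • w s) (β^2 • w s + β • deriv w s) s := by
        have hd2 : HasDerivAt (deriv w) (deriv (deriv w) s) s := (hdw2 s).hasDerivAt
        have hd1 : HasDerivAt (fun x => β • w x) (β • deriv w s) s :=
          ((hdw s).hasDerivAt).const_smul β
        have := hd2.add hd1
        rw [hODE s] at this; exact this
      have h3 := h1.smul h2
      exact h3.congr_deriv (by module)
    have hconst : ∀ s, Real.exp (-(β*s)) • (deriv w s + β • w s) = deriv w 0 + β • w 0 := by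
      intro s
      have h := is_const_of_deriv_eq_zero
        (f := fun s => Real.exp (-(β*s)) • (deriv w s + β • w s))
        (fun x => ((hu x).differentiableAt)) (fun x => (hu x).deriv) s 0
      simpa using h
    intro s
    have he : Real.exp (β*s) * Real.exp (-(β*s)) = 1 := by rw [← Real.exp_add]; simp
    have h : Real.exp (β*s) • (Real.exp (-(β*s)) • (deriv w s + β • w s))
        = Real.exp (β*s) • (deriv w 0 + β • w 0) := by rw [hconst s]
    rwa [smul_smul, he, one_smul] at h
  have key2 : ∀ s, deriv w s - β • w s = Real.exp (-(β*s)) • (deriv w 0 - β • w 0) := by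
    have hu : ∀ s, HasDerivAt (fun s => Real.exp (β*s) • (deriv w s - β • w s)) 0 s := by
      intro s
      have h0 : HasDerivAt (fun s : ℝ => β*s) β s := by
        simpa using ((hasDerivAt_id s).const_mul β)
      have h1 : HasDerivAt (fun s : ℝ => Real.exp (β*s)) (β * Real.exp (β*s)) s := by
        refine ((Real.hasDerivAt_exp (β*s)).comp s h0).congr_deriv ?_; ring
      have h2 : HasDerivAt (fun s => deriv w s - β • w s) (β^2 • w s - β • deriv w s) s := by
        have hd2 : HasDerivAt (deriv w) (deriv (deriv w) s) s := (hdw2 s).hasDerivAt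
        have hd1 : HasDerivAt (fun x => β • w x) (β • deriv w s) s :=
          ((hdw s).hasDerivAt).const_smul β
        have := hd2.sub hd1
        rw [hODE s] at this; exact this
      have h3 := h1.smul h2
      exact h3.congr_deriv (by module)
    have hconst : ∀ s, Real.exp (β*s) • (deriv w s - β • w s) = deriv w 0 - β • w 0 := by
      intro s
      have h := is_const_of_deriv_eq_zero
        (f := fun s => Real.exp (β*s) • (deriv w s - β • w s))
        (fun x => ((hu x).differentiableAt)) (fun x => (hu x).deriv) s 0
      simpa using h
    intro s
    have he : Real.exp (-(β*s)) * Real.exp (β*s) = 1 := by rw [← Real.exp_add]; simp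
    have h : Real.exp (-(β*s)) • (Real.exp (β*s) • (deriv w s - β • w s))
        = Real.exp (-(β*s)) • (deriv w 0 - β • w 0) := by rw [hconst s]
    rwa [smul_smul, he, one_smul] at h
  -- abbreviations
  set A := w 0 with hA_def
  set B := deriv w 0 with hB_def
  have hb2 : (2*β) ≠ 0 := by positivity
  set P : EuclideanSpace ℝ (Fin 2) := (2*β)⁻¹ • (B + β • A) with hPdef
  set Q : EuclideanSpace ℝ (Fin 2) := (2*β)⁻¹ • (β • A - B) with hQdef
  have hPP : (2*β) • P = B + β • A := by rw [hPdef, smul_smul, mul_inv_cancel₀ hb2, one_smul]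
  have hQQ : (2*β) • Q = β • A - B := by rw [hQdef, smul_smul, mul_inv_cancel₀ hb2, one_smul]
  have wform : ∀ s, w s = Real.exp (β*s) • P + Real.exp (-(β*s)) • Q := by
    intro s
    have h3 : (2*β) • w s = Real.exp (β*s) • (B + β•A) - Real.exp (-(β*s)) • (B - β•A) := by
      rw [← key s, ← key2 s]; module
    have h4 : (2*β) • (Real.exp (β*s) • P + Real.exp (-(β*s)) • Q)
        = Real.exp (β*s) • ((2*β) • P) + Real.exp (-(β*s)) • ((2*β) • Q) := by module
    rw [hPP, hQQ] at h4
    have h5 : (2*β) • w s = (2*β) • (Real.exp (β*s) • P + Real.exp (-(β*s)) • Q) := by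
      rw [h4, h3]; module
    exact smul_right_injective (EuclideanSpace ℝ (Fin 2)) hb2 h5
  have hcoord : ∀ s : ℝ, ∀ i : Fin 2,
      w s i = Real.exp (β*s) * P i + Real.exp (-(β*s)) * Q i := by
    intro s i; rw [wform s]; rfl
  have hnsq : ∀ x : EuclideanSpace ℝ (Fin 2), ‖x‖^2 = x 0^2 + x 1^2 := by
    intro x
    rw [EuclideanSpace.norm_eq, Real.sq_sqrt (by positivity)]
    simp [Fin.sum_univ_two, sq_abs]
  have hPi : ∀ i : Fin 2, P i = (2*β)⁻¹ * (B i + β * A i) := by intro i; rw [hPdef]; rfl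
  have hQi : ∀ i : Fin 2, Q i = (2*β)⁻¹ * (β * A i - B i) := by intro i; rw [hQdef]; rfl
  have hAi : ∀ i : Fin 2, A i = P i + Q i := by
    intro i; rw [hPi i, hQi i]; field_simp; ring
  have hBi : ∀ i : Fin 2, β⁻¹ * B i = P i - Q i := by
    intro i; rw [hPi i, hQi i]; field_simp; ring
  set p := P 0^2 + P 1^2 with hp_def
  set q := Q 0^2 + Q 1^2 with hq_def
  set r := P 0*Q 0 + P 1*Q 1 with hr_def
  have hnA : ‖A‖^2 = p + 2*r + q := by rw [hnsq, hAi 0, hAi 1, hp_def, hq_def, hr_def]; ring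
  have hnB : β⁻¹^2 * ‖B‖^2 = p - 2*r + q := by
    have h0 := hBi 0; have h1 := hBi 1
    rw [hnsq, hp_def, hq_def, hr_def]
    linear_combination (β⁻¹ * B 0 + (P 0 - Q 0)) * h0 + (β⁻¹ * B 1 + (P 1 - Q 1)) * h1
  have hc2 : c^2 = 1 - 4*r := by rw [hc]; linarith [hnA, hnB]
  have hqnn : (0:ℝ) ≤ q := by positivity
  have hg1 : p + 2*r + q ≤ 1 := by
    have h := aux01 ‖A‖ (norm_nonneg A) hw0
    linarith [hnA]
  have hXW : β⁻¹^2 * W^2 = 4*(P 0*Q 1 - P 1*Q 0)^2 := by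
    have h : β⁻¹ * W = -2*(P 0*Q 1 - P 1*Q 0) := by
      rw [hW]
      calc β⁻¹ * (A 0 * B 1 - A 1 * B 0) = A 0 * (β⁻¹ * B 1) - A 1 * (β⁻¹ * B 0) := by ring
        _ = (P 0 + Q 0)*(P 1 - Q 1) - (P 1 + Q 1)*(P 0 - Q 0) := by
            rw [← hAi 0, ← hAi 1, hBi 0, hBi 1]
        _ = -2*(P 0*Q 1 - P 1*Q 0) := by ring
    calc β⁻¹^2*W^2 = (β⁻¹*W)^2 := by ring
      _ = 4*(P 0*Q 1 - P 1*Q 0)^2 := by rw [h]; ring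
  have hn0 : ‖A + β⁻¹ • B‖^2 = 4*p := by
    have hi : ∀ i : Fin 2, (A + β⁻¹ • B) i = 2 * P i := by
      intro i
      have hx : (A + β⁻¹ • B) i = A i + β⁻¹ * B i := rfl
      rw [hx, hAi i, hBi i]; ring
    rw [hnsq, hi 0, hi 1, hp_def]; ring
  have hppos : 0 < p := by
    rcases lt_or_eq_of_le (by positivity : (0:ℝ) ≤ p) with h | h
    · exact h
    · exfalso
      apply hne
      have hnp : ‖P‖^2 = 0 := by rw [hnsq]; linarith [hp_def]
      have hPz : P = 0 := by
        have := pow_eq_zero_iff (n := 2) (by norm_num) |>.mp hnp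
        exact norm_eq_zero.mp this
      rw [hPz, smul_zero] at hPP
      rw [add_comm]
      exact hPP.symm
  have h12r : p + q ≤ 1 - 2*r := by linarith
  have h2ppos : (0:ℝ) < 2*p := by linarith
  -- discriminant
  set D := c^2 - β⁻¹^2*W^2 with hD_def
  have hDeq : D = (1-2*r)^2 - 4*p*q := by
    rw [hD_def, hXW, hc2, hp_def, hq_def, hr_def]; ring
  have hDnn : (0:ℝ) ≤ D := by rw [hDeq]; exact auxDnn p q r hppos hqnn hg1
  set S := Real.sqrt D with hS_def
  have hS0 : 0 ≤ S := Real.sqrt_nonneg D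
  have hS2' : S^2 = (1-2*r)^2 - 4*p*q := (Real.sq_sqrt hDnn).trans hDeq
  obtain ⟨h2pS, hS2p⟩ := auxKey p q r S hppos hqnn hS0 hS2' hg1
  set t2 := ((1-2*r) + S)/(2*p) with ht2_def
  have ht2eq : 2*p*t2 = (1-2*r) + S := by
    rw [ht2_def]; field_simp
  have ht21 : 1 ≤ t2 := by
    have h : 2*p*1 ≤ 2*p*t2 := by rw [ht2eq]; linarith
    exact (mul_le_mul_iff_right₀ h2ppos).mp h
  have ht2pos : 0 < t2 := lt_of_lt_of_le one_pos ht21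
  -- norm formula
  have hfs : ∀ s : ℝ, ‖w s‖^2 * Real.exp (β*s)^2
      = p * (Real.exp (β*s)^2)^2 + 2*r * Real.exp (β*s)^2 + q := by
    intro s
    have he : Real.exp (β*s) * Real.exp (-(β*s)) = 1 := by rw [← Real.exp_add]; simp
    rw [hnsq, hcoord s 0, hcoord s 1, hp_def, hq_def, hr_def]
    linear_combination (2*(P 0*Q 0 + P 1*Q 1)*Real.exp (β*s)^2
      + (Q 0^2 + Q 1^2)*(Real.exp (β*s)*Real.exp (-(β*s))+1)) * he
  have hsign : ∀ s : ℝ, (‖w s‖^2 - 1) * Real.exp (β*s)^2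
      = p*(Real.exp (β*s)^2)^2 - (1-2*r)*Real.exp (β*s)^2 + q := by
    intro s
    linear_combination hfs s
  -- s_max
  have hesmax : Real.exp (β*smax)^2 = t2 := by
    have hX : (1 + c^2 + 2*S)/‖A + β⁻¹ • B‖^2 = t2 := by
      rw [hn0, ht2_def, hc2, div_eq_div_iff (by positivity) (by linarith)]
      ring
    have hXpos : (0:ℝ) < (1 + c^2 + 2*S)/‖A + β⁻¹ • B‖^2 := hX ▸ ht2pos
    have h2 : β*smax + β*smax = Real.log ((1 + c^2 + 2*S)/‖A + β⁻¹ • B‖^2) := by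
      rw [hsmax]; field_simp; ring
    rw [sq, ← Real.exp_add, h2, Real.exp_log hXpos, hX]
  refine ⟨?_, ?_, ?_, ?_, ?_⟩
  · have h := hDnn; rw [hD_def] at h; linarith
  · -- 0 ≤ smax
    by_contra hcon
    push_neg at hcon
    have h1 : Real.exp (β*smax) < 1 := by
      rw [← Real.exp_zero]
      exact Real.exp_lt_exp.mpr (mul_neg_of_pos_of_neg hβ hcon)
    have h2 : Real.exp (β*smax)^2 < 1 := by
      have := aux05 (Real.exp (β*smax)) 1 (Real.exp_pos _).le h1
      simpa using this
    rw [hesmax] at h2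
    linarith
  · -- norm at smax
    have hgz := auxEq p q r S t2 hppos hS2' ht2eq
    have h := hsign smax
    rw [hesmax] at h
    have h0 : (‖w smax‖^2 - 1) * t2 = 0 := h.trans hgz
    have h1 : ‖w smax‖^2 = 1 := by
      rcases mul_eq_zero.mp h0 with h' | h'
      · linarith
      · exact absurd h' (ne_of_gt ht2pos)
    have h2 : (‖w smax‖ - 1)*(‖w smax‖ + 1) = 0 := by linear_combination h1
    rcases mul_eq_zero.mp h2 with h' | h'
    · linarith
    · linarith [norm_nonneg (w smax)]
  · -- on [0, smax]
    rintro s ⟨hs0, hs1⟩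
    have he1 : 1 ≤ Real.exp (β*s)^2 :=
      aux06 _ (Real.one_le_exp (mul_nonneg hβ.le hs0))
    have hee : Real.exp (β*s)^2 ≤ t2 := by
      rw [← hesmax]
      exact aux04 _ _ (Real.exp_pos _).le
        (Real.exp_le_exp.mpr (mul_le_mul_of_nonneg_left hs1 hβ.le))
    have h2pt : 2*p*Real.exp (β*s)^2 ≤ (1-2*r) + S := by
      calc 2*p*Real.exp (β*s)^2 ≤ 2*p*t2 :=
            mul_le_mul_of_nonneg_left hee (by linarith)
        _ = (1-2*r)+S := ht2eq
    have hg := auxLe p q r S _ hppos hqnn hS0 hS2' hg1 he1 h2pt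
    have hd := (auxDiv (‖w s‖^2) _ _ (by positivity) (hsign s)).1 (by linarith [hg])
    exact aux02 _ (norm_nonneg _) hd
  · -- beyond smax
    intro s hs
    have hee : t2 < Real.exp (β*s)^2 := by
      rw [← hesmax]
      exact aux05 _ _ (Real.exp_pos _).le
        (Real.exp_lt_exp.mpr ((mul_lt_mul_iff_right₀ hβ).mpr hs))
    have h2pt : (1-2*r) + S < 2*p*Real.exp (β*s)^2 := by
      rw [← ht2eq]
      exact (mul_lt_mul_iff_right₀ h2ppos).mpr hee
    have hg := auxGt p q r S _ hppos hS0 hS2' h2pt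
    have hd := (auxDiv (‖w s‖^2) _ _ (by positivity) (hsign s)).2 (by linarith [hg])
    exact aux03 _ (norm_nonneg _) hd
end

section
/- Let w : ℝ → ℝ² be a normalized-curvature trajectory (i.e., twice continuously differentiable with w''(s) = β² w(s) for all s) with ‖w(0)‖ ≤ 1. Then ‖w(s)‖ ≤ 1 for all s ≥ 0 if and only if β w(0) + w'(0) = 0. -/
/-- A normalized-curvature trajectory `w` (a C² curve in ℝ² with
`w'' = β² w`) with `‖w(0)‖ ≤ 1` satisfies `‖w(s)‖ ≤ 1` for all `s ≥ 0` if and only if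
`βw(0) + w'(0) = 0`. -/
theorem stmt_11 (β : ℝ) (hβ : 0 < β)
    (w : ℝ → EuclideanSpace ℝ (Fin 2)) (hw : ContDiff ℝ 2 w)
    (hODE : ∀ s : ℝ, deriv (deriv w) s = β ^ 2 • w s)
    (hw0 : ‖w 0‖ ≤ 1) :
    (∀ s : ℝ, 0 ≤ s → ‖w s‖ ≤ 1) ↔ β • w 0 + deriv w 0 = 0 := by
  have hwd : Differentiable ℝ w := hw.differentiable (by norm_num)
  have hw' : ContDiff ℝ 1 (deriv w) := by
    have h2 : ContDiff ℝ ((1:WithTop ℕ∞)+1) w := by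
      convert hw using 2
      exact one_add_one_eq_two
    exact (contDiff_succ_iff_deriv.mp h2).2.2
  have hwd' : Differentiable ℝ (deriv w) := hw'.differentiable one_ne_zero
  set c := β • w 0 + deriv w 0 with hc
  set a := deriv w 0 - β • w 0 with ha
  have hexp : ∀ s : ℝ, ∀ b : ℝ, HasDerivAt (fun s : ℝ => Real.exp (b*s)) (b * Real.exp (b*s)) s := by
    intro s b
    have := (Real.hasDerivAt_exp (b*s)).comp s ((hasDerivAt_id s).const_mul b)
    exact this.congr_deriv (by simp [mul_comm])
  have key1 : ∀ s : ℝ, Real.exp ((-β)*s) • (deriv w s + β • w s) = c := by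
    have hd : ∀ s : ℝ, HasDerivAt (fun s => Real.exp ((-β)*s) • (deriv w s + β • w s)) 0 s := by
      intro s
      have hf : HasDerivAt (fun s => deriv w s + β • w s)
          (deriv (deriv w) s + β • deriv w s) s :=
        ((hwd' s).hasDerivAt).add (((hwd s).hasDerivAt).const_smul β)
      have := (hexp s (-β)).smul hf
      refine this.congr_deriv ?_
      rw [hODE s]
      match_scalars <;> ring
    have hconst : ∀ s : ℝ, (fun s => Real.exp ((-β)*s) • (deriv w s + β • w s)) s
        = (fun s => Real.exp ((-β)*s) • (deriv w s + β • w s)) 0 :=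
      fun s => is_const_of_deriv_eq_zero (fun x => (hd x).differentiableAt)
        (fun x => (hd x).deriv) s 0
    intro s
    have := hconst s
    simpa [hc, add_comm] using this
  have key2 : ∀ s : ℝ, Real.exp (β*s) • (deriv w s - β • w s) = a := by
    have hd : ∀ s : ℝ, HasDerivAt (fun s => Real.exp (β*s) • (deriv w s - β • w s)) 0 s := by
      intro s
      have hf : HasDerivAt (fun s => deriv w s - β • w s)
          (deriv (deriv w) s - β • deriv w s) s :=
        ((hwd' s).hasDerivAt).sub (((hwd s).hasDerivAt).const_smul β)
      have := (hexp s β).smul hf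
      refine this.congr_deriv ?_
      rw [hODE s]
      match_scalars <;> ring
    have hconst : ∀ s : ℝ, (fun s => Real.exp (β*s) • (deriv w s - β • w s)) s
        = (fun s => Real.exp (β*s) • (deriv w s - β • w s)) 0 :=
      fun s => is_const_of_deriv_eq_zero (fun x => (hd x).differentiableAt)
        (fun x => (hd x).deriv) s 0
    intro s
    have := hconst s
    simpa [ha] using this
  have e1 : ∀ s : ℝ, deriv w s + β • w s = Real.exp (β*s) • c := by
    intro s
    rw [← key1 s, smul_smul, ← Real.exp_add]
    simp
  have e2 : ∀ s : ℝ, deriv w s - β • w s = Real.exp ((-β)*s) • a := by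
    intro s
    rw [← key2 s, smul_smul, ← Real.exp_add]
    simp
  have ew : ∀ s : ℝ, (2*β) • w s = Real.exp (β*s) • c - Real.exp ((-β)*s) • a := by
    intro s
    rw [← e1 s, ← e2 s]
    match_scalars <;> ring
  constructor
  · intro hbound
    by_contra hc0
    have hcn : 0 < ‖c‖ := norm_pos_iff.mpr hc0
    have hb : ∀ s : ℝ, 0 ≤ s → Real.exp (β*s) * ‖c‖ ≤ 2*β + ‖a‖ := by
      intro s hs
      have h1 : Real.exp (β*s) • c = (2*β) • w s + Real.exp ((-β)*s) • a := by
        rw [ew s]; abel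
      have h2 : Real.exp (β*s) * ‖c‖ = ‖Real.exp (β*s) • c‖ := by
        rw [norm_smul, Real.norm_eq_abs, abs_of_pos (Real.exp_pos _)]
      have h3 : ‖(2*β) • w s + Real.exp ((-β)*s) • a‖
          ≤ (2*β) * ‖w s‖ + Real.exp ((-β)*s) * ‖a‖ := by
        refine (norm_add_le _ _).trans ?_
        rw [norm_smul, norm_smul, Real.norm_eq_abs, Real.norm_eq_abs,
          abs_of_pos (by linarith : (0:ℝ) < 2*β), abs_of_pos (Real.exp_pos _)]
      have hexple : Real.exp ((-β)*s) ≤ 1 := by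
        rw [Real.exp_le_one_iff]
        nlinarith
      have hws := hbound s hs
      rw [h2, h1]
      have := Real.exp_pos ((-β)*s)
      nlinarith [norm_nonneg (w s), norm_nonneg a]
    set T : ℝ := max ((2*β + ‖a‖ + 1)/‖c‖) 1 with hT
    have hT1 : 1 ≤ T := le_max_right _ _
    have hT0 : 0 < T := by linarith
    have hs0 : (0:ℝ) ≤ Real.log T / β := by
      apply div_nonneg _ hβ.le
      exact Real.log_nonneg hT1
    have hexpT : Real.exp (β * (Real.log T / β)) = T := by
      rw [mul_div_cancel₀ _ (ne_of_gt hβ), Real.exp_log hT0]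
    have := hb (Real.log T / β) hs0
    rw [hexpT] at this
    have hTge : (2*β + ‖a‖ + 1)/‖c‖ ≤ T := le_max_left _ _
    have : (2*β + ‖a‖ + 1)/‖c‖ * ‖c‖ ≤ 2*β + ‖a‖ := by
      calc (2*β + ‖a‖ + 1)/‖c‖ * ‖c‖ ≤ T * ‖c‖ := by
            exact mul_le_mul_of_nonneg_right hTge (norm_nonneg _)
        _ ≤ 2*β + ‖a‖ := this
    rw [div_mul_cancel₀ _ (ne_of_gt hcn)] at this
    linarith
  · intro hc0
    intro s hs
    have haw : a = -((2*β) • w 0) := by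
      have : deriv w 0 = -(β • w 0) := by
        have := hc0
        rw [hc] at this
        linear_combination (norm := module) this
      rw [ha, this]
      match_scalars; ring
    have hws : (2*β) • w s = (2*β) • (Real.exp ((-β)*s) • w 0) := by
      rw [ew s, hc0, haw]
      simp only [smul_zero, zero_sub, smul_neg, neg_neg]
      rw [smul_comm]
    have h2β : (2*β) ≠ 0 := by positivity
    have hws2 : w s = Real.exp ((-β)*s) • w 0 :=
      smul_right_injective (EuclideanSpace ℝ (Fin 2)) h2β hws
    rw [hws2, norm_smul, Real.norm_eq_abs, abs_of_pos (Real.exp_pos _)]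
    have hexple : Real.exp ((-β)*s) ≤ 1 := by
      rw [Real.exp_le_one_iff]; nlinarith
    nlinarith [norm_nonneg (w 0), Real.exp_pos ((-β)*s)]
end

section
/- Fix β > 0 and real numbers r, ρ with 0 ≤ r ≤ 1, ρ ≥ 0 and βr ≠ ρ, and set c² := 1 − r² + β⁻²ρ². For θ ∈ ℝ set D(θ) := r² + β⁻²ρ² + 2β⁻¹ r ρ cos θ and, whenever D(θ) > 0, f(θ) := (1/(2β)) ln( (1 + c² + 2√(c² − β⁻² r² ρ² sin²θ)) / D(θ) ). Then c² − β⁻² r² ρ² sin²θ ≥ 0 for all θ, D(π) > 0, and f(θ) ≤ f(π) for every θ with D(θ) > 0. (That is, among trajectories with ‖w(0)‖ = r and ‖w'(0)‖ = ρ fixed, the maximal cuspless length s_max is largest when w'(0) is antiparallel to w(0), i.e. when the Wronskian W = rρ sin θ vanishes and w(0)·w'(0) = rρ cos θ ≤ 0.) -/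
/-- For fixed `β > 0`, `0 ≤ r ≤ 1`, `ρ ≥ 0` with `βr ≠ ρ`, setting
`c² = 1 − r² + β⁻²ρ²`, `D(θ) = r² + β⁻²ρ² + 2β⁻¹rρ cos θ` and, for `D(θ) > 0`,
`f(θ) = (1/(2β)) ln((1 + c² + 2√(c² − β⁻²r²ρ² sin²θ))/D(θ))`, one has
`c² − β⁻²r²ρ² sin²θ ≥ 0` for all `θ`, `D(π) > 0`, and `f(θ) ≤ f(π)` whenever
`D(θ) > 0`: the maximal cuspless length is largest for antiparallel `w'(0)`. -/
theorem stmt_12 (β r ρ : ℝ) (hβ : 0 < β)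
    (hr0 : 0 ≤ r) (hr1 : r ≤ 1) (hρ : 0 ≤ ρ) (hne : β * r ≠ ρ)
    (c2 : ℝ) (hc2 : c2 = 1 - r ^ 2 + β⁻¹ ^ 2 * ρ ^ 2)
    (D : ℝ → ℝ) (hD : ∀ θ, D θ = r ^ 2 + β⁻¹ ^ 2 * ρ ^ 2 + 2 * β⁻¹ * r * ρ * Real.cos θ)
    (f : ℝ → ℝ)
    (hf : ∀ θ, f θ = (1 / (2 * β)) *
      Real.log ((1 + c2 + 2 * Real.sqrt (c2 - β⁻¹ ^ 2 * r ^ 2 * ρ ^ 2 * Real.sin θ ^ 2)) /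
        D θ)) :
    (∀ θ : ℝ, 0 ≤ c2 - β⁻¹ ^ 2 * r ^ 2 * ρ ^ 2 * Real.sin θ ^ 2) ∧
    0 < D Real.pi ∧
    ∀ θ : ℝ, 0 < D θ → f θ ≤ f Real.pi := by
  have hb : 0 ≤ β⁻¹ := le_of_lt (inv_pos.mpr hβ)
  have hkey : ∀ θ : ℝ, 0 ≤ c2 - β⁻¹ ^ 2 * r ^ 2 * ρ ^ 2 * Real.sin θ ^ 2 := by
    intro θ
    have hs : Real.sin θ ^ 2 ≤ 1 := Real.sin_sq_le_one θ
    have h1 : β⁻¹ ^ 2 * r ^ 2 * ρ ^ 2 * Real.sin θ ^ 2 ≤ β⁻¹ ^ 2 * r ^ 2 * ρ ^ 2 := by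
      nlinarith [sq_nonneg (β⁻¹ * r * ρ)]
    have h2 : 0 ≤ (1 - r ^ 2) * (1 + β⁻¹ ^ 2 * ρ ^ 2) := by
      have h3 : r ^ 2 ≤ 1 := by nlinarith
      have h4 : (0:ℝ) ≤ 1 + β⁻¹ ^ 2 * ρ ^ 2 := by positivity
      nlinarith
    nlinarith
  have hc2nn : 0 ≤ c2 := by
    have := hkey 0
    simpa using this
  have hDπ : 0 < D Real.pi := by
    rw [hD, Real.cos_pi]
    have : r ^ 2 + β⁻¹ ^ 2 * ρ ^ 2 + 2 * β⁻¹ * r * ρ * (-1) = (r - β⁻¹ * ρ) ^ 2 := by ring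
    rw [this]
    have hne' : r - β⁻¹ * ρ ≠ 0 := by
      intro h
      apply hne
      field_simp at h
      linarith [h]
    positivity
  refine ⟨hkey, hDπ, ?_⟩
  intro θ hDθ
  rw [hf, hf]
  apply mul_le_mul_of_nonneg_left _ (by positivity)
  apply Real.log_le_log
  · have hsq : 0 ≤ Real.sqrt (c2 - β⁻¹ ^ 2 * r ^ 2 * ρ ^ 2 * Real.sin θ ^ 2) :=
      Real.sqrt_nonneg _
    have : (0:ℝ) < 1 + c2 + 2 * Real.sqrt (c2 - β⁻¹ ^ 2 * r ^ 2 * ρ ^ 2 * Real.sin θ ^ 2) := by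
      linarith
    positivity
  · have hNle : 1 + c2 + 2 * Real.sqrt (c2 - β⁻¹ ^ 2 * r ^ 2 * ρ ^ 2 * Real.sin θ ^ 2)
        ≤ 1 + c2 + 2 * Real.sqrt (c2 - β⁻¹ ^ 2 * r ^ 2 * ρ ^ 2 * Real.sin Real.pi ^ 2) := by
      have : Real.sqrt (c2 - β⁻¹ ^ 2 * r ^ 2 * ρ ^ 2 * Real.sin θ ^ 2) ≤ Real.sqrt c2 := by
        apply Real.sqrt_le_sqrt
        nlinarith [sq_nonneg (β⁻¹ * r * ρ * Real.sin θ)]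
      have e : c2 - β⁻¹ ^ 2 * r ^ 2 * ρ ^ 2 * Real.sin Real.pi ^ 2 = c2 := by
        rw [Real.sin_pi]; ring
      rw [e]
      linarith
    have hDle : D Real.pi ≤ D θ := by
      rw [hD, hD, Real.cos_pi]
      have hc : -1 ≤ Real.cos θ := Real.neg_one_le_cos θ
      nlinarith [mul_nonneg (mul_nonneg hb hr0) hρ]
    have hNπnn : 0 ≤ 1 + c2 + 2 * Real.sqrt (c2 - β⁻¹ ^ 2 * r ^ 2 * ρ ^ 2 * Real.sin Real.pi ^ 2) := by
      positivity
    exact div_le_div₀ hNπnn hNle hDπ hDle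
end

section
/- Let w : ℝ → ℝ² be a normalized-curvature trajectory (i.e., twice continuously differentiable with w''(s) = β² w(s) for all s) with Wronskian W ≠ 0 and 𝔠 > 0, and set q := W²/(𝔠²β²). Fix s > 0 and assume that for all σ ∈ [0,s]: ‖w(σ)‖ ≤ 1 and ‖w(σ)‖² > q. Define the 2×2 real matrix A(σ) := (‖w(σ)‖² − q)⁻¹ · [[ w(σ)·w'(σ), −(W/(𝔠β))√(𝔠²β² − ‖w'(σ)‖²) ], [ (W/(𝔠β))√(𝔠²β² − ‖w'(σ)‖²), w(σ)·w'(σ) ]] and φ(s) := ∫₀ˢ (W/(𝔠β)) √(𝔠²β² − ‖w'(σ)‖²) / (‖w(σ)‖² − q) dσ. Then the matrix exponential of ∫₀ˢ A(σ) dσ equals √( (‖w(s)‖² − q)/(‖w(0)‖² − q) ) · [[cos φ(s), −sin φ(s)], [sin φ(s), cos φ(s)]]. -/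
noncomputable def cmat : ℂ →ₐ[ℝ] Matrix (Fin 2) (Fin 2) ℝ where
  toFun z := !![z.re, -z.im; z.im, z.re]
  map_one' := by simp [Matrix.one_fin_two]
  map_mul' z w := by
    simp [Complex.mul_re, Complex.mul_im, Matrix.mul_fin_two]
    ring_nf
    simp
  map_zero' := by ext i j; fin_cases i <;> fin_cases j <;> simp
  map_add' z w := by
    ext i j; fin_cases i <;> fin_cases j <;> simp [Complex.add_re, Complex.add_im] <;> ring
  commutes' r := by
    ext i j
    fin_cases i <;> fin_cases j <;>
      simp [Algebra.algebraMap_eq_smul_one, Matrix.smul_apply, Matrix.one_apply]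

lemma cmat_cont : Continuous cmat := by
  apply continuous_matrix
  intro i j
  fin_cases i <;> fin_cases j <;> simp [cmat] <;> fun_prop

open NormedSpace in
lemma exp_cmat (z : ℂ) : NormedSpace.exp (cmat z) = cmat (Complex.exp z) := by
  letI : NormedRing (Matrix (Fin 2) (Fin 2) ℝ) := Matrix.linftyOpNormedRing
  letI : NormedAlgebra ℝ (Matrix (Fin 2) (Fin 2) ℝ) := Matrix.linftyOpNormedAlgebra
  exact (map_exp cmat cmat_cont z).symm.trans (by rw [← Complex.exp_eq_exp_ℂ])

lemma exp_rot (a b : ℝ) : NormedSpace.exp (!![a, -b; b, a]) =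
    Real.exp a • !![Real.cos b, -Real.sin b; Real.sin b, Real.cos b] := by
  have h : !![a, -b; b, a] = cmat ⟨a, b⟩ := by simp [cmat]
  rw [h, exp_cmat]
  ext i j
  fin_cases i <;> fin_cases j <;>
    simp [cmat, Complex.exp_re, Complex.exp_im, mul_comm]

lemma log_integral_aux (w : ℝ → EuclideanSpace ℝ (Fin 2)) (hw : ContDiff ℝ 2 w)
    (q : ℝ) (s : ℝ) (hs : 0 < s)
    (hwq : ∀ σ ∈ Set.Icc 0 s, q < ‖w σ‖ ^ 2) :
    (∫ σ in (0:ℝ)..s, (inner ℝ (w σ) (deriv w σ) : ℝ) / (‖w σ‖ ^ 2 - q)) =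
      Real.log ((‖w s‖ ^ 2 - q) / (‖w 0‖ ^ 2 - q)) / 2 := by
  set u : ℝ → ℝ := fun σ => ‖w σ‖ ^ 2 - q with hu
  have hwd : Differentiable ℝ w := hw.differentiable (by norm_num)
  have hwc : Continuous w := hwd.continuous
  have hwc' : Continuous (deriv w) := hw.continuous_deriv (by norm_num)
  have hud : ∀ σ : ℝ, HasDerivAt u (2 * inner ℝ (w σ) (deriv w σ)) σ := by
    intro σ
    have h1 : HasDerivAt (fun t => (inner ℝ (w t) (w t) : ℝ))
        ((inner ℝ (w σ) (deriv w σ) : ℝ) + inner ℝ (deriv w σ) (w σ)) σ :=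
      (hwd σ).hasDerivAt.inner ℝ (hwd σ).hasDerivAt
    have h2 : HasDerivAt (fun t => (inner ℝ (w t) (w t) : ℝ) - q)
        ((inner ℝ (w σ) (deriv w σ) : ℝ) + inner ℝ (deriv w σ) (w σ)) σ := h1.sub_const q
    have : (fun t => (inner ℝ (w t) (w t) : ℝ) - q) = u := by
      funext t; rw [real_inner_self_eq_norm_sq]
    rw [this] at h2
    convert h2 using 1
    rw [real_inner_comm (deriv w σ) (w σ)]; ring
  have hupos : ∀ σ ∈ Set.Icc (0:ℝ) s, 0 < u σ := fun σ hσ => sub_pos.2 (hwq σ hσ)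
  have hlog : ∀ σ ∈ Set.uIcc (0:ℝ) s,
      HasDerivAt (fun t => Real.log (u t)) (2 * inner ℝ (w σ) (deriv w σ) / u σ) σ := by
    intro σ hσ
    rw [Set.uIcc_of_le hs.le] at hσ
    have := (Real.hasDerivAt_log (hupos σ hσ).ne').comp σ (hud σ)
    refine this.congr_deriv ?_
    ring
  have hcont : ContinuousOn (fun σ => 2 * (inner ℝ (w σ) (deriv w σ) : ℝ) / u σ)
      (Set.uIcc (0:ℝ) s) := by
    rw [Set.uIcc_of_le hs.le]
    apply ContinuousOn.div
    · exact (continuous_const.mul (hwc.inner hwc')).continuousOn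
    · exact ((hwc.norm.pow 2).sub continuous_const).continuousOn
    · exact fun σ hσ => (hupos σ hσ).ne'
  have hint : IntervalIntegrable (fun σ => 2 * (inner ℝ (w σ) (deriv w σ) : ℝ) / u σ)
      MeasureTheory.volume 0 s := hcont.intervalIntegrable
  have key := intervalIntegral.integral_eq_sub_of_hasDerivAt hlog hint
  have h2 : (∫ σ in (0:ℝ)..s, 2 * (inner ℝ (w σ) (deriv w σ) : ℝ) / u σ)
      = 2 * ∫ σ in (0:ℝ)..s, (inner ℝ (w σ) (deriv w σ) : ℝ) / u σ := by
    rw [← intervalIntegral.integral_const_mul]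
    congr 1; funext σ; ring
  have h0 : (0:ℝ) ∈ Set.Icc (0:ℝ) s := by constructor <;> linarith
  have hss : s ∈ Set.Icc (0:ℝ) s := by constructor <;> linarith
  rw [h2] at key
  rw [Real.log_div (hupos s hss).ne' (hupos 0 h0).ne']
  linarith [key]

/-- Along a normalized-curvature trajectory `w` (a C² curve in ℝ² with
`w'' = β² w`) with nonzero Wronskian `W` and `𝔠 > 0`, with `q = W²/(𝔠²β²)`, if
`‖w‖ ≤ 1` and `‖w‖² > q` on `[0,s]`, then the matrix exponential of `∫₀ˢ A(σ)dσ`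
(with `A` as in Theorem 4.2/Corollary `phi`) is the scaled rotation
`√((‖w(s)‖² − q)/(‖w(0)‖² − q)) · Rot(φ(s))`. -/
theorem stmt_13 (β : ℝ) (hβ : 0 < β)
    (w : ℝ → EuclideanSpace ℝ (Fin 2)) (hw : ContDiff ℝ 2 w)
    (hODE : ∀ s : ℝ, deriv (deriv w) s = β ^ 2 • w s)
    (W : ℝ) (hWdef : W = (w 0) 0 * (deriv w 0) 1 - (w 0) 1 * (deriv w 0) 0)
    (hW : W ≠ 0)
    (c : ℝ) (hc0 : 0 < c)
    (hc : c ^ 2 = 1 - ‖w 0‖ ^ 2 + β⁻¹ ^ 2 * ‖deriv w 0‖ ^ 2)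
    (q : ℝ) (hq : q = W ^ 2 / (c ^ 2 * β ^ 2))
    (s : ℝ) (hs : 0 < s)
    (hw1 : ∀ σ ∈ Set.Icc 0 s, ‖w σ‖ ≤ 1)
    (hwq : ∀ σ ∈ Set.Icc 0 s, q < ‖w σ‖ ^ 2)
    (A : ℝ → Matrix (Fin 2) (Fin 2) ℝ)
    (hA : ∀ σ : ℝ, A σ = (‖w σ‖ ^ 2 - q)⁻¹ •
      !![(inner ℝ (w σ) (deriv w σ) : ℝ),
          -(W / (c * β)) * Real.sqrt (c ^ 2 * β ^ 2 - ‖deriv w σ‖ ^ 2);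
         (W / (c * β)) * Real.sqrt (c ^ 2 * β ^ 2 - ‖deriv w σ‖ ^ 2),
          (inner ℝ (w σ) (deriv w σ) : ℝ)])
    (φ : ℝ → ℝ)
    (hφ : ∀ t : ℝ, φ t = ∫ σ in (0:ℝ)..t,
      (W / (c * β)) * Real.sqrt (c ^ 2 * β ^ 2 - ‖deriv w σ‖ ^ 2) / (‖w σ‖ ^ 2 - q)) :
    NormedSpace.exp (Matrix.of fun i j => ∫ σ in (0:ℝ)..s, A σ i j) =
      Real.sqrt ((‖w s‖ ^ 2 - q) / (‖w 0‖ ^ 2 - q)) •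
        !![Real.cos (φ s), -Real.sin (φ s); Real.sin (φ s), Real.cos (φ s)] := by
  set a : ℝ := ∫ σ in (0:ℝ)..s, (inner ℝ (w σ) (deriv w σ) : ℝ) / (‖w σ‖ ^ 2 - q) with ha
  have hmat : (Matrix.of fun i j => ∫ σ in (0:ℝ)..s, A σ i j)
      = !![a, -(φ s); φ s, a] := by
    ext i j
    fin_cases i <;> fin_cases j <;>
      · simp only [Matrix.of_apply, hA, Matrix.smul_apply, smul_eq_mul]
        simp only [Fin.mk_zero, Fin.mk_one, Matrix.cons_val', Matrix.cons_val_zero,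
          Matrix.cons_val_one, Matrix.head_cons, Matrix.empty_val', Matrix.cons_val_fin_one,
          Matrix.head_fin_const, Matrix.of_apply]
        simp only [inv_mul_eq_div, neg_mul, neg_div, ha, hφ, intervalIntegral.integral_neg]
  rw [hmat, exp_rot]
  have h0 : (0:ℝ) ∈ Set.Icc (0:ℝ) s := by constructor <;> linarith
  have hss : s ∈ Set.Icc (0:ℝ) s := by constructor <;> linarith
  have hr : 0 < (‖w s‖ ^ 2 - q) / (‖w 0‖ ^ 2 - q) :=
    div_pos (sub_pos.2 (hwq s hss)) (sub_pos.2 (hwq 0 h0))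
  have haval : a = Real.log ((‖w s‖ ^ 2 - q) / (‖w 0‖ ^ 2 - q)) / 2 :=
    log_integral_aux w hw q s hs hwq
  congr 1
  rw [haval, Real.sqrt_eq_rpow, Real.rpow_def_of_pos hr]
  ring_nf
end

section
/- Let w : ℝ → ℝ² be a normalized-curvature trajectory (i.e., twice continuously differentiable with w''(s) = β² w(s) for all s) with Wronskian W ≠ 0 and 𝔠 > 0, and set q := W²/(𝔠²β²). Fix s > 0 and assume that for all σ ∈ [0,s]: ‖w(σ)‖ ≤ 1 and ‖w(σ)‖² > q. Define the 2×2 real matrix A(σ) := (‖w(σ)‖² − q)⁻¹ · [[ w(σ)·w'(σ), −(W/(𝔠β))√(𝔠²β² − ‖w'(σ)‖²) ], [ (W/(𝔠β))√(𝔠²β² − ‖w'(σ)‖²), w(σ)·w'(σ) ]] and φ(s) := ∫₀ˢ (W/(𝔠β)) √(𝔠²β² − ‖w'(σ)‖²) / (‖w(σ)‖² − q) dσ. If Y : [0,s] → ℝ² is differentiable with Y'(σ) = A(σ) Y(σ) for all σ ∈ [0,s], then Y(s) = √( (‖w(s)‖² − q)/(‖w(0)‖² − q) ) · [[cos φ(s),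 −sin φ(s)], [sin φ(s), cos φ(s)]] · Y(0). -/
private lemma ofReal_comp_within' {f : ℝ → ℝ} {u x : ℝ} {s : Set ℝ} (hf : HasDerivWithinAt f u s x) :
    HasDerivWithinAt (fun y : ℝ => ((f y : ℂ))) (u : ℂ) s x := by
  exact hf.ofReal_comp

/-- Along a normalized-curvature trajectory `w` (a C² curve in ℝ² with
`w'' = β² w`) with nonzero Wronskian `W` and `𝔠 > 0`, with `q = W²/(𝔠²β²)`, if
`‖w‖ ≤ 1` and `‖w‖² > q` on `[0,s]`, then any solution `Y` of `Y' = A Y` on `[0,s]`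
satisfies `Y(s) = √((‖w(s)‖² − q)/(‖w(0)‖² − q)) · Rot(φ(s)) · Y(0)`. -/
theorem stmt_14 (β : ℝ) (hβ : 0 < β)
    (w : ℝ → EuclideanSpace ℝ (Fin 2)) (hw : ContDiff ℝ 2 w)
    (hODE : ∀ s : ℝ, deriv (deriv w) s = β ^ 2 • w s)
    (W : ℝ) (hWdef : W = (w 0) 0 * (deriv w 0) 1 - (w 0) 1 * (deriv w 0) 0)
    (hW : W ≠ 0)
    (c : ℝ) (hc0 : 0 < c)
    (hc : c ^ 2 = 1 - ‖w 0‖ ^ 2 + β⁻¹ ^ 2 * ‖deriv w 0‖ ^ 2)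
    (q : ℝ) (hq : q = W ^ 2 / (c ^ 2 * β ^ 2))
    (s : ℝ) (hs : 0 < s)
    (hw1 : ∀ σ ∈ Set.Icc 0 s, ‖w σ‖ ≤ 1)
    (hwq : ∀ σ ∈ Set.Icc 0 s, q < ‖w σ‖ ^ 2)
    (A : ℝ → Matrix (Fin 2) (Fin 2) ℝ)
    (hA : ∀ σ : ℝ, A σ = (‖w σ‖ ^ 2 - q)⁻¹ •
      !![(inner ℝ (w σ) (deriv w σ) : ℝ),
          -(W / (c * β)) * Real.sqrt (c ^ 2 * β ^ 2 - ‖deriv w σ‖ ^ 2);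
         (W / (c * β)) * Real.sqrt (c ^ 2 * β ^ 2 - ‖deriv w σ‖ ^ 2),
          (inner ℝ (w σ) (deriv w σ) : ℝ)])
    (φ : ℝ → ℝ)
    (hφ : ∀ t : ℝ, φ t = ∫ σ in (0:ℝ)..t,
      (W / (c * β)) * Real.sqrt (c ^ 2 * β ^ 2 - ‖deriv w σ‖ ^ 2) / (‖w σ‖ ^ 2 - q))
    (Y : ℝ → Fin 2 → ℝ)
    (hY : ∀ σ ∈ Set.Icc 0 s, HasDerivWithinAt Y ((A σ).mulVec (Y σ)) (Set.Icc 0 s) σ) :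
    Y s = (Real.sqrt ((‖w s‖ ^ 2 - q) / (‖w 0‖ ^ 2 - q)) •
        !![Real.cos (φ s), -Real.sin (φ s); Real.sin (φ s), Real.cos (φ s)]).mulVec
      (Y 0) := by
  have hwdiff : Differentiable ℝ w := hw.differentiable two_ne_zero
  have hw'cont : Continuous (deriv w) := hw.continuous_deriv one_le_two
  set u : ℝ → ℝ := fun σ => ‖w σ‖ ^ 2 - q with hu_def
  have hucont : Continuous u := by
    have : Continuous fun σ => ‖w σ‖ := hwdiff.continuous.norm
    continuity
  have hupos : ∀ σ ∈ Set.Icc (0:ℝ) s, 0 < u σ := fun σ hσ => sub_pos.2 (hwq σ hσ)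
  -- derivative of u
  have hud : ∀ σ : ℝ, HasDerivAt u (2 * (inner ℝ (w σ) (deriv w σ) : ℝ)) σ := by
    intro σ
    have h1 : HasDerivAt (fun t => (inner ℝ (w t) (w t) : ℝ))
        ((inner ℝ (w σ) (deriv w σ) : ℝ) + (inner ℝ (deriv w σ) (w σ) : ℝ)) σ :=
      HasDerivAt.inner ℝ ((hwdiff σ).hasDerivAt) ((hwdiff σ).hasDerivAt)
    simp only [real_inner_self_eq_norm_sq] at h1
    have h2 : HasDerivAt (fun t => ‖w t‖ ^ 2 - q)
        ((inner ℝ (w σ) (deriv w σ) : ℝ) + (inner ℝ (deriv w σ) (w σ) : ℝ)) σ := h1.sub_const q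
    convert h2 using 1
    rw [real_inner_comm (deriv w σ) (w σ)]; ring
  -- the two coefficient functions
  set K : ℝ → ℝ := fun σ => (W / (c * β)) * Real.sqrt (c ^ 2 * β ^ 2 - ‖deriv w σ‖ ^ 2) with hK_def
  have hKcont : Continuous K := by
    apply continuous_const.mul
    exact Real.continuous_sqrt.comp (continuous_const.sub (hw'cont.norm.pow 2))
  set b : ℝ → ℝ := fun σ => K σ / u σ with hb_def
  set a : ℝ → ℝ := fun σ => (inner ℝ (w σ) (deriv w σ) : ℝ) / u σ with ha_def
  -- φ has derivative b on Icc
  have hφfun : φ = fun t => ∫ σ in (0:ℝ)..t, b σ := funext hφ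
  have hV : IsOpen {x : ℝ | u x ≠ 0} := isOpen_ne_fun hucont continuous_const
  have hbcontAt : ∀ x ∈ {x : ℝ | u x ≠ 0}, ContinuousAt b x := fun x hx =>
    (hKcont.continuousAt).div hucont.continuousAt hx
  have hbcontOn : ContinuousOn b (Set.Icc 0 s) := fun x hx =>
    ((hbcontAt x (ne_of_gt (hupos x hx))).continuousWithinAt)
  have hφd : ∀ σ ∈ Set.Icc (0:ℝ) s, HasDerivAt φ (b σ) σ := by
    intro σ hσ
    rw [hφfun]
    have hInt : IntervalIntegrable b MeasureTheory.volume 0 σ := by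
      apply ContinuousOn.intervalIntegrable
      apply hbcontOn.mono
      rw [Set.uIcc_of_le hσ.1]
      exact Set.Icc_subset_Icc le_rfl hσ.2
    exact intervalIntegral.integral_hasDerivAt_right hInt
      (ContinuousAt.stronglyMeasurableAtFilter hV hbcontAt σ (ne_of_gt (hupos σ hσ)))
      (hbcontAt σ (ne_of_gt (hupos σ hσ)))
  -- g
  set g : ℝ → ℂ := fun σ => ((Real.log (u σ) / 2 : ℝ) : ℂ) + (φ σ : ℂ) * Complex.I with hg_def
  have hgd : ∀ σ ∈ Set.Icc (0:ℝ) s, HasDerivAt g ((a σ : ℂ) + (b σ : ℂ) * Complex.I) σ := by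
    intro σ hσ
    have hL : HasDerivAt (fun t => Real.log (u t) / 2) (a σ) σ := by
      have := ((hud σ).log (ne_of_gt (hupos σ hσ))).div_const 2
      refine this.congr_deriv (Eq.symm ?_)
      show (inner ℝ (w σ) (deriv w σ) : ℝ) / u σ = 2 * (inner ℝ (w σ) (deriv w σ) : ℝ) / u σ / 2
      ring
    exact hL.ofReal_comp.add ((hφd σ hσ).ofReal_comp.mul_const Complex.I)
  -- z
  set z : ℝ → ℂ := fun σ => (Y σ 0 : ℂ) + (Y σ 1 : ℂ) * Complex.I with hz_def
  have hzd : ∀ σ ∈ Set.Icc (0:ℝ) s,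
      HasDerivWithinAt z (((a σ : ℂ) + (b σ : ℂ) * Complex.I) * z σ) (Set.Icc 0 s) σ := by
    intro σ hσ
    have hY0 := hasDerivWithinAt_pi.1 (hY σ hσ) 0
    have hY1 := hasDerivWithinAt_pi.1 (hY σ hσ) 1
    have h := (ofReal_comp_within' hY0).add ((ofReal_comp_within' hY1).mul_const Complex.I)
    refine h.congr_deriv (Eq.symm ?_)
    have hM0 : (A σ).mulVec (Y σ) 0 = a σ * Y σ 0 - b σ * Y σ 1 := by
      rw [hA σ]
      simp [Matrix.mulVec, dotProduct, Fin.sum_univ_two, ha_def, hb_def, hK_def]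
      ring
    have hM1 : (A σ).mulVec (Y σ) 1 = b σ * Y σ 0 + a σ * Y σ 1 := by
      rw [hA σ]
      simp [Matrix.mulVec, dotProduct, Fin.sum_univ_two, ha_def, hb_def, hK_def]
      ring
    rw [hM0, hM1]
    show ((a σ : ℂ) + (b σ : ℂ) * Complex.I) * ((Y σ 0 : ℂ) + (Y σ 1 : ℂ) * Complex.I)
      = ((a σ * Y σ 0 - b σ * Y σ 1 : ℝ) : ℂ) + ((b σ * Y σ 0 + a σ * Y σ 1 : ℝ) : ℂ) * Complex.I
    apply Complex.ext <;>
      simp [Complex.add_re, Complex.add_im, Complex.mul_re, Complex.mul_im] <;> ring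
  -- h constant
  set h : ℝ → ℂ := fun σ => Complex.exp (-g σ) * z σ with hh_def
  have hhd : ∀ σ ∈ Set.Icc (0:ℝ) s, HasDerivWithinAt h 0 (Set.Icc 0 s) σ := by
    intro σ hσ
    have he : HasDerivWithinAt (fun t => Complex.exp (-g t))
        (-((a σ : ℂ) + (b σ : ℂ) * Complex.I) * Complex.exp (-g σ)) (Set.Icc 0 s) σ := by
      have := (((hgd σ hσ).hasDerivWithinAt (s := Set.Icc 0 s)).neg).cexp
      exact this.congr_deriv (by simp only [Pi.neg_apply]; ring)
    have := he.mul (hzd σ hσ)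
    exact this.congr_deriv (by ring)
  have hconst : h s = h 0 := by
    have hdiff : DifferentiableOn ℝ h (Set.Icc 0 s) := fun x hx =>
      (hhd x hx).differentiableWithinAt
    have hderiv : ∀ x ∈ Set.Ico (0:ℝ) s, derivWithin h (Set.Icc 0 s) x = 0 := fun x hx =>
      (hhd x (Set.Ico_subset_Icc_self hx)).derivWithin
        (uniqueDiffOn_Icc hs x (Set.Ico_subset_Icc_self hx))
    exact constant_of_derivWithin_zero hdiff hderiv s (Set.mem_Icc.2 ⟨le_of_lt hs, le_rfl⟩)
  -- unravel
  have hs_mem : s ∈ Set.Icc (0:ℝ) s := Set.mem_Icc.2 ⟨le_of_lt hs, le_rfl⟩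
  have h0_mem : (0:ℝ) ∈ Set.Icc (0:ℝ) s := Set.mem_Icc.2 ⟨le_rfl, le_of_lt hs⟩
  have hzs : z s = Complex.exp (g s - g 0) * z 0 := by
    have h1 : Complex.exp (-g s) * z s = Complex.exp (-g 0) * z 0 := hconst
    have h2 := congrArg (fun x => Complex.exp (g s) * x) h1
    simp only [← mul_assoc, ← Complex.exp_add] at h2
    simpa [sub_eq_add_neg] using h2
  have hφ0 : φ 0 = 0 := by rw [hφfun]; simp
  -- compute exp (g s - g 0)
  set r : ℝ := Real.sqrt (u s / u 0) with hr_def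
  have hexp : Complex.exp (g s - g 0) =
      ((r * Real.cos (φ s) : ℝ) : ℂ) + ((r * Real.sin (φ s) : ℝ) : ℂ) * Complex.I := by
    have hgs0 : g s - g 0 = (((Real.log (u s) - Real.log (u 0)) / 2 : ℝ) : ℂ)
        + (φ s : ℂ) * Complex.I := by
      rw [hg_def]; simp [hφ0]; push_cast; ring
    rw [hgs0, Complex.exp_add]
    have hr : Real.exp ((Real.log (u s) - Real.log (u 0)) / 2) = r := by
      rw [hr_def, Real.sqrt_eq_rpow,
        Real.rpow_def_of_pos (div_pos (hupos s hs_mem) (hupos 0 h0_mem)),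
        Real.log_div (ne_of_gt (hupos s hs_mem)) (ne_of_gt (hupos 0 h0_mem))]
      ring_nf
    rw [← Complex.ofReal_exp, hr]
    rw [show ((φ s : ℂ) * Complex.I) = (φ s : ℂ) * Complex.I from rfl, Complex.exp_mul_I]
    push_cast
    ring
  -- extract components
  have hz0re : (z 0).re = Y 0 0 := by simp [hz_def]
  have hkey : (Y s 0 : ℂ) + (Y s 1 : ℂ) * Complex.I =
      (((r * Real.cos (φ s) : ℝ) : ℂ) + ((r * Real.sin (φ s) : ℝ) : ℂ) * Complex.I) *
        ((Y 0 0 : ℂ) + (Y 0 1 : ℂ) * Complex.I) := by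
    rw [← hexp]; exact hzs
  have h0 : Y s 0 = r * Real.cos (φ s) * Y 0 0 - r * Real.sin (φ s) * Y 0 1 := by
    have := congrArg Complex.re hkey
    simp [Complex.add_re, Complex.mul_re, Complex.cos_ofReal_re, Complex.sin_ofReal_re] at this
    linarith
  have h1 : Y s 1 = r * Real.sin (φ s) * Y 0 0 + r * Real.cos (φ s) * Y 0 1 := by
    have := congrArg Complex.im hkey
    simp [Complex.add_im, Complex.mul_im, Complex.cos_ofReal_re, Complex.sin_ofReal_re] at this
    linarith
  have hgoal0 : ((Real.sqrt (u s / u 0) •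
        !![Real.cos (φ s), -Real.sin (φ s); Real.sin (φ s), Real.cos (φ s)]).mulVec (Y 0)) 0
      = r * Real.cos (φ s) * Y 0 0 - r * Real.sin (φ s) * Y 0 1 := by
    simp [Matrix.mulVec, dotProduct, Fin.sum_univ_two, Matrix.smul_apply, hr_def]
    ring
  have hgoal1 : ((Real.sqrt (u s / u 0) •
        !![Real.cos (φ s), -Real.sin (φ s); Real.sin (φ s), Real.cos (φ s)]).mulVec (Y 0)) 1
      = r * Real.sin (φ s) * Y 0 0 + r * Real.cos (φ s) * Y 0 1 := by
    simp [Matrix.mulVec, dotProduct, Fin.sum_univ_two, Matrix.smul_apply, hr_def]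
  funext i
  fin_cases i
  · exact h0.trans hgoal0.symm
  · exact h1.trans hgoal1.symm
end

section
/- Let w : ℝ → ℝ² be a normalized-curvature trajectory (i.e., twice continuously differentiable with w''(s) = β² w(s) for all s) with Wronskian W ≠ 0 and 𝔠 > 0. Let S > 0 be such that for all σ ∈ [0,S]: ‖w(σ)‖ ≤ 1 and 𝔠²β² ‖w(σ)‖² > W². Define φ(s) := ∫₀ˢ (W/(𝔠β)) √(𝔠²β² − ‖w'(σ)‖²) / (‖w(σ)‖² − W²/(𝔠²β²)) dσ for s ∈ [0,S]. Then |φ(s)| < π for all s ∈ [0,S]. -/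
set_option maxHeartbeats 4000000
open Real Set intervalIntegral MeasureTheory

noncomputable def gcmp (A2 C : ℝ) (x : ℝ) : ℝ :=
  Real.sqrt (A2 + C) / Real.sqrt A2 *
      Real.arcsin (Real.sqrt (A2 + C) * x / (Real.sqrt A2 * Real.sqrt (x ^ 2 + C))) -
    Real.sqrt C / Real.sqrt A2 * Real.arcsin (x / Real.sqrt A2)

lemma gcmp_hasDerivAt (A2 C : ℝ) (hA : 0 < A2) (hC : 0 < C) {x : ℝ} (hx : x ^ 2 < A2) :
    HasDerivAt (gcmp A2 C)
      (Real.sqrt C * Real.sqrt (A2 - x ^ 2) / (Real.sqrt A2 * (x ^ 2 + C))) x := by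
  have hxC : 0 < x ^ 2 + C := by positivity
  have hAx : 0 < A2 - x ^ 2 := by linarith
  unfold gcmp
  set sA := Real.sqrt A2 with hsAdef
  set sC := Real.sqrt C with hsCdef
  set sAC := Real.sqrt (A2 + C) with hsACdef
  set sxC := Real.sqrt (x ^ 2 + C) with hsxCdef
  set sAx := Real.sqrt (A2 - x ^ 2) with hsAxdef
  have hsA : 0 < sA := Real.sqrt_pos.2 hA
  have hsC : 0 < sC := Real.sqrt_pos.2 hC
  have hsAC : 0 < sAC := Real.sqrt_pos.2 (by linarith)
  have hsxC : 0 < sxC := Real.sqrt_pos.2 hxC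
  have hsAx : 0 < sAx := Real.sqrt_pos.2 hAx
  have hsA2 : sA ^ 2 = A2 := Real.sq_sqrt hA.le
  have hsC2 : sC ^ 2 = C := Real.sq_sqrt hC.le
  have hsAC2 : sAC ^ 2 = A2 + C := Real.sq_sqrt (by linarith)
  have hsxC2 : sxC ^ 2 = x ^ 2 + C := Real.sq_sqrt hxC.le
  have hsAx2 : sAx ^ 2 = A2 - x ^ 2 := Real.sq_sqrt hAx.le
  have hq : HasDerivAt (fun y : ℝ => Real.sqrt (y ^ 2 + C)) (x / sxC) x := by
    have h1 : HasDerivAt (fun y : ℝ => y ^ 2 + C) (2 * x) x := by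
      simpa using ((hasDerivAt_pow 2 x).add_const C)
    have h2 := h1.sqrt hxC.ne'
    rw [← hsxCdef] at h2
    convert h2 using 1
    field_simp
  have harg : HasDerivAt (fun y : ℝ => sAC * y / (sA * Real.sqrt (y ^ 2 + C)))
      (sAC * C / (sA * ((x ^ 2 + C) * sxC))) x := by
    have hnum : HasDerivAt (fun y : ℝ => sAC * y) sAC x := by
      simpa using (hasDerivAt_id x).const_mul sAC
    have hden : HasDerivAt (fun y : ℝ => sA * Real.sqrt (y ^ 2 + C))
        (sA * (x / sxC)) x := hq.const_mul _
    have hd := hnum.div hden (by rw [hsxCdef] at *; positivity)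
    have hnum2 : sAC * (sA * sxC) - sAC * x * (sA * (x / sxC)) = sAC * sA * C / sxC := by
      field_simp
      linear_combination hsxC2
    rw [hnum2] at hd
    refine hd.congr_deriv (Eq.symm ?_)
    rw [div_div, div_eq_div_iff (by positivity) (by positivity)]
    linear_combination (sAC * C * sA ^ 2 * sxC) * hsxC2
  set z : ℝ := sAC * x / (sA * sxC) with hz
  have hz2 : z ^ 2 < 1 := by
    rw [hz, div_pow, mul_pow, mul_pow, hsAC2, hsA2, hsxC2, div_lt_one (by positivity)]
    nlinarith
  have hz1 : |z| < 1 := by nlinarith [sq_abs z, abs_nonneg z]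
  have hzlt := abs_lt.1 hz1
  have hzsq : Real.sqrt (1 - z ^ 2) = sC * sAx / (sA * sxC) := by
    have expand : (1 : ℝ) - z ^ 2 = C * (A2 - x ^ 2) / (A2 * (x ^ 2 + C)) := by
      rw [hz, div_pow, mul_pow, mul_pow, hsAC2, hsA2, hsxC2]
      field_simp
      ring
    have expand2 : (sC * sAx / (sA * sxC)) ^ 2 = C * (A2 - x ^ 2) / (A2 * (x ^ 2 + C)) := by
      rw [div_pow, mul_pow, mul_pow, hsC2, hsAx2, hsA2, hsxC2]
    rw [expand, ← expand2]
    exact Real.sqrt_sq (by positivity)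
  have harc1 : HasDerivAt (fun y : ℝ => Real.arcsin (sAC * y / (sA * Real.sqrt (y ^ 2 + C))))
      (1 / Real.sqrt (1 - z ^ 2) * (sAC * C / (sA * ((x ^ 2 + C) * sxC)))) x :=
    HasDerivAt.comp (h₂ := Real.arcsin) x (Real.hasDerivAt_arcsin (ne_of_gt hzlt.1) (ne_of_lt hzlt.2)) harg
  have hx1 : |x / sA| < 1 := by
    rw [abs_div, abs_of_pos hsA, div_lt_one hsA]
    nlinarith [abs_nonneg x, sq_abs x]
  have hxlt := abs_lt.1 hx1
  have harc2 : HasDerivAt (fun y : ℝ => Real.arcsin (y / sA))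
      (1 / Real.sqrt (1 - (x / sA) ^ 2) * (1 / sA)) x := by
    have hdiv : HasDerivAt (fun y : ℝ => y / sA) (1 / sA) x := by
      simpa using (hasDerivAt_id x).div_const sA
    exact (Real.hasDerivAt_arcsin (ne_of_gt hxlt.1) (ne_of_lt hxlt.2)).comp x hdiv
  have hx2sq : Real.sqrt (1 - (x / sA) ^ 2) = sAx / sA := by
    have expand : (1 : ℝ) - (x / sA) ^ 2 = (A2 - x ^ 2) / A2 := by
      rw [div_pow, hsA2]
      field_simp
    have expand2 : (sAx / sA) ^ 2 = (A2 - x ^ 2) / A2 := by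
      rw [div_pow, hsAx2, hsA2]
    rw [expand, ← expand2]
    exact Real.sqrt_sq (by positivity)
  have htot := (harc1.const_mul (sAC / sA)).sub (harc2.const_mul (sC / sA))
  refine htot.congr_deriv (Eq.symm ?_)
  rw [hzsq, hx2sq]
  have T1 : sAC / sA * (1 / (sC * sAx / (sA * sxC)) * (sAC * C / (sA * ((x ^ 2 + C) * sxC)))) =
      sAC ^ 2 * C / (sC * sAx * (x ^ 2 + C) * sA) := by
    field_simp
  have T2 : sC / sA * (1 / (sAx / sA) * (1 / sA)) = sC / (sA * sAx) := by
    rw [one_div_div]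
    field_simp
  have key : sAC ^ 2 * C = sC ^ 2 * sAx ^ 2 + sC ^ 2 * (x ^ 2 + C) := by
    linear_combination C * hsAC2 + (-(sAx ^ 2) - (x ^ 2 + C)) * hsC2 - C * hsAx2
  rw [T1, T2, key]
  field_simp
  ring
lemma gcmp_continuous (A2 C : ℝ) (hA : 0 < A2) (hC : 0 < C) : Continuous (gcmp A2 C) := by
  have h1 : Continuous fun y : ℝ => Real.sqrt A2 * Real.sqrt (y ^ 2 + C) :=
    continuous_const.mul (Real.continuous_sqrt.comp ((continuous_pow 2).add continuous_const))
  have h2 : Continuous fun y : ℝ =>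
      Real.sqrt (A2 + C) * y / (Real.sqrt A2 * Real.sqrt (y ^ 2 + C)) := by
    refine (continuous_const.mul continuous_id).div h1 fun y => ?_
    have : 0 < y ^ 2 + C := by positivity
    positivity
  exact (continuous_const.mul (Real.continuous_arcsin.comp h2)).sub
    (continuous_const.mul (Real.continuous_arcsin.comp (continuous_id.div_const _)))

lemma gcmp_monotoneOn (A2 C : ℝ) (hA : 0 < A2) (hC : 0 < C) :
    MonotoneOn (gcmp A2 C) (Icc (-Real.sqrt A2) (Real.sqrt A2)) := by
  refine monotoneOn_of_hasDerivWithinAt_nonneg (f' := fun x =>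
      Real.sqrt C * Real.sqrt (A2 - x ^ 2) / (Real.sqrt A2 * (x ^ 2 + C)))
    (convex_Icc _ _) ((gcmp_continuous A2 C hA hC).continuousOn) (fun x hx => ?_) (fun x hx => ?_)
  · rw [interior_Icc] at hx
    have hx2 : x ^ 2 < A2 := by
      have := sq_lt_sq' hx.1 hx.2
      rwa [Real.sq_sqrt hA.le] at this
    exact (gcmp_hasDerivAt A2 C hA hC hx2).hasDerivWithinAt
  · have h1 : (0:ℝ) < x ^ 2 + C := by positivity
    positivity

lemma gcmp_abs_le (A2 C : ℝ) (hA : 0 < A2) (hC : 0 < C) {x : ℝ} (hx : x ^ 2 ≤ A2) :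
    |gcmp A2 C x| ≤ (Real.sqrt (A2 + C) - Real.sqrt C) / Real.sqrt A2 * (Real.pi / 2) := by
  have hsA : 0 < Real.sqrt A2 := Real.sqrt_pos.2 hA
  have hsA2 : Real.sqrt A2 ^ 2 = A2 := Real.sq_sqrt hA.le
  have hmem : x ∈ Icc (-Real.sqrt A2) (Real.sqrt A2) := by
    constructor
    · nlinarith [abs_nonneg x, sq_abs x, neg_abs_le x, hsA2, hx]
    · nlinarith [abs_nonneg x, sq_abs x, le_abs_self x, hsA2, hx]
  have htop : gcmp A2 C (Real.sqrt A2) =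
      (Real.sqrt (A2 + C) - Real.sqrt C) / Real.sqrt A2 * (Real.pi / 2) := by
    unfold gcmp
    rw [hsA2]
    rw [show Real.sqrt (A2 + C) * Real.sqrt A2 / (Real.sqrt A2 * Real.sqrt (A2 + C)) = 1 by
      rw [div_eq_one_iff_eq (by positivity)]; ring]
    rw [div_self hsA.ne', Real.arcsin_one]
    ring
  have hbot : gcmp A2 C (-Real.sqrt A2) =
      -((Real.sqrt (A2 + C) - Real.sqrt C) / Real.sqrt A2 * (Real.pi / 2)) := by
    unfold gcmp
    rw [neg_sq, hsA2]
    rw [show Real.sqrt (A2 + C) * -Real.sqrt A2 / (Real.sqrt A2 * Real.sqrt (A2 + C)) = -1 by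
      rw [div_eq_iff (by positivity)]; ring]
    rw [show -Real.sqrt A2 / Real.sqrt A2 = -1 by rw [div_eq_iff hsA.ne']; ring]
    rw [Real.arcsin_neg_one]
    ring
  have hmono := gcmp_monotoneOn A2 C hA hC
  have h1 := hmono (left_mem_Icc.2 (by linarith)) hmem hmem.1
  have h2 := hmono hmem (right_mem_Icc.2 (by linarith)) hmem.2
  rw [htop] at h2
  rw [hbot] at h1
  exact abs_le.2 ⟨by linarith, h2⟩

lemma gcmp_total_lt (A2 C : ℝ) (hA : 0 < A2) (hC : 0 < C) :
    2 * ((Real.sqrt (A2 + C) - Real.sqrt C) / Real.sqrt A2 * (Real.pi / 2)) < Real.pi := by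
  have hsA : 0 < Real.sqrt A2 := Real.sqrt_pos.2 hA
  have hsC : 0 < Real.sqrt C := Real.sqrt_pos.2 hC
  have key : Real.sqrt (A2 + C) < Real.sqrt A2 + Real.sqrt C := by
    nlinarith [Real.sq_sqrt hA.le, Real.sq_sqrt hC.le, Real.sq_sqrt (by linarith : (0:ℝ) ≤ A2 + C),
      Real.sqrt_nonneg (A2 + C)]
  have h1 : (Real.sqrt (A2 + C) - Real.sqrt C) / Real.sqrt A2 < 1 := by
    rw [div_lt_one hsA]; linarith
  nlinarith [Real.pi_pos]

lemma aux_u_hasDeriv (β e m : ℝ) (hβ : 0 < β) (n p : ℝ → ℝ) (σ : ℝ)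
    (hn' : HasDerivAt n (2 * p σ) σ) (hp' : HasDerivAt p (2 * β ^ 2 * (n σ - m)) σ)
    (hpn : p σ ^ 2 = β ^ 2 * ((n σ - m) ^ 2 - e ^ 2)) (hpos : 0 < n σ - m + e) :
    HasDerivAt (fun τ => p τ / (β * Real.sqrt (n τ - m + e)))
      (β * Real.sqrt (n σ - m + e)) σ := by
  have hs : 0 < Real.sqrt (n σ - m + e) := Real.sqrt_pos.2 hpos
  have hs2 : Real.sqrt (n σ - m + e) ^ 2 = n σ - m + e := Real.sq_sqrt hpos.le
  have h1 : HasDerivAt (fun τ => n τ - m + e) (2 * p σ) σ := (hn'.sub_const m).add_const e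
  have hvd := h1.sqrt hpos.ne'
  have hd := hp'.div (hvd.const_mul β) (mul_pos hβ hs).ne'
  refine hd.congr_deriv (Eq.symm ?_)
  rw [eq_div_iff (pow_ne_zero 2 (mul_pos hβ hs).ne')]
  field_simp [hs.ne']
  linear_combination hpn + (β ^ 2 * (Real.sqrt (n σ - m + e) ^ 2 + (n σ - m + e)) - 2 * β ^ 2 * (n σ - m)) * hs2


lemma aux_frac (Wa cc X sA sC bv nk : ℝ) (hc : 0 < cc) (hnk : 0 < nk) (hX : 0 ≤ X)
    (hsA : 0 < sA) (hk : Wa * sA ≤ sC * bv * cc) :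
    Wa / cc * X / nk ≤ sC * X / (sA * nk) * bv := by
  have h1 : Wa / cc * X / nk = Wa * X / (cc * nk) := by ring
  have h2 : sC * X / (sA * nk) * bv = sC * X * bv / (sA * nk) := by ring
  rw [h1, h2, div_le_div_iff₀ (by positivity) (by positivity)]
  nlinarith [mul_le_mul_of_nonneg_right hk (mul_nonneg hX hnk.le)]

/-- Along a normalized-curvature trajectory `w` (a C² curve in ℝ² with
`w'' = β² w`) with nonzero Wronskian `W` and `𝔠 > 0`, if `‖w‖ ≤ 1` and
`𝔠²β²‖w‖² > W²` on `[0,S]`, then the angle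
`φ(s) = ∫₀ˢ (W/(𝔠β))√(𝔠²β² − ‖w'‖²)/(‖w‖² − W²/(𝔠²β²)) dσ` satisfies `|φ(s)| < π`
for all `s ∈ [0,S]`. -/
theorem stmt_15 (β : ℝ) (hβ : 0 < β)
    (w : ℝ → EuclideanSpace ℝ (Fin 2)) (hw : ContDiff ℝ 2 w)
    (hODE : ∀ s : ℝ, deriv (deriv w) s = β ^ 2 • w s)
    (W : ℝ) (hWdef : W = (w 0) 0 * (deriv w 0) 1 - (w 0) 1 * (deriv w 0) 0)
    (hW : W ≠ 0)
    (c : ℝ) (hc0 : 0 < c)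
    (hc : c ^ 2 = 1 - ‖w 0‖ ^ 2 + β⁻¹ ^ 2 * ‖deriv w 0‖ ^ 2)
    (S : ℝ) (hS : 0 < S)
    (hw1 : ∀ σ ∈ Set.Icc 0 S, ‖w σ‖ ≤ 1)
    (hwq : ∀ σ ∈ Set.Icc 0 S, W ^ 2 < c ^ 2 * β ^ 2 * ‖w σ‖ ^ 2)
    (φ : ℝ → ℝ)
    (hφ : ∀ t : ℝ, φ t = ∫ σ in (0:ℝ)..t,
      (W / (c * β)) * Real.sqrt (c ^ 2 * β ^ 2 - ‖deriv w σ‖ ^ 2) /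
        (‖w σ‖ ^ 2 - W ^ 2 / (c ^ 2 * β ^ 2))) :
    ∀ s ∈ Set.Icc 0 S, |φ s| < Real.pi := by
  -- ## Smoothness facts
  have hw' : ContDiff ℝ ((1:WithTop ℕ∞) + 1) w := by
    rw [show ((1:WithTop ℕ∞) + 1) = 2 by norm_num]
    exact hw
  have hdw : Differentiable ℝ w := (contDiff_succ_iff_deriv.mp hw').1
  have hwd1 : ContDiff ℝ 1 (deriv w) := (contDiff_succ_iff_deriv.mp hw').2.2
  have hdw' : Differentiable ℝ (deriv w) := hwd1.differentiable one_ne_zero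
  have hcwd : Continuous (deriv w) := hdw'.continuous
  have hcw : Continuous w := hdw.continuous
  -- ## Coordinates
  have hcoord : ∀ (f : ℝ → EuclideanSpace ℝ (Fin 2)), Differentiable ℝ f → ∀ (σ : ℝ) (i : Fin 2),
      HasDerivAt (fun s => f s i) (deriv f σ i) σ := by
    intro f hf σ i
    have h := (EuclideanSpace.proj i).hasFDerivAt.comp_hasDerivAt σ (hf σ).hasDerivAt
    simp at h
    exact h
  set f0 : ℝ → ℝ := fun σ => w σ 0 with hf0def
  set f1 : ℝ → ℝ := fun σ => w σ 1 with hf1def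
  set g0 : ℝ → ℝ := fun σ => deriv w σ 0 with hg0def
  set g1 : ℝ → ℝ := fun σ => deriv w σ 1 with hg1def
  have hf0' : ∀ σ, HasDerivAt f0 (g0 σ) σ := fun σ => hcoord w hdw σ 0
  have hf1' : ∀ σ, HasDerivAt f1 (g1 σ) σ := fun σ => hcoord w hdw σ 1
  have hg0' : ∀ σ, HasDerivAt g0 (β ^ 2 * f0 σ) σ := by
    intro σ
    have h := hcoord (deriv w) hdw' σ 0
    rw [hODE σ] at h
    simpa using h
  have hg1' : ∀ σ, HasDerivAt g1 (β ^ 2 * f1 σ) σ := by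
    intro σ
    have h := hcoord (deriv w) hdw' σ 1
    rw [hODE σ] at h
    simpa using h
  have hcf0 : Continuous f0 := by fun_prop
  have hcf1 : Continuous f1 := by fun_prop
  have hcg0 : Continuous g0 := by
    have : Continuous fun σ => deriv w σ 0 := by fun_prop
    exact this
  have hcg1 : Continuous g1 := by
    have : Continuous fun σ => deriv w σ 1 := by fun_prop
    exact this
  -- ## norms in coordinates
  have normsq : ∀ x : EuclideanSpace ℝ (Fin 2), ‖x‖ ^ 2 = x 0 ^ 2 + x 1 ^ 2 := by
    intro x
    rw [EuclideanSpace.norm_eq, Real.sq_sqrt (by positivity)]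
    simp [Fin.sum_univ_two, sq_abs]
  set n : ℝ → ℝ := fun σ => f0 σ ^ 2 + f1 σ ^ 2 with hndef
  set p : ℝ → ℝ := fun σ => f0 σ * g0 σ + f1 σ * g1 σ with hpdef
  have hn_eq : ∀ σ, ‖w σ‖ ^ 2 = n σ := fun σ => normsq (w σ)
  have hd_eq : ∀ σ, ‖deriv w σ‖ ^ 2 = g0 σ ^ 2 + g1 σ ^ 2 := fun σ => normsq _
  have hcn : Continuous n := by fun_prop
  have hcp : Continuous p := by fun_prop
  have hn' : ∀ σ, HasDerivAt n (2 * p σ) σ := by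
    intro σ
    have h := ((hf0' σ).pow 2).add ((hf1' σ).pow 2)
    refine h.congr_deriv (Eq.symm ?_)
    simp [hpdef]
    ring
  -- ## Wronskian is constant
  have hWr : ∀ σ, f0 σ * g1 σ - f1 σ * g0 σ = W := by
    have hWd : ∀ σ, HasDerivAt (fun σ => f0 σ * g1 σ - f1 σ * g0 σ) 0 σ := by
      intro σ
      have h := ((hf0' σ).mul (hg1' σ)).sub ((hf1' σ).mul (hg0' σ))
      refine h.congr_deriv (Eq.symm ?_)
      ring
    intro σ
    have h := is_const_of_deriv_eq_zero (f := fun σ => f0 σ * g1 σ - f1 σ * g0 σ)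
      (fun τ => (hWd τ).differentiableAt) (fun τ => (hWd τ).deriv) σ 0
    rw [h, hWdef]
  -- ## Energy conservation : g0²+g1² = β²(n-1+c²)
  have hE : ∀ σ, g0 σ ^ 2 + g1 σ ^ 2 = β ^ 2 * (n σ - 1 + c ^ 2) := by
    have hEd : ∀ σ, HasDerivAt (fun σ => n σ - β⁻¹ ^ 2 * (g0 σ ^ 2 + g1 σ ^ 2)) 0 σ := by
      intro σ
      have h := (hn' σ).sub ((((hg0' σ).pow 2).add ((hg1' σ).pow 2)).const_mul (β⁻¹ ^ 2))
      refine h.congr_deriv (Eq.symm ?_)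
      simp [hpdef]
      field_simp
      ring
    intro σ
    have h := is_const_of_deriv_eq_zero (f := fun σ => n σ - β⁻¹ ^ 2 * (g0 σ ^ 2 + g1 σ ^ 2))
      (fun τ => (hEd τ).differentiableAt) (fun τ => (hEd τ).deriv) σ 0
    have h0 : n 0 - β⁻¹ ^ 2 * (g0 0 ^ 2 + g1 0 ^ 2) = 1 - c ^ 2 := by
      rw [hc, hn_eq 0, hd_eq 0]
      ring
    rw [h0] at h
    have hβ0 : β ≠ 0 := hβ.ne'
    field_simp at h ⊢
    nlinarith [h]
  -- ## constants
  have hβ0 : β ≠ 0 := hβ.ne'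
  have hcb2 : (0:ℝ) < c ^ 2 * β ^ 2 := by positivity
  have hW2 : (0:ℝ) < W ^ 2 := by positivity
  set m : ℝ := (1 - c ^ 2) / 2 with hmdef
  have hm1 : 2 * m + c ^ 2 = 1 := by rw [hmdef]; ring
  have hWβ : W / β ≠ 0 := div_ne_zero hW hβ0
  have hmW : (0:ℝ) < m ^ 2 + (W / β) ^ 2 := by positivity
  set e : ℝ := Real.sqrt (m ^ 2 + (W / β) ^ 2) with hedef
  have he2 : e ^ 2 = m ^ 2 + (W / β) ^ 2 := Real.sq_sqrt hmW.le
  have he0 : 0 < e := Real.sqrt_pos.2 hmW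
  have hem : |m| ≤ e := by
    rw [hedef, show |m| = Real.sqrt (m ^ 2) by rw [Real.sqrt_sq_eq_abs]]
    exact Real.sqrt_le_sqrt (by nlinarith [sq_nonneg (W / β)])
  have hem' : -e ≤ m ∧ m ≤ e := abs_le.1 hem
  set k : ℝ := W ^ 2 / (c ^ 2 * β ^ 2) with hkdef
  have hk0 : 0 < k := by positivity
  have hkc : k * c ^ 2 = (W / β) ^ 2 := by
    rw [hkdef]; field_simp
  have h0S : (0:ℝ) ∈ Set.Icc (0:ℝ) S := ⟨le_refl 0, hS.le⟩
  have hn0le : n 0 ≤ 1 := by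
    have h1 := hw1 0 h0S
    rw [← hn_eq 0]
    nlinarith [norm_nonneg (w 0)]
  have hk1 : k < 1 := by
    have h2 := hwq 0 h0S
    rw [hn_eq 0, hkdef] at *
    rw [div_lt_one hcb2]
    nlinarith
  -- pointwise facts on [0, S]
  have hnk : ∀ σ ∈ Set.Icc 0 S, k < n σ := by
    intro σ hσ
    have h2 := hwq σ hσ
    rw [hn_eq σ] at h2
    rw [hkdef, div_lt_iff₀ hcb2]
    nlinarith
  have hn1 : ∀ σ ∈ Set.Icc 0 S, n σ ≤ 1 := by
    intro σ hσ
    have h1 := hw1 σ hσ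
    rw [← hn_eq σ]
    nlinarith [norm_nonneg (w σ)]
  have hpn : ∀ σ, p σ ^ 2 = β ^ 2 * ((n σ - m) ^ 2 - e ^ 2) := by
    intro σ
    have hL : W ^ 2 + p σ ^ 2 = n σ * (g0 σ ^ 2 + g1 σ ^ 2) := by
      rw [← hWr σ]
      simp only [hpdef, hndef]
      ring
    have hD := hE σ
    have hWβ2 : (W / β) ^ 2 * β ^ 2 = W ^ 2 := by field_simp
    have hββ : β * β⁻¹ = 1 := mul_inv_cancel₀ hβ0
    rw [he2]
    linear_combination -hL + n σ * hD - hWβ2 - β ^ 2 * (n σ - m - (1 - c^2)/2 + m) * hmdef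
      - 2 * (f0 σ * g1 σ - f1 σ * g0 σ + W) * (hWr σ) + 2 * W ^ 2 * (β * β⁻¹ + 1) * hββ
  have hCp : 0 < m + e - k := by
    nlinarith [he2, hkc, mul_pos hk0 (by linarith : (0:ℝ) < 1 - k), he0, hm1]
  have hkme : k - m < e := by linarith
  have hmek : m - e < k := by
    nlinarith [he2, hkc, mul_pos hk0 (by linarith : (0:ℝ) < 1 - k), he0, hm1]
  have hnme : ∀ σ ∈ Set.Icc 0 S, m + e ≤ n σ := by
    intro σ hσ
    have h1 := hpn σ
    have h2 := hnk σ hσ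
    by_contra hcon
    push_neg at hcon
    nlinarith [sq_nonneg (p σ), h1, pow_pos hβ 2,
      mul_pos (show 0 < e - (n σ - m) by linarith) (show 0 < e + (n σ - m) by linarith)]
  -- derivative of p
  have hp' : ∀ σ, HasDerivAt p (2 * β ^ 2 * (n σ - m)) σ := by
    intro σ
    have h := ((hf0' σ).mul (hg0' σ)).add ((hf1' σ).mul (hg1' σ))
    refine h.congr_deriv (Eq.symm ?_)
    have hD := hE σ
    simp only [hpdef, hndef] at *
    linear_combination -hD - 2 * β ^ 2 * hmdef
  -- ## the functions v and u
  set v : ℝ → ℝ := fun σ => Real.sqrt (n σ - m + e) with hvdef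
  set u : ℝ → ℝ := fun σ => p σ / (β * v σ) with hudef
  have hvpos : ∀ σ ∈ Set.Icc 0 S, 0 < v σ := by
    intro σ hσ
    exact Real.sqrt_pos.2 (by nlinarith [hnme σ hσ, he0])
  have hv2 : ∀ σ ∈ Set.Icc 0 S, v σ ^ 2 = n σ - m + e := by
    intro σ hσ
    exact Real.sq_sqrt (by nlinarith [hnme σ hσ, he0])
  have hv2e : ∀ σ ∈ Set.Icc 0 S, 2 * e ≤ v σ ^ 2 := by
    intro σ hσ
    rw [hv2 σ hσ]
    have := hnme σ hσ
    linarith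
  have hu2 : ∀ σ ∈ Set.Icc 0 S, u σ ^ 2 = n σ - m - e := by
    intro σ hσ
    have hv := hv2 σ hσ
    have hvp := hvpos σ hσ
    rw [hudef]
    simp only
    rw [div_pow, mul_pow, hv]
    rw [hpn σ]
    rw [div_eq_iff (mul_pos (pow_pos hβ 2) (by nlinarith [he0] : (0:ℝ) < n σ - m + e)).ne']
    ring
  have hu' : ∀ σ ∈ Set.Icc 0 S, HasDerivAt u (β * v σ) σ := by
    intro σ hσ
    have hpos : 0 < n σ - m + e := by nlinarith [hnme σ hσ, he0]
    have h := aux_u_hasDeriv β e m hβ n p σ (hn' σ) (hp' σ) (hpn σ) hpos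
    simp only [hudef, hvdef]
    exact h
  have hcu : ContinuousOn u (Set.Icc 0 S) := by
    have hcv : ContinuousOn v (Set.Icc 0 S) :=
      (Real.continuous_sqrt.comp ((hcn.sub continuous_const).add continuous_const)).continuousOn
    exact (hcp.continuousOn).div (continuousOn_const.mul hcv)
      (fun σ hσ => by have := hvpos σ hσ; positivity)
  have huA : ∀ σ ∈ Set.Icc 0 S, u σ ^ 2 ≤ 1 - m - e := by
    intro σ hσ
    rw [hu2 σ hσ]
    have := hn1 σ hσ
    linarith
  -- ## fix s
  intro s hs
  rcases eq_or_lt_of_le hs.1 with hs0 | hs0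
  · rw [← hs0, hφ 0, intervalIntegral.integral_same, abs_zero]
    exact Real.pi_pos
  have hsub : Set.Icc 0 s ⊆ Set.Icc 0 S := Set.Icc_subset_Icc le_rfl hs.2
  have h0s : (0:ℝ) ∈ Set.Icc 0 s := ⟨le_refl 0, hs0.le⟩
  have hss : s ∈ Set.Icc 0 s := ⟨hs0.le, le_refl s⟩
  have humono : StrictMonoOn u (Set.Icc 0 s) := by
    refine strictMonoOn_of_hasDerivWithinAt_pos (f' := fun σ => β * v σ) (convex_Icc 0 s)
      (hcu.mono hsub) (fun σ hσ => ?_) (fun σ hσ => ?_)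
    · rw [interior_Icc] at hσ
      exact (hu' σ (hsub ⟨hσ.1.le, hσ.2.le⟩)).hasDerivWithinAt
    · rw [interior_Icc] at hσ
      exact mul_pos hβ (hvpos σ (hsub ⟨hσ.1.le, hσ.2.le⟩))
  have hA2 : 0 < 1 - m - e := by
    have h1 := humono h0s hss hs0
    have h2 := huA 0 (hsub h0s)
    have h3 := huA s (hsub hss)
    rcases le_or_gt 0 (u s) with hc1 | hc1
    · rcases eq_or_lt_of_le hc1 with hc2 | hc2
      · have hu0 : u 0 < 0 := by linarith only [h1, hc2]
        nlinarith only [h2, mul_pos (neg_pos.2 hu0) (neg_pos.2 hu0)]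
      · nlinarith only [h3, mul_pos hc2 hc2]
    · have hu0 : u 0 < 0 := by linarith only [h1, hc1]
      nlinarith only [h2, mul_pos (neg_pos.2 hu0) (neg_pos.2 hu0)]
  set A2 : ℝ := 1 - m - e with hA2def
  set C : ℝ := m + e - k with hCdef
  have hCpos : 0 < C := hCp
  have hid : C * (e - m) = k * A2 := by
    rw [hCdef, hA2def]
    linear_combination he2 - hkc + k * hm1
  have hkey : k * A2 ≤ 2 * e * C := by
    nlinarith only [hid, mul_nonneg hCpos.le (show (0:ℝ) ≤ e + m by linarith only [hem'.1])]
  have huin : ∀ σ ∈ Set.Ioo 0 s, u σ ^ 2 < A2 := by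
    intro σ hσ
    have hσs : σ ∈ Set.Icc 0 s := ⟨hσ.1.le, hσ.2.le⟩
    have h1 : u 0 < u σ := humono h0s hσs hσ.1
    have h2 : u σ < u s := humono hσs hss hσ.2
    have h3 := huA 0 (hsub h0s)
    have h4 := huA s (hsub hss)
    rcases le_or_gt 0 (u σ) with hc1 | hc1
    · nlinarith only [h2, h4, hc1, mul_pos (sub_pos.2 h2) (show 0 < u s + u σ by
        linarith only [hc1, h2])]
    · nlinarith only [h1, h3, hc1, mul_pos (sub_pos.2 h1) (show 0 < -(u 0) - u σ by
        linarith only [hc1, h1])]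
  -- ## the integrand and FTC
  set Fi : ℝ → ℝ := fun σ => W / (c * β) * Real.sqrt (c ^ 2 * β ^ 2 - ‖deriv w σ‖ ^ 2) /
      (‖w σ‖ ^ 2 - k) with hFidef
  have hφe : ∀ t : ℝ, φ t = ∫ σ in (0:ℝ)..t, Fi σ := hφ
  set U : Set ℝ := {σ : ℝ | n σ - k ≠ 0} with hUdef
  have hUopen : IsOpen U :=
    isOpen_compl_singleton.preimage (hcn.sub continuous_const)
  have hFiU : ContinuousOn Fi U := by
    apply ContinuousOn.div
    · exact (continuous_const.mul (Real.continuous_sqrt.comp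
        (continuous_const.sub ((hcwd.norm).pow 2)))).continuousOn
    · exact ((hcw.norm.pow 2).sub continuous_const).continuousOn
    · intro σ hσ
      rw [hn_eq σ]
      exact hσ
  have hIcc_sub_U : Set.Icc 0 s ⊆ U := by
    intro σ hσ
    exact (sub_pos.2 (hnk σ (hsub hσ))).ne'
  have hFiInt : ∀ t ∈ Set.Icc 0 s, IntervalIntegrable Fi volume 0 t := by
    intro t ht
    apply ContinuousOn.intervalIntegrable
    apply hFiU.mono
    intro σ hσ
    rw [Set.uIcc_of_le ht.1] at hσ
    exact hIcc_sub_U ⟨hσ.1, le_trans hσ.2 ht.2⟩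
  have hφeq : φ = fun t => ∫ σ in (0:ℝ)..t, Fi σ := funext hφe
  have hφcont : ContinuousOn φ (Set.Icc 0 s) := by
    rw [hφeq]
    have h := intervalIntegral.continuousOn_primitive_interval' (hFiInt s hss) left_mem_uIcc
    rwa [Set.uIcc_of_le hs0.le] at h
  have hφd : ∀ σ ∈ Set.Ioo 0 s, HasDerivAt φ (Fi σ) σ := by
    intro σ hσ
    have hσs : σ ∈ Set.Icc 0 s := ⟨hσ.1.le, hσ.2.le⟩
    rw [hφeq]
    exact intervalIntegral.integral_hasDerivAt_right (hFiInt σ hσs)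
      (hFiU.stronglyMeasurableAtFilter hUopen σ (hIcc_sub_U hσs))
      (hFiU.continuousAt (hUopen.mem_nhds (hIcc_sub_U hσs)))
  -- ## pointwise value of the integrand
  have hFi_val : ∀ σ ∈ Set.Icc 0 s, Fi σ = W / c * Real.sqrt (1 - n σ) / (n σ - k) := by
    intro σ hσ
    rw [hFidef]
    simp only
    rw [hd_eq σ, hn_eq σ,
      show c ^ 2 * β ^ 2 - (g0 σ ^ 2 + g1 σ ^ 2) = β ^ 2 * (1 - n σ) by rw [hE σ]; ring,
      Real.sqrt_mul (sq_nonneg β), Real.sqrt_sq hβ.le]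
    rw [show W / (c * β) * (β * Real.sqrt (1 - n σ)) = W / c * Real.sqrt (1 - n σ) by
      field_simp]
  -- ## key inequality
  have key' : ∀ σ ∈ Set.Icc 0 S, |W| * Real.sqrt A2 ≤ Real.sqrt C * (β * v σ) * c := by
    intro σ hσ
    have hvp := hvpos σ hσ
    have h2 := hv2e σ hσ
    have hkA : W ^ 2 = k * (c ^ 2 * β ^ 2) := by rw [hkdef]; field_simp
    have h1 : (|W| * Real.sqrt A2) ^ 2 ≤ (Real.sqrt C * (β * v σ) * c) ^ 2 := by
      rw [mul_pow, mul_pow, mul_pow, Real.sq_sqrt hA2.le, Real.sq_sqrt hCpos.le, sq_abs]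
      have t0 : W ^ 2 * A2 = k * A2 * (c ^ 2 * β ^ 2) := by rw [hkA]; ring
      have t1 : k * A2 * (c ^ 2 * β ^ 2) ≤ 2 * e * C * (c ^ 2 * β ^ 2) :=
        mul_le_mul_of_nonneg_right hkey (by positivity)
      have t2 : 2 * e * (C * (c ^ 2 * β ^ 2)) ≤ v σ ^ 2 * (C * (c ^ 2 * β ^ 2)) :=
        mul_le_mul_of_nonneg_right h2 (by positivity)
      nlinarith only [t0, t1, t2]
    have hL : 0 ≤ |W| * Real.sqrt A2 := by positivity
    have hR : 0 ≤ Real.sqrt C * (β * v σ) * c :=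
      mul_nonneg (mul_nonneg (Real.sqrt_nonneg C) (mul_pos hβ hvp).le) hc0.le
    nlinarith only [h1, hL, hR]
  have hbound : ∀ σ ∈ Set.Ioo 0 s, |Fi σ| ≤
      Real.sqrt C * Real.sqrt (A2 - u σ ^ 2) / (Real.sqrt A2 * (u σ ^ 2 + C)) * (β * v σ) := by
    intro σ hσ
    have hσs : σ ∈ Set.Icc 0 s := ⟨hσ.1.le, hσ.2.le⟩
    have hσS : σ ∈ Set.Icc 0 S := hsub hσs
    rw [hFi_val σ hσs]
    have hnku : u σ ^ 2 + C = n σ - k := by rw [hu2 σ hσS, hCdef]; ring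
    have hAu : A2 - u σ ^ 2 = 1 - n σ := by rw [hu2 σ hσS, hA2def]; ring
    rw [hnku, hAu]
    have hnkp : 0 < n σ - k := sub_pos.2 (hnk σ hσS)
    have hX : 0 ≤ Real.sqrt (1 - n σ) := Real.sqrt_nonneg _
    have hvp := hvpos σ hσS
    have hsA : 0 < Real.sqrt A2 := Real.sqrt_pos.2 hA2
    rw [abs_div, abs_mul, abs_div, abs_of_pos hc0, abs_of_nonneg hX, abs_of_pos hnkp]
    exact aux_frac |W| c (Real.sqrt (1 - n σ)) (Real.sqrt A2) (Real.sqrt C) (β * v σ)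
      (n σ - k) hc0 hnkp hX hsA (key' σ hσS)
  -- ## monotone comparison
  have hGd : ∀ σ ∈ Set.Ioo 0 s, HasDerivAt (fun τ => gcmp A2 C (u τ))
      (Real.sqrt C * Real.sqrt (A2 - u σ ^ 2) / (Real.sqrt A2 * (u σ ^ 2 + C)) * (β * v σ)) σ := by
    intro σ hσ
    exact (gcmp_hasDerivAt A2 C hA2 hCpos (huin σ hσ)).comp σ (hu' σ (hsub ⟨hσ.1.le, hσ.2.le⟩))
  have hGcont : ContinuousOn (fun τ => gcmp A2 C (u τ)) (Set.Icc 0 s) :=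
    (gcmp_continuous A2 C hA2 hCpos).comp_continuousOn (hcu.mono hsub)
  have hM1 : MonotoneOn (fun τ => gcmp A2 C (u τ) - φ τ) (Set.Icc 0 s) := by
    refine monotoneOn_of_hasDerivWithinAt_nonneg (f' := fun σ =>
        Real.sqrt C * Real.sqrt (A2 - u σ ^ 2) / (Real.sqrt A2 * (u σ ^ 2 + C)) * (β * v σ) - Fi σ)
      (convex_Icc 0 s) (hGcont.sub hφcont) (fun σ hσ => ?_) (fun σ hσ => ?_)
    · rw [interior_Icc] at hσ
      exact ((hGd σ hσ).sub (hφd σ hσ)).hasDerivWithinAt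
    · rw [interior_Icc] at hσ
      have hb := hbound σ hσ
      have h3 := le_abs_self (Fi σ)
      linarith only [hb, h3]
  have hM2 : MonotoneOn (fun τ => gcmp A2 C (u τ) + φ τ) (Set.Icc 0 s) := by
    refine monotoneOn_of_hasDerivWithinAt_nonneg (f' := fun σ =>
        Real.sqrt C * Real.sqrt (A2 - u σ ^ 2) / (Real.sqrt A2 * (u σ ^ 2 + C)) * (β * v σ) + Fi σ)
      (convex_Icc 0 s) (hGcont.add hφcont) (fun σ hσ => ?_) (fun σ hσ => ?_)
    · rw [interior_Icc] at hσ
      exact ((hGd σ hσ).add (hφd σ hσ)).hasDerivWithinAt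
    · rw [interior_Icc] at hσ
      have hb := hbound σ hσ
      have h3 := neg_abs_le (Fi σ)
      linarith only [hb, h3]
  -- ## conclusion
  have hφ0 : φ 0 = 0 := by rw [hφe 0, intervalIntegral.integral_same]
  have h1 := hM1 h0s hss hs0.le
  have h2 := hM2 h0s hss hs0.le
  simp only at h1 h2
  rw [hφ0] at h1 h2
  have hb0 := abs_le.1 (gcmp_abs_le A2 C hA2 hCpos (huA 0 (hsub h0s)))
  have hbs := abs_le.1 (gcmp_abs_le A2 C hA2 hCpos (huA s (hsub hss)))
  have htot := gcmp_total_lt A2 C hA2 hCpos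
  rw [abs_lt]
  constructor
  · linarith only [h2, hb0.1, hbs.2, htot]
  · linarith only [h1, hb0.1, hbs.2, htot]
end

section
/- Fix β > 0 and L > 0. Let κ₁, κ₂ : [0,L] → ℝ be continuously differentiable, let K(s) be the 3×3 skew-symmetric matrix [[0,0,κ₁(s)],[0,0,κ₂(s)],[−κ₁(s),−κ₂(s),0]], and let R : [0,L] → ℝ^{3×3} be twice continuously differentiable with R(s) in the special orthogonal group SO(3) for every s and R'(s) = R(s)·K(s). Let x : [0,L] → ℝ³ satisfy x'(s) = R(s)·e₃, where e₃ = (0,0,1)ᵀ. Set κ(s) := √(κ₁(s)² + κ₂(s)²), wᵢ(s) := κᵢ(s)/√(κ(s)² + β²) for i = 1,2, and W(s) := w₁(s)w₂'(s) − w₂(s)w₁'(s). Then for all s ∈ [0,L]: ‖x''(s) × x'''(s)‖² = κ(s)⁶ + (κ(s)² + β²)² W(s)². Consequently, ‖x''(s)‖ = κ(s), and whenever κ(s) > 0 and W(s) ≠ 0 the curvature of the tangent indicatrix, ‖x''(s) × x'''(s)‖ / ‖x''(s)‖³, is strictly greater than 1. -/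
/-- The cross product on `ℝ³ = EuclideanSpace ℝ (Fin 3)`. -/
noncomputable def cross3 (a b : EuclideanSpace ℝ (Fin 3)) : EuclideanSpace ℝ (Fin 3) :=
  (WithLp.equiv 2 (Fin 3 → ℝ)).symm
    ![a 1 * b 2 - a 2 * b 1, a 2 * b 0 - a 0 * b 2, a 0 * b 1 - a 1 * b 0]


lemma eucl_norm_sq3 (y : EuclideanSpace ℝ (Fin 3)) : ‖y‖ ^ 2 = y 0 ^ 2 + y 1 ^ 2 + y 2 ^ 2 := by
  rw [EuclideanSpace.norm_eq, Real.sq_sqrt (by positivity)]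
  simp [Fin.sum_univ_three, sq_abs]

lemma lagrange3 (u v : EuclideanSpace ℝ (Fin 3)) :
    ‖cross3 u v‖ ^ 2 = (u 0 ^ 2 + u 1 ^ 2 + u 2 ^ 2) * (v 0 ^ 2 + v 1 ^ 2 + v 2 ^ 2)
      - (u 0 * v 0 + u 1 * v 1 + u 2 * v 2) ^ 2 := by
  rw [eucl_norm_sq3]
  simp only [cross3, WithLp.equiv_symm_apply, PiLp.toLp_apply, Matrix.cons_val_zero, Matrix.cons_val_one,
    Matrix.head_cons, Matrix.cons_val_two, Matrix.tail_cons]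
  ring

lemma hasDerivAt_eucl {f : ℝ → Fin 3 → ℝ} {f' : Fin 3 → ℝ} {s : ℝ}
    (h : ∀ i, HasDerivAt (fun t => f t i) (f' i) s) :
    HasDerivAt (fun t => (WithLp.equiv 2 (Fin 3 → ℝ)).symm (f t))
      ((WithLp.equiv 2 (Fin 3 → ℝ)).symm f') s := by
  have hp : HasDerivAt f f' s := hasDerivAt_pi.2 h
  exact ((PiLp.continuousLinearEquiv 2 ℝ (fun _ : Fin 3 => ℝ)).symm.toContinuousLinearMap.hasFDerivAt).comp_hasDerivAt s hp

/-- for a horizontal lift with rotating frame `R ∈ SO(3)`,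
`R' = R·K(s)` (with `K` the skew matrix built from `κ₁, κ₂`), and spatial curve
`x' = R e₃`, one has `‖x'' × x'''‖² = κ⁶ + (κ² + β²)² W²` where
`κ = √(κ₁² + κ₂²)`, `wᵢ = κᵢ/√(κ² + β²)` and `W = w₁w₂' − w₂w₁'`; consequently
`‖x''‖ = κ`, and if `κ > 0` and `W ≠ 0` the curvature of the tangent indicatrix
`‖x'' × x'''‖/‖x''‖³` exceeds `1`. -/
theorem stmt_16 (β L : ℝ) (hβ : 0 < β) (hL : 0 < L)
    (κ₁ κ₂ : ℝ → ℝ)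
    (U : Set ℝ) (hU : IsOpen U) (hUL : Set.Icc 0 L ⊆ U)
    (hκ₁ : ContDiffOn ℝ 1 κ₁ U) (hκ₂ : ContDiffOn ℝ 1 κ₂ U)
    (K : ℝ → Matrix (Fin 3) (Fin 3) ℝ)
    (hK : ∀ s, K s = !![0, 0, κ₁ s; 0, 0, κ₂ s; -κ₁ s, -κ₂ s, 0])
    (R : ℝ → Matrix (Fin 3) (Fin 3) ℝ)
    (hRsmooth : ∀ i j, ContDiffOn ℝ 2 (fun s => R s i j) U)
    (hRSO : ∀ s ∈ U, R s ∈ Matrix.specialOrthogonalGroup (Fin 3) ℝ)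
    (hR' : ∀ s ∈ U, ∀ i j, HasDerivAt (fun σ => R σ i j) ((R s * K s) i j) s)
    (x : ℝ → EuclideanSpace ℝ (Fin 3))
    (hx : ∀ s ∈ U, HasDerivAt x
      ((WithLp.equiv 2 (Fin 3 → ℝ)).symm ((R s).mulVec ![0, 0, 1])) s)
    (κ w₁ w₂ Wr : ℝ → ℝ)
    (hκ : ∀ s, κ s = Real.sqrt (κ₁ s ^ 2 + κ₂ s ^ 2))
    (hw₁ : ∀ s, w₁ s = κ₁ s / Real.sqrt (κ s ^ 2 + β ^ 2))
    (hw₂ : ∀ s, w₂ s = κ₂ s / Real.sqrt (κ s ^ 2 + β ^ 2))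
    (hWr : ∀ s, Wr s = w₁ s * deriv w₂ s - w₂ s * deriv w₁ s) :
    ∀ s ∈ Set.Icc (0 : ℝ) L,
      ‖cross3 (deriv (deriv x) s) (deriv (deriv (deriv x)) s)‖ ^ 2
        = κ s ^ 6 + (κ s ^ 2 + β ^ 2) ^ 2 * Wr s ^ 2 ∧
      ‖deriv (deriv x) s‖ = κ s ∧
      (0 < κ s → Wr s ≠ 0 →
        1 < ‖cross3 (deriv (deriv x) s) (deriv (deriv (deriv x)) s)‖
              / ‖deriv (deriv x) s‖ ^ 3) := by
    -- differentiability of κ₁ κ₂ on U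
  have hK1 : ∀ s ∈ U, HasDerivAt κ₁ (deriv κ₁ s) s := fun s hs =>
    (((hκ₁.differentiableOn one_ne_zero).differentiableAt (hU.mem_nhds hs))).hasDerivAt
  have hK2 : ∀ s ∈ U, HasDerivAt κ₂ (deriv κ₂ s) s := fun s hs =>
    (((hκ₂.differentiableOn one_ne_zero).differentiableAt (hU.mem_nhds hs))).hasDerivAt
  -- second derivative of x
  have hRK : ∀ s, ∀ i : Fin 3, ((R s * K s) i 0 = -(R s i 2 * κ₁ s)) ∧
      ((R s * K s) i 1 = -(R s i 2 * κ₂ s)) ∧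
      ((R s * K s) i 2 = R s i 0 * κ₁ s + R s i 1 * κ₂ s) := by
    intro s i
    refine ⟨?_, ?_, ?_⟩ <;>
      simp [Matrix.mul_apply, hK, Fin.sum_univ_three] <;> ring
  have hF2 : ∀ s ∈ U, HasDerivAt
      (fun σ => (WithLp.equiv 2 (Fin 3 → ℝ)).symm ((R σ).mulVec ![0, 0, 1]))
      ((WithLp.equiv 2 (Fin 3 → ℝ)).symm ((R s).mulVec ![κ₁ s, κ₂ s, 0])) s := by
    intro s hs
    apply hasDerivAt_eucl
    intro i
    have h2 := hR' s hs i 2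
    have : (fun σ => (R σ).mulVec ![0, 0, 1] i) = fun σ => R σ i 2 := by
      funext σ
      simp [Matrix.mulVec, dotProduct, Fin.sum_univ_three]
    rw [this]
    convert h2 using 1
    simp [Matrix.mulVec, dotProduct, Fin.sum_univ_three, (hRK s i).2.2]
  have hx'' : ∀ s ∈ U, HasDerivAt (deriv x)
      ((WithLp.equiv 2 (Fin 3 → ℝ)).symm ((R s).mulVec ![κ₁ s, κ₂ s, 0])) s := by
    intro s hs
    refine (hF2 s hs).congr_of_eventuallyEq ?_
    filter_upwards [hU.mem_nhds hs] with t ht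
    exact (hx t ht).deriv
  -- third derivative of x
  have hF3 : ∀ s ∈ U, HasDerivAt
      (fun σ => (WithLp.equiv 2 (Fin 3 → ℝ)).symm ((R σ).mulVec ![κ₁ σ, κ₂ σ, 0]))
      ((WithLp.equiv 2 (Fin 3 → ℝ)).symm
        ((R s).mulVec ![deriv κ₁ s, deriv κ₂ s, -(κ₁ s ^ 2 + κ₂ s ^ 2)])) s := by
    intro s hs
    apply hasDerivAt_eucl
    intro i
    have : (fun σ => (R σ).mulVec ![κ₁ σ, κ₂ σ, 0] i)
        = fun σ => R σ i 0 * κ₁ σ + R σ i 1 * κ₂ σ := by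
      funext σ
      simp [Matrix.mulVec, dotProduct, Fin.sum_univ_three]
    rw [this]
    have hd : HasDerivAt (fun σ => R σ i 0 * κ₁ σ + R σ i 1 * κ₂ σ)
        ((R s * K s) i 0 * κ₁ s + R s i 0 * deriv κ₁ s + ((R s * K s) i 1 * κ₂ s + R s i 1 * deriv κ₂ s)) s :=
      (((hR' s hs i 0).mul (hK1 s hs)).add ((hR' s hs i 1).mul (hK2 s hs)))
    convert hd using 1
    have h0 := (hRK s i).1
    have h1 := (hRK s i).2.1
    simp only [Matrix.mulVec, dotProduct, Fin.sum_univ_three,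
      Matrix.cons_val_zero, Matrix.cons_val_one, Matrix.head_cons,
      Matrix.cons_val_two, Matrix.tail_cons, h0, h1]
    ring


  intro s₀ hs₀
  have hsU : s₀ ∈ U := hUL hs₀
  have hu : deriv (deriv x) s₀
      = (WithLp.equiv 2 (Fin 3 → ℝ)).symm ((R s₀).mulVec ![κ₁ s₀, κ₂ s₀, 0]) :=
    (hx'' s₀ hsU).deriv
  have hv : deriv (deriv (deriv x)) s₀
      = (WithLp.equiv 2 (Fin 3 → ℝ)).symm
        ((R s₀).mulVec ![deriv κ₁ s₀, deriv κ₂ s₀, -(κ₁ s₀ ^ 2 + κ₂ s₀ ^ 2)]) := by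
    have heq : deriv (deriv x) =ᶠ[nhds s₀]
        (fun σ => (WithLp.equiv 2 (Fin 3 → ℝ)).symm ((R σ).mulVec ![κ₁ σ, κ₂ σ, 0])) := by
      filter_upwards [hU.mem_nhds hsU] with t ht
      exact (hx'' t ht).deriv
    rw [heq.deriv_eq]
    exact (hF3 s₀ hsU).deriv
  have hui : ∀ i, deriv (deriv x) s₀ i = R s₀ i 0 * κ₁ s₀ + R s₀ i 1 * κ₂ s₀ := by
    intro i
    rw [hu]
    simp [Matrix.mulVec, dotProduct, Fin.sum_univ_three]
  have hvi : ∀ i, deriv (deriv (deriv x)) s₀ i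
      = R s₀ i 0 * deriv κ₁ s₀ + R s₀ i 1 * deriv κ₂ s₀
        + R s₀ i 2 * (-(κ₁ s₀ ^ 2 + κ₂ s₀ ^ 2)) := by
    intro i
    rw [hv]
    simp [Matrix.mulVec, dotProduct, Fin.sum_univ_three]
  have hO : star (R s₀) * R s₀ = 1 :=
    (Matrix.mem_orthogonalGroup_iff' (Fin 3) ℝ).mp (Matrix.mem_specialOrthogonalGroup_iff.mp (hRSO s₀ hsU)).1
  have h00 : R s₀ 0 0 * R s₀ 0 0 + R s₀ 1 0 * R s₀ 1 0 + R s₀ 2 0 * R s₀ 2 0 = 1 := by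
    have hij := congrFun (congrFun hO 0) 0
    simp [Matrix.mul_apply, Fin.sum_univ_three, Matrix.star_apply, Matrix.one_apply] at hij
    linear_combination hij
  have h11 : R s₀ 0 1 * R s₀ 0 1 + R s₀ 1 1 * R s₀ 1 1 + R s₀ 2 1 * R s₀ 2 1 = 1 := by
    have hij := congrFun (congrFun hO 1) 1
    simp [Matrix.mul_apply, Fin.sum_univ_three, Matrix.star_apply, Matrix.one_apply] at hij
    linear_combination hij
  have h22 : R s₀ 0 2 * R s₀ 0 2 + R s₀ 1 2 * R s₀ 1 2 + R s₀ 2 2 * R s₀ 2 2 = 1 := by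
    have hij := congrFun (congrFun hO 2) 2
    simp [Matrix.mul_apply, Fin.sum_univ_three, Matrix.star_apply, Matrix.one_apply] at hij
    linear_combination hij
  have h01 : R s₀ 0 0 * R s₀ 0 1 + R s₀ 1 0 * R s₀ 1 1 + R s₀ 2 0 * R s₀ 2 1 = 0 := by
    have hij := congrFun (congrFun hO 0) 1
    simp [Matrix.mul_apply, Fin.sum_univ_three, Matrix.star_apply, Matrix.one_apply] at hij
    linear_combination hij
  have h02 : R s₀ 0 0 * R s₀ 0 2 + R s₀ 1 0 * R s₀ 1 2 + R s₀ 2 0 * R s₀ 2 2 = 0 := by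
    have hij := congrFun (congrFun hO 0) 2
    simp [Matrix.mul_apply, Fin.sum_univ_three, Matrix.star_apply, Matrix.one_apply] at hij
    linear_combination hij
  have h12 : R s₀ 0 1 * R s₀ 0 2 + R s₀ 1 1 * R s₀ 1 2 + R s₀ 2 1 * R s₀ 2 2 = 0 := by
    have hij := congrFun (congrFun hO 1) 2
    simp [Matrix.mul_apply, Fin.sum_univ_three, Matrix.star_apply, Matrix.one_apply] at hij
    linear_combination hij
  clear hO
  -- κ² and positivity
  have hκ2 : κ s₀ ^ 2 = κ₁ s₀ ^ 2 + κ₂ s₀ ^ 2 := by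
    rw [hκ]; exact Real.sq_sqrt (by positivity)
  have hκnn : 0 ≤ κ s₀ := by rw [hκ]; positivity
  have hnpos : (0:ℝ) < Real.sqrt (κ₁ s₀ ^ 2 + κ₂ s₀ ^ 2 + β ^ 2) :=
    Real.sqrt_pos.mpr (by positivity)
  have hn2 : Real.sqrt (κ₁ s₀ ^ 2 + κ₂ s₀ ^ 2 + β ^ 2) ^ 2 = κ₁ s₀ ^ 2 + κ₂ s₀ ^ 2 + β ^ 2 :=
    Real.sq_sqrt (by positivity)
  -- derivatives of the weights
  have hNfun : ∀ s, Real.sqrt (κ s ^ 2 + β ^ 2) = Real.sqrt (κ₁ s ^ 2 + κ₂ s ^ 2 + β ^ 2) := by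
    intro s
    rw [hκ, Real.sq_sqrt (by positivity)]
  have hA : HasDerivAt (fun s => κ₁ s ^ 2 + κ₂ s ^ 2 + β ^ 2)
      (2 * κ₁ s₀ * deriv κ₁ s₀ + 2 * κ₂ s₀ * deriv κ₂ s₀) s₀ := by
    have h : HasDerivAt (fun s => κ₁ s ^ 2 + κ₂ s ^ 2 + β ^ 2)
        (((2:ℕ):ℝ) * κ₁ s₀ ^ (2 - 1) * deriv κ₁ s₀ + ((2:ℕ):ℝ) * κ₂ s₀ ^ (2 - 1) * deriv κ₂ s₀) s₀ :=
      (((hK1 s₀ hsU).pow 2).add ((hK2 s₀ hsU).pow 2)).add_const (β ^ 2)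
    convert h using 1
    push_cast
    ring
  have hApos : (0:ℝ) < κ₁ s₀ ^ 2 + κ₂ s₀ ^ 2 + β ^ 2 := by positivity
  have hN : HasDerivAt (fun s => Real.sqrt (κ₁ s ^ 2 + κ₂ s ^ 2 + β ^ 2))
      ((2 * κ₁ s₀ * deriv κ₁ s₀ + 2 * κ₂ s₀ * deriv κ₂ s₀)
        / (2 * Real.sqrt (κ₁ s₀ ^ 2 + κ₂ s₀ ^ 2 + β ^ 2))) s₀ := hA.sqrt hApos.ne'
  have hw1fun : w₁ = fun s => κ₁ s / Real.sqrt (κ₁ s ^ 2 + κ₂ s ^ 2 + β ^ 2) := by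
    funext s; rw [hw₁, hNfun]
  have hw2fun : w₂ = fun s => κ₂ s / Real.sqrt (κ₁ s ^ 2 + κ₂ s ^ 2 + β ^ 2) := by
    funext s; rw [hw₂, hNfun]
  have hdw1 : deriv w₁ s₀
      = (deriv κ₁ s₀ * Real.sqrt (κ₁ s₀ ^ 2 + κ₂ s₀ ^ 2 + β ^ 2)
          - κ₁ s₀ * ((2 * κ₁ s₀ * deriv κ₁ s₀ + 2 * κ₂ s₀ * deriv κ₂ s₀)
            / (2 * Real.sqrt (κ₁ s₀ ^ 2 + κ₂ s₀ ^ 2 + β ^ 2))))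
        / Real.sqrt (κ₁ s₀ ^ 2 + κ₂ s₀ ^ 2 + β ^ 2) ^ 2 := by
    rw [hw1fun]
    exact ((hK1 s₀ hsU).div hN hnpos.ne').deriv
  have hdw2 : deriv w₂ s₀
      = (deriv κ₂ s₀ * Real.sqrt (κ₁ s₀ ^ 2 + κ₂ s₀ ^ 2 + β ^ 2)
          - κ₂ s₀ * ((2 * κ₁ s₀ * deriv κ₁ s₀ + 2 * κ₂ s₀ * deriv κ₂ s₀)
            / (2 * Real.sqrt (κ₁ s₀ ^ 2 + κ₂ s₀ ^ 2 + β ^ 2))))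
        / Real.sqrt (κ₁ s₀ ^ 2 + κ₂ s₀ ^ 2 + β ^ 2) ^ 2 := by
    rw [hw2fun]
    exact ((hK2 s₀ hsU).div hN hnpos.ne').deriv
  have hWr0 : Wr s₀ = (κ₁ s₀ * deriv κ₂ s₀ - κ₂ s₀ * deriv κ₁ s₀)
      / Real.sqrt (κ₁ s₀ ^ 2 + κ₂ s₀ ^ 2 + β ^ 2) ^ 2 := by
    rw [hWr, hdw1, hdw2, hw₁, hw₂, hNfun s₀]
    field_simp
    ring
  clear hdw1 hdw2 hw1fun hw2fun hN hA hNfun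
  -- main Lagrange computation
  have hP1 : (R s₀ 0 0 * κ₁ s₀ + R s₀ 0 1 * κ₂ s₀) ^ 2 + (R s₀ 1 0 * κ₁ s₀ + R s₀ 1 1 * κ₂ s₀) ^ 2 + (R s₀ 2 0 * κ₁ s₀ + R s₀ 2 1 * κ₂ s₀) ^ 2 = (κ₁ s₀ ^ 2 + κ₂ s₀ ^ 2) := by
    linear_combination κ₁ s₀ ^ 2 * h00 + κ₂ s₀ ^ 2 * h11 + 2 * κ₁ s₀ * κ₂ s₀ * h01
  have hP2 : (R s₀ 0 0 * deriv κ₁ s₀ + R s₀ 0 1 * deriv κ₂ s₀ + R s₀ 0 2 * (-(κ₁ s₀ ^ 2 + κ₂ s₀ ^ 2))) ^ 2 + (R s₀ 1 0 * deriv κ₁ s₀ + R s₀ 1 1 * deriv κ₂ s₀ + R s₀ 1 2 * (-(κ₁ s₀ ^ 2 + κ₂ s₀ ^ 2))) ^ 2 + (R s₀ 2 0 * deriv κ₁ s₀ + R s₀ 2 1 * deriv κ₂ s₀ + R s₀ 2 2 * (-(κ₁ s₀ ^ 2 + κ₂ s₀ ^ 2))) ^ 2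
      = deriv κ₁ s₀ ^ 2 + deriv κ₂ s₀ ^ 2 + (-(κ₁ s₀ ^ 2 + κ₂ s₀ ^ 2)) ^ 2 := by
    linear_combination deriv κ₁ s₀ ^ 2 * h00 + deriv κ₂ s₀ ^ 2 * h11 + (-(κ₁ s₀ ^ 2 + κ₂ s₀ ^ 2)) ^ 2 * h22
      + 2 * deriv κ₁ s₀ * deriv κ₂ s₀ * h01 + 2 * deriv κ₁ s₀ * (-(κ₁ s₀ ^ 2 + κ₂ s₀ ^ 2)) * h02 + 2 * deriv κ₂ s₀ * (-(κ₁ s₀ ^ 2 + κ₂ s₀ ^ 2)) * h12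
  have hP3 : (R s₀ 0 0 * κ₁ s₀ + R s₀ 0 1 * κ₂ s₀) * (R s₀ 0 0 * deriv κ₁ s₀ + R s₀ 0 1 * deriv κ₂ s₀ + R s₀ 0 2 * (-(κ₁ s₀ ^ 2 + κ₂ s₀ ^ 2))) + (R s₀ 1 0 * κ₁ s₀ + R s₀ 1 1 * κ₂ s₀) * (R s₀ 1 0 * deriv κ₁ s₀ + R s₀ 1 1 * deriv κ₂ s₀ + R s₀ 1 2 * (-(κ₁ s₀ ^ 2 + κ₂ s₀ ^ 2))) + (R s₀ 2 0 * κ₁ s₀ + R s₀ 2 1 * κ₂ s₀) * (R s₀ 2 0 * deriv κ₁ s₀ + R s₀ 2 1 * deriv κ₂ s₀ + R s₀ 2 2 * (-(κ₁ s₀ ^ 2 + κ₂ s₀ ^ 2)))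
      = (κ₁ s₀ * deriv κ₁ s₀ + κ₂ s₀ * deriv κ₂ s₀) := by
    linear_combination κ₁ s₀ * deriv κ₁ s₀ * h00 + κ₂ s₀ * deriv κ₂ s₀ * h11
      + (κ₁ s₀ * deriv κ₂ s₀ + κ₂ s₀ * deriv κ₁ s₀) * h01 + κ₁ s₀ * (-(κ₁ s₀ ^ 2 + κ₂ s₀ ^ 2)) * h02 + κ₂ s₀ * (-(κ₁ s₀ ^ 2 + κ₂ s₀ ^ 2)) * h12
  have hcross : ‖cross3 (deriv (deriv x) s₀) (deriv (deriv (deriv x)) s₀)‖ ^ 2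
      = (κ₁ s₀ ^ 2 + κ₂ s₀ ^ 2) ^ 3 + (κ₁ s₀ * deriv κ₂ s₀ - κ₂ s₀ * deriv κ₁ s₀) ^ 2 := by
    rw [lagrange3, hui 0, hui 1, hui 2, hvi 0, hvi 1, hvi 2]
    linear_combination ((R s₀ 0 0 * deriv κ₁ s₀ + R s₀ 0 1 * deriv κ₂ s₀ + R s₀ 0 2 * (-(κ₁ s₀ ^ 2 + κ₂ s₀ ^ 2))) ^ 2 + (R s₀ 1 0 * deriv κ₁ s₀ + R s₀ 1 1 * deriv κ₂ s₀ + R s₀ 1 2 * (-(κ₁ s₀ ^ 2 + κ₂ s₀ ^ 2))) ^ 2 + (R s₀ 2 0 * deriv κ₁ s₀ + R s₀ 2 1 * deriv κ₂ s₀ + R s₀ 2 2 * (-(κ₁ s₀ ^ 2 + κ₂ s₀ ^ 2))) ^ 2) * hP1 + (κ₁ s₀ ^ 2 + κ₂ s₀ ^ 2) * hP2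
      - (((R s₀ 0 0 * κ₁ s₀ + R s₀ 0 1 * κ₂ s₀) * (R s₀ 0 0 * deriv κ₁ s₀ + R s₀ 0 1 * deriv κ₂ s₀ + R s₀ 0 2 * (-(κ₁ s₀ ^ 2 + κ₂ s₀ ^ 2))) + (R s₀ 1 0 * κ₁ s₀ + R s₀ 1 1 * κ₂ s₀) * (R s₀ 1 0 * deriv κ₁ s₀ + R s₀ 1 1 * deriv κ₂ s₀ + R s₀ 1 2 * (-(κ₁ s₀ ^ 2 + κ₂ s₀ ^ 2))) + (R s₀ 2 0 * κ₁ s₀ + R s₀ 2 1 * κ₂ s₀) * (R s₀ 2 0 * deriv κ₁ s₀ + R s₀ 2 1 * deriv κ₂ s₀ + R s₀ 2 2 * (-(κ₁ s₀ ^ 2 + κ₂ s₀ ^ 2)))) + (κ₁ s₀ * deriv κ₁ s₀ + κ₂ s₀ * deriv κ₂ s₀)) * hP3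
  have hRHS : κ s₀ ^ 6 + (κ s₀ ^ 2 + β ^ 2) ^ 2 * Wr s₀ ^ 2
      = (κ₁ s₀ ^ 2 + κ₂ s₀ ^ 2) ^ 3 + (κ₁ s₀ * deriv κ₂ s₀ - κ₂ s₀ * deriv κ₁ s₀) ^ 2 := by
    have h6 : κ s₀ ^ 6 = (κ₁ s₀ ^ 2 + κ₂ s₀ ^ 2) ^ 3 := by
      rw [show (6:ℕ) = 2 * 3 from rfl, pow_mul, hκ2]
    have hnb : κ s₀ ^ 2 + β ^ 2 = Real.sqrt (κ₁ s₀ ^ 2 + κ₂ s₀ ^ 2 + β ^ 2) ^ 2 := by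
      rw [hκ2, hn2]
    rw [h6, hnb, hWr0]
    field_simp
  have h1 : ‖cross3 (deriv (deriv x) s₀) (deriv (deriv (deriv x)) s₀)‖ ^ 2
      = κ s₀ ^ 6 + (κ s₀ ^ 2 + β ^ 2) ^ 2 * Wr s₀ ^ 2 := by rw [hcross, hRHS]
  have h2 : ‖deriv (deriv x) s₀‖ = κ s₀ := by
    have hsq : ‖deriv (deriv x) s₀‖ ^ 2 = κ s₀ ^ 2 := by
      rw [eucl_norm_sq3, hui 0, hui 1, hui 2, hP1, hκ2]
    calc ‖deriv (deriv x) s₀‖ = Real.sqrt (‖deriv (deriv x) s₀‖ ^ 2) :=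
          (Real.sqrt_sq (norm_nonneg _)).symm
      _ = Real.sqrt (κ s₀ ^ 2) := by rw [hsq]
      _ = κ s₀ := Real.sqrt_sq hκnn
  refine ⟨h1, h2, ?_⟩
  intro hκpos hWne
  have hκ3 : (0:ℝ) < κ s₀ ^ 3 := pow_pos hκpos 3
  rw [h2, one_lt_div hκ3]
  obtain ⟨C, hCdef⟩ : ∃ C, ‖cross3 (deriv (deriv x) s₀) (deriv (deriv (deriv x)) s₀)‖ = C :=
    ⟨_, rfl⟩
  have hC0 : 0 ≤ C := hCdef ▸ norm_nonneg _
  rw [hCdef] at h1 ⊢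
  have hpos : 0 < (κ s₀ ^ 2 + β ^ 2) ^ 2 * Wr s₀ ^ 2 := by positivity
  refine lt_of_pow_lt_pow_left₀ 2 hC0 ?_
  rw [h1]
  have hring : (κ s₀ ^ 3) ^ 2 = κ s₀ ^ 6 := by ring
  linarith [hpos]
end

section
/- Let w : ℝ → ℝ² be a normalized-curvature trajectory (i.e., twice continuously differentiable with w''(s) = β² w(s) for all s) with ‖w(0)‖ = 1 and Wronskian W = 0. If s ≥ 0 and ‖w(σ)‖ ≤ 1 for all σ ∈ [0,s], then (w(s) − w(0)) · w'(0) ≥ 0. -/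
/-- A normalized-curvature trajectory `w` (a C² curve in ℝ² with
`w'' = β² w`) with `‖w(0)‖ = 1` and vanishing Wronskian satisfies
`(w(s) − w(0))·w'(0) ≥ 0` whenever `s ≥ 0` and `‖w‖ ≤ 1` on `[0,s]`. -/
theorem stmt_17 (β : ℝ) (hβ : 0 < β)
    (w : ℝ → EuclideanSpace ℝ (Fin 2)) (hw : ContDiff ℝ 2 w)
    (hODE : ∀ s : ℝ, deriv (deriv w) s = β ^ 2 • w s)
    (hw0 : ‖w 0‖ = 1)
    (hW : (w 0) 0 * (deriv w 0) 1 - (w 0) 1 * (deriv w 0) 0 = 0)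
    (s : ℝ) (hs : 0 ≤ s)
    (hw1 : ∀ σ ∈ Set.Icc 0 s, ‖w σ‖ ≤ 1) :
    0 ≤ (inner ℝ (w s - w 0) (deriv w 0) : ℝ) := by
  set u := w 0 with hu
  set v := deriv w 0 with hv
  set c : ℝ := inner ℝ u v with hc
  -- norm squared of u is 1
  have hnormsq : u 0 ^ 2 + u 1 ^ 2 = 1 := by
    have := congrArg (fun x => x ^ 2) hw0
    simp only [one_pow] at this
    rw [← this, ← real_inner_self_eq_norm_sq]
    rw [PiLp.inner_apply]
    simp [Fin.sum_univ_two, sq]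
  have hc_eq : c = u 0 * v 0 + u 1 * v 1 := by
    rw [hc, PiLp.inner_apply]
    simp [Fin.sum_univ_two]
    ring
  -- v = c • u
  have h0 : v 0 = c * u 0 := by
    linear_combination (-(v 0)) * hnormsq + (-(u 0)) * hc_eq + (-(u 1)) * hW
  have h1 : v 1 = c * u 1 := by
    linear_combination (-(v 1)) * hnormsq + (-(u 1)) * hc_eq + (u 0) * hW
  have hvc : v = c • u := by
    ext i
    fin_cases i
    · exact h0
    · exact h1
  -- inner ℝ (w s - u) v = c * (inner ℝ (w s) u - 1)
  have hinner : (inner ℝ (w s - u) v : ℝ) = c * ((inner ℝ (w s) u : ℝ) - 1) := by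
    rw [hvc, inner_smul_right, inner_sub_left, real_inner_self_eq_norm_sq, hw0]
    ring
  rw [hinner]
  -- inner ℝ (w σ) u ≤ 1 for σ ∈ [0, s]
  have hle : ∀ σ ∈ Set.Icc 0 s, (inner ℝ (w σ) u : ℝ) ≤ 1 := by
    intro σ hσ
    calc (inner ℝ (w σ) u : ℝ) ≤ ‖w σ‖ * ‖u‖ := real_inner_le_norm _ _
    _ ≤ 1 := by rw [hw0, mul_one]; exact hw1 σ hσ
  rcases eq_or_lt_of_le hs with rfl | hspos
  · have h00 : (inner ℝ (w 0) u : ℝ) = 1 := by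
      rw [← hu, real_inner_self_eq_norm_sq, hw0]; norm_num
    rw [h00]; simp
  -- c ≤ 0 via one-sided derivative argument
  have hwd : HasDerivAt w v 0 :=
    ((hw.differentiable (by norm_num)) 0).hasDerivAt
  have hg : HasDerivAt (fun σ => (inner ℝ (w σ) u : ℝ)) c 0 := by
    have h := HasDerivAt.inner (𝕜 := ℝ) hwd (hasDerivAt_const (0:ℝ) u)
    simp only [inner_zero_right, zero_add] at h
    have hcvu : c = (inner ℝ v u : ℝ) := hc.trans (real_inner_comm u v).symm
    rw [hcvu]
    exact h
  have hcle : c ≤ 0 := by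
    have hd : HasDerivWithinAt (fun σ => (inner ℝ (w σ) u : ℝ)) c (Set.Ioi 0) 0 :=
      hg.hasDerivWithinAt
    rw [hasDerivWithinAt_iff_tendsto_slope] at hd
    rw [Set.diff_singleton_eq_self (by simp)] at hd
    refine le_of_tendsto hd ?_
    have h1 : ∀ᶠ x in nhdsWithin (0:ℝ) (Set.Ioi 0), x ∈ Set.Ioi (0:ℝ) :=
      eventually_mem_nhdsWithin
    have h2 : ∀ᶠ x in nhdsWithin (0:ℝ) (Set.Ioi 0), x < s := by
      apply eventually_nhdsWithin_of_eventually_nhds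
      exact Filter.Tendsto.eventually_lt_const hspos Filter.tendsto_id
    filter_upwards [h1, h2] with x hx hxs
    have hx0 : (0:ℝ) < x := hx
    have hxle : (inner ℝ (w x) u : ℝ) ≤ 1 := hle x ⟨le_of_lt hx0, le_of_lt hxs⟩
    have hg0 : (inner ℝ (w 0) u : ℝ) = 1 := by
      rw [← hu, real_inner_self_eq_norm_sq, hw0]; norm_num
    rw [slope_def_field]
    have : ((inner ℝ (w x) u : ℝ) - (inner ℝ (w 0) u : ℝ)) / (x - 0) ≤ 0 := by
      apply div_nonpos_of_nonpos_of_nonneg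
      · rw [hg0]; linarith
      · linarith
    simpa [div_eq_inv_mul] using this
  have hfac : (inner ℝ (w s) u : ℝ) - 1 ≤ 0 := by
    have := hle s ⟨hs, le_refl s⟩; linarith
  nlinarith [mul_nonneg (neg_nonneg.2 hcle) (neg_nonneg.2 hfac)]
end

section
/- Let w : ℝ → ℝ² be a normalized-curvature trajectory (i.e., twice continuously differentiable with w''(s) = β² w(s) for all s) with ‖w(0)‖ = 1, w(0)·w'(0) < 0, Wronskian W ≠ 0 and 𝔠 > 0. Let s > 0 be such that for all σ ∈ [0,s]: ‖w(σ)‖ ≤ 1 and 𝔠²β² ‖w(σ)‖² > W². Define φ(s) := ∫₀ˢ (W/(𝔠β)) √(𝔠²β² − ‖w'(σ)‖²) / (‖w(σ)‖² − W²/(𝔠²β²)) dσ. Then √( (‖w(s)‖² − W²/(𝔠²β²)) / (1 − W²/(𝔠²β²)) ) · cos φ(s) < 1. (This expresses that a cuspless sub-Riemannian geodesic departing from a cusp has strictly positive z-component for 0 < s ≤ s_max when W ≠ 0.) -/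
open Real Set
set_option maxHeartbeats 4000000


private lemma aux_ineq {β c q Fx : ℝ}
    (h : 0 ≤ β ^ 2 * c ^ 2 * (Fx - q) ^ 2) :
    (1 - Fx) * (β ^ 2 * ((Fx - q) * (Fx - 1 + c ^ 2)))
      ≤ β ^ 2 * (c ^ 2 * (1 - q) - (1 - Fx) ^ 2) * (Fx - q) := by
  nlinarith [h]

/-- Along a normalized-curvature trajectory `w` (a C² curve in ℝ² with
`w'' = β² w`) departing from a cusp (`‖w(0)‖ = 1`, `w(0)·w'(0) < 0`) with nonzero
Wronskian `W` and `𝔠 > 0`, if `‖w‖ ≤ 1` and `𝔠²β²‖w‖² > W²` on `[0,s]` with `s > 0`,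
then `√((‖w(s)‖² − W²/(𝔠²β²))/(1 − W²/(𝔠²β²))) · cos φ(s) < 1`; i.e. the geodesic
departing from a cusp has strictly positive z-component. -/
theorem stmt_18 (β : ℝ) (hβ : 0 < β)
    (w : ℝ → EuclideanSpace ℝ (Fin 2)) (hw : ContDiff ℝ 2 w)
    (hODE : ∀ s : ℝ, deriv (deriv w) s = β ^ 2 • w s)
    (hw0 : ‖w 0‖ = 1)
    (hneg : (inner ℝ (w 0) (deriv w 0) : ℝ) < 0)
    (W : ℝ) (hWdef : W = (w 0) 0 * (deriv w 0) 1 - (w 0) 1 * (deriv w 0) 0)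
    (hW : W ≠ 0)
    (c : ℝ) (hc0 : 0 < c)
    (hc : c ^ 2 = 1 - ‖w 0‖ ^ 2 + β⁻¹ ^ 2 * ‖deriv w 0‖ ^ 2)
    (s : ℝ) (hs : 0 < s)
    (hw1 : ∀ σ ∈ Set.Icc 0 s, ‖w σ‖ ≤ 1)
    (hwq : ∀ σ ∈ Set.Icc 0 s, W ^ 2 < c ^ 2 * β ^ 2 * ‖w σ‖ ^ 2)
    (φ : ℝ → ℝ)
    (hφ : ∀ t : ℝ, φ t = ∫ σ in (0:ℝ)..t,
      (W / (c * β)) * Real.sqrt (c ^ 2 * β ^ 2 - ‖deriv w σ‖ ^ 2) /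
        (‖w σ‖ ^ 2 - W ^ 2 / (c ^ 2 * β ^ 2))) :
    Real.sqrt ((‖w s‖ ^ 2 - W ^ 2 / (c ^ 2 * β ^ 2)) / (1 - W ^ 2 / (c ^ 2 * β ^ 2))) *
      Real.cos (φ s) < 1 := by
  have hwd : Differentiable ℝ w := hw.differentiable (by norm_num)
  have hdw_cd : ContDiff ℝ 1 (deriv w) := by
    have h2 : ContDiff ℝ ((1 : ℕ) + 1) w := by exact_mod_cast hw
    exact (contDiff_succ_iff_deriv.mp h2).2.2
  have hdwd : Differentiable ℝ (deriv w) := hdw_cd.differentiable one_ne_zero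
  have hw'' : ∀ t, HasDerivAt (deriv w) (β ^ 2 • w t) t := fun t => by
    have := (hdwd t).hasDerivAt
    rwa [hODE t] at this
  set F : ℝ → ℝ := fun t => ‖w t‖ ^ 2 with hFdef
  set P : ℝ → ℝ := fun t => inner ℝ (w t) (deriv w t) with hPdef
  set N : ℝ → ℝ := fun t => ‖deriv w t‖ ^ 2 with hNdef
  have hF : ∀ t, HasDerivAt F (2 * P t) t := fun t => by
    have h := (HasDerivAt.inner ℝ (hwd t).hasDerivAt (hwd t).hasDerivAt)
    have e : (inner ℝ (w t) (deriv w t) : ℝ) + inner ℝ (deriv w t) (w t) = 2 * P t := by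
      rw [real_inner_comm]; simp [hPdef]; linarith [real_inner_comm (w t) (deriv w t)]
    rw [e] at h
    have e2 : F = fun t => (inner ℝ (w t) (w t) : ℝ) := by
      funext t; exact (real_inner_self_eq_norm_sq (w t)).symm
    rw [e2]
    exact h
  have hP : ∀ t, HasDerivAt P (N t + β ^ 2 * F t) t := fun t => by
    have h := (HasDerivAt.inner ℝ (hwd t).hasDerivAt (hw'' t))
    have e : (inner ℝ (w t) (β ^ 2 • w t) : ℝ) + inner ℝ (deriv w t) (deriv w t)
        = N t + β ^ 2 * F t := by
      rw [real_inner_smul_right, real_inner_self_eq_norm_sq, real_inner_self_eq_norm_sq]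
      simp [hFdef, hNdef]; ring
    rw [e] at h
    exact h
  have hN : ∀ t, HasDerivAt N (2 * β ^ 2 * P t) t := fun t => by
    have h := (HasDerivAt.inner ℝ (hdwd t).hasDerivAt (hdwd t).hasDerivAt)
    rw [hODE t] at h
    have e : (inner ℝ (deriv w t) (β ^ 2 • w t) : ℝ) + inner ℝ (β ^ 2 • w t) (deriv w t)
        = 2 * β ^ 2 * P t := by
      rw [real_inner_smul_right, real_inner_smul_left, real_inner_comm]
      simp [hPdef]; ring
    rw [e] at h
    have e2 : N = fun t => (inner ℝ (deriv w t) (deriv w t) : ℝ) := by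
      funext t; exact (real_inner_self_eq_norm_sq (deriv w t)).symm
    rw [e2]
    exact h
  -- conservation law
  have hconsv : ∀ t, N t = β ^ 2 * (F t - 1 + c ^ 2) := by
    have hcst : ∀ x y : ℝ, F x - β⁻¹ ^ 2 * N x = F y - β⁻¹ ^ 2 * N y := by
      apply is_const_of_deriv_eq_zero
      · intro t
        exact ((hF t).sub ((hN t).const_mul _)).differentiableAt
      · intro t
        have h := ((hF t).sub ((hN t).const_mul (β⁻¹ ^ 2))).deriv
        have hb : β⁻¹ ^ 2 * β ^ 2 = 1 := by rw [inv_pow]; exact inv_mul_cancel₀ (by positivity)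
        exact h.trans (by linear_combination (-2 * P t) * hb)
    intro t
    have h0 := hcst t 0
    have hF0 : F 0 = 1 := by simp [hFdef, hw0]
    have : c ^ 2 = β⁻¹ ^ 2 * N 0 := by rw [hc, hw0]; ring
    have hβ2 : β ^ 2 ≠ 0 := by positivity
    have hb : β⁻¹ ^ 2 * β ^ 2 = 1 := by rw [inv_pow]; exact inv_mul_cancel₀ hβ2
    have hN0 : N 0 = c ^ 2 * β ^ 2 := by linear_combination (-β ^ 2) * this + (-N 0) * hb
    field_simp [this] at h0 ⊢
    linear_combination -h0 - β ^ 2 * hF0 + hN0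
  -- component derivatives
  have hcomp : ∀ (i : Fin 2) (t : ℝ), HasDerivAt (fun t => w t i) (deriv w t i) t := by
    intro i t
    exact (EuclideanSpace.proj (𝕜 := ℝ) i).hasFDerivAt.comp_hasDerivAt t (hwd t).hasDerivAt
  have hcomp' : ∀ (i : Fin 2) (t : ℝ),
      HasDerivAt (fun t => deriv w t i) (β ^ 2 * w t i) t := by
    intro i t
    have h := (EuclideanSpace.proj (𝕜 := ℝ) i).hasFDerivAt.comp_hasDerivAt t (hw'' t)
    simp at h; exact h
  -- Wronskian is constant
  set Wr : ℝ → ℝ := fun t => w t 0 * deriv w t 1 - w t 1 * deriv w t 0 with hWrdef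
  have hWr : ∀ t, Wr t = W := by
    intro t
    have hcst : ∀ x y : ℝ, Wr x = Wr y := by
      apply is_const_of_deriv_eq_zero
      · intro t
        exact (((hcomp 0 t).mul (hcomp' 1 t)).sub ((hcomp 1 t).mul (hcomp' 0 t))).differentiableAt
      · intro t
        have h := (((hcomp 0 t).mul (hcomp' 1 t)).sub ((hcomp 1 t).mul (hcomp' 0 t))).deriv
        exact h.trans (by ring)
    rw [hcst t 0, hWrdef, hWdef]
  -- expansions into components
  have hFcomp : ∀ t, F t = w t 0 ^ 2 + w t 1 ^ 2 := by
    intro t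
    rw [show F t = (inner ℝ (w t) (w t) : ℝ) from (real_inner_self_eq_norm_sq (w t)).symm]
    simp [PiLp.inner_apply, Fin.sum_univ_two, RCLike.inner_apply]
    rw [EuclideanSpace.norm_sq_eq, Fin.sum_univ_two, Real.norm_eq_abs, Real.norm_eq_abs, sq_abs, sq_abs]
  have hNcomp : ∀ t, N t = deriv w t 0 ^ 2 + deriv w t 1 ^ 2 := by
    intro t
    rw [show N t = (inner ℝ (deriv w t) (deriv w t) : ℝ) from
      (real_inner_self_eq_norm_sq (deriv w t)).symm]
    simp [PiLp.inner_apply, Fin.sum_univ_two, RCLike.inner_apply]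
    rw [EuclideanSpace.norm_sq_eq, Fin.sum_univ_two, Real.norm_eq_abs, Real.norm_eq_abs, sq_abs, sq_abs]
  have hPcomp : ∀ t, P t = w t 0 * deriv w t 0 + w t 1 * deriv w t 1 := by
    intro t
    rw [hPdef]
    simp [PiLp.inner_apply, Fin.sum_univ_two, RCLike.inner_apply]
    ring
  -- Lagrange identity
  have hLag : ∀ t, P t ^ 2 + W ^ 2 = F t * N t := by
    intro t
    rw [← hWr t, hFcomp, hNcomp, hPcomp, hWrdef]
    ring
  -- basic scalar facts
  have hcb : 0 < c * β := mul_pos hc0 hβ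
  have hc2b2 : 0 < c ^ 2 * β ^ 2 := by positivity
  set q : ℝ := W ^ 2 / (c ^ 2 * β ^ 2) with hqdef
  have hW2 : 0 < W ^ 2 := by
    have := pow_pos (abs_pos.mpr hW) 2
    rwa [sq_abs] at this
  have hqpos : 0 < q := div_pos hW2 hc2b2
  have hFq : ∀ σ ∈ Set.Icc 0 s, q < F σ := by
    intro σ hσ
    have := hwq σ hσ
    rw [hqdef, div_lt_iff₀ hc2b2, mul_comm]
    simpa [hFdef] using this
  have hF0 : F 0 = 1 := by simp [hFdef, hw0]
  have hq1 : q < 1 := by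
    have := hFq 0 ⟨le_refl 0, le_of_lt hs⟩
    rw [hF0] at this; exact this
  have hF1 : ∀ σ ∈ Set.Icc 0 s, F σ ≤ 1 := by
    intro σ hσ
    have h := hw1 σ hσ
    have : ‖w σ‖ ^ 2 ≤ 1 ^ 2 := by
      apply pow_le_pow_left₀ (norm_nonneg _) h
    simpa [hFdef] using this
  have hFpos : ∀ σ ∈ Set.Icc 0 s, 0 < F σ := fun σ hσ => lt_trans hqpos (hFq σ hσ)
  have hNpos : ∀ σ ∈ Set.Icc 0 s, 0 < N σ := by
    intro σ hσ
    have h1 : 0 < F σ * N σ := by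
      rw [← hLag σ]
      nlinarith [sq_nonneg (P σ)]
    nlinarith [h1, hFpos σ hσ]
  have hFs1 : F s ≤ 1 := hF1 s ⟨le_of_lt hs, le_refl s⟩
  have hFsq : q < F s := hFq s ⟨le_of_lt hs, le_refl s⟩
  -- rewrite the goal in terms of F
  have hgoal : Real.sqrt ((‖w s‖ ^ 2 - W ^ 2 / (c ^ 2 * β ^ 2)) / (1 - W ^ 2 / (c ^ 2 * β ^ 2)))
      = Real.sqrt ((F s - q) / (1 - q)) := rfl
  rw [hgoal]
  rcases lt_or_eq_of_le hFs1 with hcase | hcase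
  · -- easy case : F s < 1
    have harg : (F s - q) / (1 - q) < 1 := by
      rw [div_lt_one (by linarith)]
      linarith
    have hsqrt : Real.sqrt ((F s - q) / (1 - q)) < 1 := by
      rw [Real.sqrt_lt' one_pos]
      simpa using harg
    nlinarith [Real.sqrt_nonneg ((F s - q) / (1 - q)), Real.cos_le_one (φ s),
      Real.neg_one_le_cos (φ s)]
  · -- hard case : F s = 1
    rw [hcase]
    have hdd : (1 - q) / (1 - q) = 1 := div_self (by linarith)
    rw [hdd, Real.sqrt_one, one_mul]
    -- need : cos (φ s) < 1
    -- continuity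
    have hFc : Continuous F :=
      Differentiable.continuous (fun t => (hF t).differentiableAt)
    have hPc : Continuous P :=
      Differentiable.continuous (fun t => (hP t).differentiableAt)
    have hNc : Continuous N :=
      Differentiable.continuous (fun t => (hN t).differentiableAt)
    have hNnn : ∀ x, 0 ≤ N x := fun x => by rw [hNdef]; positivity
    -- integrand
    set g : ℝ → ℝ := fun σ =>
      W / (c * β) * Real.sqrt (c ^ 2 * β ^ 2 - N σ) / (F σ - q) with hgdef
    have hφg : ∀ t, φ t = ∫ σ in (0:ℝ)..t, g σ := fun t => hφ t
    have hgc : ContinuousOn g (Set.Icc 0 s) := by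
      apply ContinuousOn.div
      · exact (continuousOn_const.mul
          ((continuous_sqrt.comp (continuous_const.sub hNc)).continuousOn))
      · exact (hFc.sub continuous_const).continuousOn
      · intro x hx
        have := hFq x hx
        intro h0
        rw [sub_eq_zero] at h0
        rw [h0] at this
        exact lt_irrefl _ this
    -- conservation rearranged
    have hymm : ∀ x, c ^ 2 * β ^ 2 - N x = β ^ 2 * (1 - F x) := fun x => by
      rw [hconsv x]; ring
    have hsqrt_eq : ∀ x, Real.sqrt (c ^ 2 * β ^ 2 - N x) = β * Real.sqrt (1 - F x) := by
      intro x
      rw [hymm x, Real.sqrt_mul (sq_nonneg β), Real.sqrt_sq hβ.le]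
    -- strict convexity and interior bound
    have hscx : StrictConvexOn ℝ (Set.Icc 0 s) F := by
      apply strictConvexOn_of_deriv2_pos (convex_Icc 0 s) hFc.continuousOn
      intro x hx
      rw [interior_Icc] at hx
      have hd1 : deriv F = fun t => 2 * P t := funext fun t => (hF t).deriv
      have hd2 : deriv (deriv F) x = 2 * (N x + β ^ 2 * F x) := by
        rw [hd1]
        exact ((hP x).const_mul 2).deriv
      simp only [Function.iterate_succ, Function.iterate_zero, Function.comp_apply, id_eq]
      rw [hd2]
      have h1 := hFpos x ⟨hx.1.le, hx.2.le⟩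
      have h2 := hNnn x
      nlinarith
    have hFlt1 : ∀ x ∈ Set.Ioo 0 s, F x < 1 := by
      intro x hx
      obtain ⟨hx0, hxs⟩ := hx
      have ha : (0:ℝ) < 1 - x / s := by rw [sub_pos, div_lt_one hs]; exact hxs
      have hb : 0 < x / s := div_pos hx0 hs
      have hab : (1 - x / s) + x / s = 1 := by ring
      have hco := hscx.2 (Set.left_mem_Icc.mpr hs.le) (Set.right_mem_Icc.mpr hs.le)
        (ne_of_lt hs) ha hb hab
      have e1 : (1 - x / s) • (0 : ℝ) + (x / s) • s = x := by
        rw [smul_zero, zero_add, smul_eq_mul, div_mul_cancel₀ x hs.ne']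
      rw [e1, hF0, hcase] at hco
      calc F x < (1 - x / s) • (1:ℝ) + (x / s) • (1:ℝ) := hco
        _ = 1 := by simp
    have hy : ∀ x ∈ Set.Ioo 0 s, 0 < Real.sqrt (1 - F x) := fun x hx =>
      Real.sqrt_pos.mpr (by linarith [hFlt1 x hx])
    -- the comparison angle function
    set A : ℝ := Real.sqrt q with hAdef
    have hA0 : 0 < A := Real.sqrt_pos.mpr hqpos
    have hA2 : A ^ 2 = q := Real.sq_sqrt hqpos.le
    set B : ℝ → ℝ := fun x => Real.sqrt (1 - F x) with hBdef
    have hBc : Continuous B := continuous_sqrt.comp (continuous_const.sub hFc)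
    set u : ℝ → ℝ := fun x => -P x with hudef
    set v : ℝ → ℝ := fun x => A * β * B x with hvdef
    set Ψ : ℝ → ℝ := fun x => -Real.arctan (u x / v x) with hΨdef
    set D : ℝ → ℝ := fun x =>
      A * β * (P x ^ 2 + (N x + β ^ 2 * F x) * B x ^ 2) /
        (B x * (P x ^ 2 + A ^ 2 * β ^ 2 * B x ^ 2)) with hDdef
    have hΨd : ∀ x ∈ Set.Ioo 0 s, HasDerivAt Ψ (D x) x := by
      intro x hx
      have hyx : 0 < B x := hy x hx
      have hvx : 0 < v x := by positivity
      have h1F : (1 : ℝ) - F x ≠ 0 := by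
        have := hFlt1 x hx; intro h; rw [sub_eq_zero] at h; exact absurd h.symm (ne_of_lt this)
      have hBd : HasDerivAt B (-(2 * P x) / (2 * B x)) x := by
        have h0 := HasDerivAt.sqrt ((hasDerivAt_const x (1:ℝ)).sub (hF x)) h1F
        rw [zero_sub] at h0; exact h0
      have hvd : HasDerivAt v (A * β * (-(2 * P x) / (2 * B x))) x := hBd.const_mul _
      have hud : HasDerivAt u (-(N x + β ^ 2 * F x)) x := (hP x).neg
      have hqd := hud.div hvd (ne_of_gt hvx)
      have harc := (hqd.arctan).neg
      refine harc.congr_deriv ?_; symm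
      rw [hDdef, hudef, hvdef]
      simp only [Pi.div_apply]
      have hvx' : A * β * B x ≠ 0 := by positivity
      have hP2B : 0 < P x ^ 2 + A ^ 2 * β ^ 2 * B x ^ 2 := by positivity
      field_simp
      ring
    -- |g| in closed form on [0,s]
    have hWabs : |W| = A * (c * β) := by
      rw [show |W| = Real.sqrt (W ^ 2) from (Real.sqrt_sq_eq_abs W).symm]
      have hWq : W ^ 2 = q * (c * β) ^ 2 := by
        rw [hqdef]; field_simp
      rw [hWq, Real.sqrt_mul hqpos.le, Real.sqrt_sq hcb.le, hAdef]
    have hgabs : ∀ x ∈ Set.Icc 0 s, |g x| = A * β * B x / (F x - q) := by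
      intro x hx
      have h1 : 0 < F x - q := sub_pos.mpr (hFq x hx)
      have hBnn : (0:ℝ) ≤ B x := Real.sqrt_nonneg _
      rw [hgdef]
      simp only []
      rw [hsqrt_eq x, abs_div, abs_mul, abs_div, abs_of_pos hcb, abs_of_pos h1,
        abs_of_nonneg (mul_nonneg hβ.le (Real.sqrt_nonneg _)), hWabs]
      rw [hBdef]
      field_simp
    -- pointwise comparison |g| ≤ D on the interior
    have hcomp : ∀ x ∈ Set.Ioo 0 s, |g x| ≤ D x := by
      intro x hx
      have hxI : x ∈ Set.Icc 0 s := ⟨hx.1.le, hx.2.le⟩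
      have hBx : 0 < B x := hy x hx
      have hFqx : 0 < F x - q := sub_pos.mpr (hFq x hxI)
      have hB2 : B x ^ 2 = 1 - F x := Real.sq_sqrt (by linarith [hFlt1 x hx])
      have hP2 : P x ^ 2 = F x * N x - W ^ 2 := by linarith [hLag x]
      have hNx : N x = β ^ 2 * (F x - 1 + c ^ 2) := hconsv x
      have hW2q : W ^ 2 = q * (c ^ 2 * β ^ 2) := by rw [hqdef]; field_simp
      have e1 : P x ^ 2 + A ^ 2 * β ^ 2 * B x ^ 2
          = β ^ 2 * ((F x - q) * (F x - 1 + c ^ 2)) := by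
        rw [hP2, hNx, hA2, hB2, hW2q]; ring
      have e2 : P x ^ 2 + (N x + β ^ 2 * F x) * B x ^ 2
          = β ^ 2 * (c ^ 2 * (1 - q) - (1 - F x) ^ 2) := by
        rw [hP2, hNx, hB2, hW2q]; ring
      have hden : 0 < B x * (P x ^ 2 + A ^ 2 * β ^ 2 * B x ^ 2) := by
        apply mul_pos hBx
        rw [e1]
        have hb2p : (0:ℝ) < β ^ 2 := by positivity
        have hNxpos := hNpos x hxI
        rw [hNx] at hNxpos
        have : 0 < F x - 1 + c ^ 2 := by
          by_contra hcon
          push_neg at hcon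
          nlinarith [hNxpos, hb2p]
        positivity
      rw [hgabs x hxI, hDdef]
      rw [div_le_div_iff₀ hFqx hden]
      have key : B x * (B x * (P x ^ 2 + A ^ 2 * β ^ 2 * B x ^ 2))
          ≤ (P x ^ 2 + (N x + β ^ 2 * F x) * B x ^ 2) * (F x - q) := by
        have hBB : B x * B x = 1 - F x := by rw [← sq]; exact hB2
        rw [e1, e2]
        calc B x * (B x * (β ^ 2 * ((F x - q) * (F x - 1 + c ^ 2))))
            = (B x * B x) * (β ^ 2 * ((F x - q) * (F x - 1 + c ^ 2))) := by ring
          _ = (1 - F x) * (β ^ 2 * ((F x - q) * (F x - 1 + c ^ 2))) := by rw [hBB]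
          _ ≤ β ^ 2 * (c ^ 2 * (1 - q) - (1 - F x) ^ 2) * (F x - q) :=
              aux_ineq (by positivity)
      calc A * β * B x * (B x * (P x ^ 2 + A ^ 2 * β ^ 2 * B x ^ 2))
          = A * β * (B x * (B x * (P x ^ 2 + A ^ 2 * β ^ 2 * B x ^ 2))) := by ring
        _ ≤ A * β * ((P x ^ 2 + (N x + β ^ 2 * F x) * B x ^ 2) * (F x - q)) :=
            mul_le_mul_of_nonneg_left key (by positivity)
        _ = A * β * (P x ^ 2 + (N x + β ^ 2 * F x) * B x ^ 2) * (F x - q) := by ring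
    have hyB : ∀ x ∈ Set.Ioo 0 s, 0 < B x := fun x hx => hy x hx
    clear_value A B u v Ψ D
    -- uniform bound for |g|
    obtain ⟨M, hM⟩ := isCompact_Icc.exists_bound_of_continuousOn hgc
    have hM0 : 0 ≤ M := le_trans (norm_nonneg _) (hM 0 (Set.left_mem_Icc.mpr hs.le))
    have hMabs : ∀ x ∈ Set.Icc 0 s, |g x| ≤ M := fun x hx => by
      have := hM x hx; rwa [Real.norm_eq_abs] at this
    -- integrability on subintervals
    have hint : ∀ a b : ℝ, 0 ≤ a → b ≤ s → a ≤ b → IntervalIntegrable g MeasureTheory.volume a b := by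
      intro a b ha hb hab
      apply ContinuousOn.intervalIntegrable
      apply hgc.mono
      rw [Set.uIcc_of_le hab]
      exact Set.Icc_subset_Icc ha hb
    -- main bound, for every small margin δ
    have hbound : ∀ δ : ℝ, 0 < δ → δ ≤ s / 3 → |φ s| ≤ π + 2 * (M * δ) := by
      intro δ hδ0 hδ3
      have hδs : δ < s - δ := by linarith
      have hsub1 : Set.Icc δ (s - δ) ⊆ Set.Ioo 0 s := fun x hx =>
        ⟨lt_of_lt_of_le hδ0 hx.1, lt_of_le_of_lt hx.2 (by linarith)⟩
      have hsub2 : Set.Icc δ (s - δ) ⊆ Set.Icc 0 s := fun x hx =>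
        ⟨(hsub1 hx).1.le, (hsub1 hx).2.le⟩
      have hI1 := hint 0 δ le_rfl (by linarith) hδ0.le
      have hI2 := hint δ (s - δ) hδ0.le (by linarith) hδs.le
      have hI3 := hint (s - δ) s (by linarith) le_rfl (by linarith)
      have hsplit : (∫ σ in (0:ℝ)..δ, g σ) + (∫ σ in δ..(s - δ), g σ)
          + (∫ σ in (s - δ)..s, g σ) = ∫ σ in (0:ℝ)..s, g σ := by
        rw [intervalIntegral.integral_add_adjacent_intervals hI1 hI2]
        exact intervalIntegral.integral_add_adjacent_intervals
          (hI1.trans hI2) hI3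
      have hb1 : |∫ σ in (0:ℝ)..δ, g σ| ≤ M * δ := by
        have := intervalIntegral.norm_integral_le_of_norm_le_const
          (C := M) (f := g) (a := 0) (b := δ) ?_
        · rwa [Real.norm_eq_abs, show |δ - 0| = δ by rw [sub_zero, abs_of_pos hδ0]] at this
        · intro x hx
          rw [Set.uIoc_of_le hδ0.le] at hx
          rw [Real.norm_eq_abs]
          exact hMabs x ⟨hx.1.le, le_trans hx.2 (by linarith)⟩
      have hb3 : |∫ σ in (s - δ)..s, g σ| ≤ M * δ := by
        have := intervalIntegral.norm_integral_le_of_norm_le_const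
          (C := M) (f := g) (a := s - δ) (b := s) ?_
        · rwa [Real.norm_eq_abs, show |s - (s - δ)| = δ by rw [show s - (s - δ) = δ by ring, abs_of_pos hδ0]] at this
        · intro x hx
          rw [Set.uIoc_of_le (by linarith : s - δ ≤ s)] at hx
          rw [Real.norm_eq_abs]
          exact hMabs x ⟨by linarith [hx.1], hx.2⟩
      -- middle piece
      have hintAbs : IntervalIntegrable (fun x => |g x|) MeasureTheory.volume δ (s - δ) := by
        apply ContinuousOn.intervalIntegrable
        apply ContinuousOn.abs
        apply hgc.mono
        rw [Set.uIcc_of_le hδs.le]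
        exact hsub2
      have hDc : ContinuousOn D (Set.Icc δ (s - δ)) := by
        rw [hDdef]
        apply ContinuousOn.div
        · exact (continuous_const.mul ((hPc.pow 2).add
            ((hNc.add (continuous_const.mul hFc)).mul (hBc.pow 2)))).continuousOn
        · exact (hBc.mul ((hPc.pow 2).add (continuous_const.mul (hBc.pow 2)))).continuousOn
        · intro x hx
          have hBx : 0 < B x := hyB x (hsub1 hx)
          have : 0 < B x * (P x ^ 2 + A ^ 2 * β ^ 2 * B x ^ 2) := by positivity
          exact ne_of_gt this
      have hintD : IntervalIntegrable D MeasureTheory.volume δ (s - δ) := by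
        apply ContinuousOn.intervalIntegrable
        rwa [Set.uIcc_of_le hδs.le]
      have hb2 : |∫ σ in δ..(s - δ), g σ| ≤ π := by
        calc |∫ σ in δ..(s - δ), g σ| ≤ ∫ σ in δ..(s - δ), |g σ| :=
              intervalIntegral.abs_integral_le_integral_abs hδs.le
          _ ≤ ∫ σ in δ..(s - δ), D σ := by
              apply intervalIntegral.integral_mono_on hδs.le hintAbs hintD
              intro x hx
              exact hcomp x (hsub1 hx)
          _ = Ψ (s - δ) - Ψ δ := by
              apply intervalIntegral.integral_eq_sub_of_hasDerivAt
              · intro x hx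
                rw [Set.uIcc_of_le hδs.le] at hx
                exact hΨd x (hsub1 hx)
              · exact hintD
          _ ≤ π := by
              have h1 : Ψ (s - δ) < π / 2 := by
                rw [hΨdef]
                have := Real.neg_pi_div_two_lt_arctan (u (s - δ) / v (s - δ))
                simp only []
                linarith
              have h2 : -(π / 2) < Ψ δ := by
                rw [hΨdef]
                have := Real.arctan_lt_pi_div_two (u δ / v δ)
                simp only []
                linarith
              linarith
      have : φ s = (∫ σ in (0:ℝ)..δ, g σ) + (∫ σ in δ..(s - δ), g σ)
          + (∫ σ in (s - δ)..s, g σ) := by rw [hφg s, ← hsplit]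
      rw [this]
      calc |(∫ σ in (0:ℝ)..δ, g σ) + (∫ σ in δ..(s - δ), g σ) + (∫ σ in (s - δ)..s, g σ)|
          ≤ |(∫ σ in (0:ℝ)..δ, g σ) + (∫ σ in δ..(s - δ), g σ)| + |∫ σ in (s - δ)..s, g σ| :=
            abs_add_le _ _
        _ ≤ |∫ σ in (0:ℝ)..δ, g σ| + |∫ σ in δ..(s - δ), g σ| + |∫ σ in (s - δ)..s, g σ| := by
            linarith [abs_add_le (∫ σ in (0:ℝ)..δ, g σ) (∫ σ in δ..(s - δ), g σ)]
        _ ≤ M * δ + π + M * δ := by linarith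
        _ = π + 2 * (M * δ) := by ring
    have habs_le : |φ s| ≤ π := by
      apply le_of_forall_pos_le_add
      intro ε hε
      have hM1 : (0:ℝ) < 2 * M + 1 := by linarith
      set δ := min (s / 3) (ε / (2 * M + 1)) with hδdef
      have hδ0 : 0 < δ := lt_min (by linarith) (div_pos hε hM1)
      have hδ3 : δ ≤ s / 3 := min_le_left _ _
      have hδε : δ ≤ ε / (2 * M + 1) := min_le_right _ _
      have := hbound δ hδ0 hδ3
      have h2Mδ : 2 * (M * δ) ≤ ε := by
        have h1 : 2 * M * δ ≤ 2 * M * (ε / (2 * M + 1)) := by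
          apply mul_le_mul_of_nonneg_left hδε (by linarith)
        have h2 : 2 * M * (ε / (2 * M + 1)) ≤ ε := by
          rw [← mul_div_assoc, div_le_iff₀ hM1]
          nlinarith [hε.le, hM0]
        linarith
      linarith
    -- positivity of |φ s|
    have habs_pos : 0 < |φ s| := by
      have hintg := hint 0 s le_rfl le_rfl hs.le
      rcases lt_or_gt_of_ne hW with hWneg | hWpos
      · have hneg' : ∀ x ∈ Set.Ioo 0 s, 0 < -g x := by
          intro x hx
          have hFqx : 0 < F x - q := sub_pos.mpr (hFq x ⟨hx.1.le, hx.2.le⟩)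
          have hgx : g x < 0 := by
            rw [hgdef]
            simp only []
            rw [hsqrt_eq x]
            apply div_neg_of_neg_of_pos _ hFqx
            apply mul_neg_of_neg_of_pos
            · exact div_neg_of_neg_of_pos hWneg hcb
            · exact mul_pos hβ (hy x hx)
          linarith
        have hIneg : IntervalIntegrable (fun x => -g x) MeasureTheory.volume 0 s :=
          hintg.neg
        have h := intervalIntegral.intervalIntegral_pos_of_pos_on hIneg
          (fun x hx => hneg' x hx) hs
        have heq : (∫ x in (0:ℝ)..s, -g x) = -∫ x in (0:ℝ)..s, g x :=
          intervalIntegral.integral_neg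
        rw [heq] at h
        have hφneg : φ s < 0 := by rw [hφg s]; linarith
        rw [abs_of_neg hφneg]
        linarith
      · have hpos' : ∀ x ∈ Set.Ioo 0 s, 0 < g x := by
          intro x hx
          have hFqx : 0 < F x - q := sub_pos.mpr (hFq x ⟨hx.1.le, hx.2.le⟩)
          rw [hgdef]
          apply div_pos
          apply mul_pos
          · exact div_pos hWpos hcb
          · rw [hsqrt_eq x]; exact mul_pos hβ (hy x hx)
          · exact hFqx
        have := intervalIntegral.intervalIntegral_pos_of_pos_on hintg hpos' hs
        rw [← hφg s] at this
        rw [abs_of_pos this]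
        exact this
    -- conclude
    calc Real.cos (φ s) = Real.cos |φ s| := (Real.cos_abs (φ s)).symm
      _ < Real.cos 0 := Real.strictAntiOn_cos ⟨le_rfl, Real.pi_nonneg⟩
            ⟨abs_nonneg _, habs_le⟩ habs_pos
      _ = 1 := Real.cos_zero
end
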